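/- arXiv:1901.01607 — 6 statements merged into one kernel-verified Lean document; each statement's English description precedes it below -/
import Mathlib

section
/- Let f : ℝ → ℝ be a C^1 circle lift. Then liminf_{n→∞} (1/n) · sup_{x ∈ [0,1]} |log(deriv (f^[n]) x)| > 0 if and only if f has a hyperbolic periodic point, i.e. there exist x ∈ ℝ, an integer q ≥ 1 and an integer p such that f^[q] x = x + p and deriv (f^[q]) x ≠ 1. -/
open Filter Finset Topology

namespace C1Circle

variable {f d : ℝ → ℝ}

lemma lift_int (hlift : ∀ x : ℝ, f (x + 1) = f x + 1) (x : ℝ) (n : ℤ) :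
    f (x + n) = f x + n := by
  induction n using Int.induction_on with
  | zero => simp
  | succ k ih => push_cast at ih ⊢; rw [show x + (k+1) = (x + k) + 1 by ring, hlift, ih]; ring
  | pred k ih =>
      push_cast at ih ⊢
      have := hlift (x - (k+1))
      rw [show x - (k+1) + 1 = x + -(k:ℝ) by ring] at this
      rw [show x + (-(k:ℝ) - 1) = x - (k+1) by ring]
      rw [ih] at this
      linarith

lemma iter_lift_int (hlift : ∀ x : ℝ, f (x + 1) = f x + 1) (k : ℕ) (x : ℝ) (n : ℤ) :
    f^[k] (x + n) = f^[k] x + n := by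
  induction k generalizing x with
  | zero => simp
  | succ k ih =>
      rw [Function.iterate_succ_apply, Function.iterate_succ_apply,
        lift_int hlift, ih]

lemma d_per (hder : ∀ x, HasDerivAt f (d x) x) (hlift : ∀ x : ℝ, f (x + 1) = f x + 1)
    (x : ℝ) : d (x + 1) = d x := by
  have h1 : HasDerivAt (fun y => f (y + 1)) (d (x + 1) * 1) x :=
    (hder (x + 1)).comp x ((hasDerivAt_id x).add_const 1)
  have h2 : HasDerivAt (fun y => f (y + 1)) (d x) x := by
    have : (fun y => f (y + 1)) = fun y => f y + 1 := funext fun y => hlift y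
    rw [this]; exact (hder x).add_const 1
  have := h1.unique h2
  linarith [this]

lemma d_int (hder : ∀ x, HasDerivAt f (d x) x) (hlift : ∀ x : ℝ, f (x + 1) = f x + 1)
    (x : ℝ) (n : ℤ) : d (x + n) = d x := by
  induction n using Int.induction_on with
  | zero => simp
  | succ k ih =>
      push_cast at ih ⊢
      rw [show x + (k+1) = (x + k) + 1 by ring, d_per hder hlift, ih]
  | pred k ih =>
      push_cast at ih ⊢
      have := d_per hder hlift (x + (-(k:ℝ) - 1))
      rw [show x + (-(k:ℝ) - 1) + 1 = x + -(k:ℝ) by ring] at this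
      rw [← this, ih]

lemma hasDerivAt_iter (hder : ∀ x, HasDerivAt f (d x) x) (k : ℕ) (x : ℝ) :
    HasDerivAt (f^[k]) (∏ i ∈ range k, d (f^[i] x)) x := by
  induction k generalizing x with
  | zero => simpa using hasDerivAt_id x
  | succ k ih =>
      have h : HasDerivAt (f^[k] ∘ f) ((∏ i ∈ range k, d (f^[i] (f x))) * d x) x :=
        (ih (f x)).comp x (hder x)
      have he : f^[k] ∘ f = f^[k+1] := (Function.iterate_succ f k).symm
      rw [he] at h
      have hp : (∏ i ∈ range (k+1), d (f^[i] x))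
          = (∏ i ∈ range k, d (f^[i] (f x))) * d x := by
        rw [Finset.prod_range_succ']
        simp only [Function.iterate_zero, id_eq]
        exact congrArg (· * d x) (Finset.prod_congr rfl fun i _ => by
          rw [Function.iterate_succ_apply])
      rw [hp]
      exact h

/-- Birkhoff sum of log d along the orbit. -/
noncomputable def birk (f d : ℝ → ℝ) (k : ℕ) (x : ℝ) : ℝ :=
  ∑ i ∈ range k, Real.log (d (f^[i] x))

lemma prod_eq_exp_birk (hpos : ∀ x, 0 < d x) (k : ℕ) (x : ℝ) :
    ∏ i ∈ range k, d (f^[i] x) = Real.exp (birk f d k x) := by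
  rw [birk, Real.exp_sum]
  exact Finset.prod_congr rfl fun i _ => (Real.exp_log (hpos _)).symm

lemma deriv_iter (hder : ∀ x, HasDerivAt f (d x) x) (hpos : ∀ x, 0 < d x) (k : ℕ) (x : ℝ) :
    deriv (f^[k]) x = Real.exp (birk f d k x) := by
  rw [(hasDerivAt_iter hder k x).deriv, prod_eq_exp_birk hpos]

lemma log_deriv_iter (hder : ∀ x, HasDerivAt f (d x) x) (hpos : ∀ x, 0 < d x) (k : ℕ) (x : ℝ) :
    Real.log (deriv (f^[k]) x) = birk f d k x := by
  rw [deriv_iter hder hpos, Real.log_exp]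

lemma birk_cocycle (j k : ℕ) (x : ℝ) :
    birk f d (j + k) x = birk f d j x + birk f d k (f^[j] x) := by
  rw [birk, Finset.sum_range_add]
  congr 1
  exact Finset.sum_congr rfl fun i _ => by
    rw [add_comm j i, Function.iterate_add_apply]

lemma birk_per (hder : ∀ x, HasDerivAt f (d x) x) (hlift : ∀ x : ℝ, f (x + 1) = f x + 1)
    (k : ℕ) (x : ℝ) (n : ℤ) : birk f d k (x + n) = birk f d k x := by
  unfold birk
  exact Finset.sum_congr rfl fun i _ => by
    rw [iter_lift_int hlift, d_int hder hlift]

lemma cont_of_hasDerivAt (hder : ∀ x, HasDerivAt f (d x) x) : Continuous f :=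
  continuous_iff_continuousAt.2 fun x => (hder x).continuousAt

lemma birk_continuous (hd : Continuous d) (hder : ∀ x, HasDerivAt f (d x) x)
    (hpos : ∀ x, 0 < d x) (k : ℕ) : Continuous (birk f d k) := by
  have hfc : Continuous f := cont_of_hasDerivAt hder
  unfold birk
  exact continuous_finset_sum _ fun i _ =>
    ((hd.comp (hfc.iterate i)).log (fun x => (hpos _).ne'))

lemma exists_phi_bound (hd : Continuous d) (hder : ∀ x, HasDerivAt f (d x) x)
    (hpos' : ∀ x, d x ≠ 0)
    (hlift : ∀ x : ℝ, f (x + 1) = f x + 1) :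
    ∃ A : ℝ, 0 < A ∧ ∀ x : ℝ, |Real.log (d x)| ≤ A := by
  have hcont : Continuous fun x => |Real.log (d x)| :=
    (hd.log fun x => (hpos' x)).abs
  obtain ⟨x₀, _, hmax'⟩ := isCompact_Icc.exists_isMaxOn
    (Set.nonempty_Icc.2 (zero_le_one' ℝ)) hcont.continuousOn
  have hmax := isMaxOn_iff.1 hmax'
  refine ⟨|Real.log (d x₀)| + 1, by positivity, fun x => ?_⟩
  have hfr : d x = d (Int.fract x) := by
    conv_lhs => rw [← Int.fract_add_floor x]
    exact d_int hder hlift _ _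
  rw [hfr]
  have h1 : Int.fract x ∈ Set.Icc (0:ℝ) 1 :=
    ⟨Int.fract_nonneg x, (Int.fract_lt_one x).le⟩
  linarith [hmax _ h1]

lemma phi_ucont (hd : Continuous d) (hder : ∀ x, HasDerivAt f (d x) x)
    (hpos : ∀ x, 0 < d x) (hlift : ∀ x : ℝ, f (x + 1) = f x + 1)
    {ε : ℝ} (hε : 0 < ε) :
    ∃ δ : ℝ, 0 < δ ∧ δ ≤ 1 ∧ ∀ u v : ℝ, |u - v| ≤ δ →
      |Real.log (d u) - Real.log (d v)| ≤ ε := by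
  set φ : ℝ → ℝ := fun x => Real.log (d x) with hφdef
  have hφ : Continuous φ := hd.log fun x => (hpos x).ne'
  have huc : UniformContinuousOn φ (Set.Icc (-1 : ℝ) 2) :=
    isCompact_Icc.uniformContinuousOn_of_continuous hφ.continuousOn
  rw [Metric.uniformContinuousOn_iff] at huc
  obtain ⟨δ₀, hδ₀, hδ⟩ := huc ε hε
  refine ⟨min (δ₀ / 2) 1, by positivity, min_le_right _ _, fun u v huv => ?_⟩
  set n : ℤ := ⌊v⌋
  have hfr : Int.fract v = v - n := rfl
  have hf0 : (0:ℝ) ≤ v - n := hfr ▸ Int.fract_nonneg v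
  have hf1 : v - (n:ℝ) < 1 := hfr ▸ Int.fract_lt_one v
  have hvn : v - n ∈ Set.Icc (-1 : ℝ) 2 := ⟨by linarith, by linarith⟩
  have habs : |u - v| ≤ 1 := le_trans huv (min_le_right _ _)
  have habs' := abs_le.1 habs
  have hun : u - n ∈ Set.Icc (-1 : ℝ) 2 :=
    ⟨by linarith [habs'.1], by linarith [habs'.2]⟩
  have hd1 : dist (u - (n:ℝ)) (v - n) < δ₀ := by
    rw [Real.dist_eq]
    have : u - n - (v - n) = u - v := by ring
    rw [this]
    calc |u - v| ≤ min (δ₀ / 2) 1 := huv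
      _ ≤ δ₀ / 2 := min_le_left _ _
      _ < δ₀ := by linarith
  have := hδ _ hun _ hvn hd1
  rw [Real.dist_eq] at this
  have hu' : φ (u - n) = φ u := by
    simp only [hφdef]
    congr 1
    have : u = (u - n) + n := by ring
    conv_rhs => rw [this]
    exact (d_int hder hlift _ _).symm
  have hv' : φ (v - n) = φ v := by
    simp only [hφdef]
    congr 1
    have : v = (v - n) + n := by ring
    conv_rhs => rw [this]
    exact (d_int hder hlift _ _).symm
  rw [hu', hv'] at this
  exact this.le

lemma record_block (a : ℕ → ℝ) (c A : ℝ) (hA : 0 < A) (hc : 0 < c) (ha : ∀ i, |a i| ≤ A)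
    (m : ℕ) (hsum : ∑ i ∈ range m, a i ≤ -((m : ℝ) * c)) :
    ∃ j ≤ m, (m : ℝ) * c / (2 * A) ≤ ((m : ℝ) - j) ∧
      ∀ k, j + k ≤ m → ∑ i ∈ range k, a (j + i) ≤ -((k : ℝ) * (c / 2)) := by
  set t : ℕ → ℝ := fun j => (∑ i ∈ range j, a i) + j * (c / 2) with ht
  obtain ⟨j, hjmem, hjmax⟩ := Finset.exists_max_image (range (m + 1)) t ⟨0, by simp⟩
  have hjm : j ≤ m := by
    have := Finset.mem_range.1 hjmem
    omega
  refine ⟨j, hjm, ?_, ?_⟩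
  · have h0' : (0:ℝ) ≤ ∑ i ∈ range j, a i + j * (c / 2) := by
      have := hjmax 0 (by simp)
      simpa [ht] using this
    have hsplit : ∑ i ∈ range m, a i
        = ∑ i ∈ range j, a i + ∑ i ∈ range (m - j), a (j + i) := by
      have hjm' : j + (m - j) = m := by omega
      rw [← Finset.sum_range_add, hjm']
    have hlow : -(((m - j : ℕ) : ℝ) * A) ≤ ∑ i ∈ range (m - j), a (j + i) := by
      have := Finset.card_nsmul_le_sum (range (m - j)) (fun i => a (j + i)) (-A)
        (fun i _ => neg_le_of_abs_le (ha _))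
      simpa [nsmul_eq_mul, mul_comm] using this
    have hcast : ((m - j : ℕ) : ℝ) = (m : ℝ) - j := by
      push_cast [Nat.cast_sub hjm]; ring
    rw [hcast] at hlow
    have hjle : (j:ℝ) ≤ (m:ℝ) := by exact_mod_cast hjm
    have hmj0 : (0:ℝ) ≤ (m:ℝ) - j := by linarith
    have hAj : (m : ℝ) * (c / 2) ≤ ((m:ℝ) - j) * A := by
      linarith [h0', hsplit, hsum, hlow, mul_nonneg hmj0 hc.le]
    rw [div_le_iff₀ (by positivity : (0:ℝ) < 2 * A)]
    nlinarith
  · intro k hk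
    have hmem : j + k ∈ range (m + 1) := by
      simp only [Finset.mem_range]; omega
    have h1 : t (j + k) ≤ t j := hjmax _ hmem
    have hsplit : ∑ i ∈ range (j + k), a i
        = ∑ i ∈ range j, a i + ∑ i ∈ range k, a (j + i) := Finset.sum_range_add a j k
    simp only [ht] at h1
    rw [hsplit] at h1
    push_cast at h1
    linarith

lemma future_max (t : ℕ → ℝ) (h : Tendsto t atTop atBot) (N : ℕ) :
    ∃ j, N ≤ j ∧ ∀ i, j ≤ i → t i ≤ t j := by
  have hev : ∀ᶠ i in atTop, t i ≤ t N - 1 := h.eventually (eventually_le_atBot (t N - 1))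
  obtain ⟨M, hM⟩ := eventually_atTop.1 hev
  set M' := max M N
  obtain ⟨j, hjmem, hjmax⟩ := Finset.exists_max_image (Finset.Icc N M') t
    ⟨N, by simp [M', le_max_right]⟩
  rw [Finset.mem_Icc] at hjmem
  refine ⟨j, hjmem.1, fun i hi => ?_⟩
  by_cases hiM : i ≤ M'
  · exact hjmax i (Finset.mem_Icc.2 ⟨le_trans hjmem.1 hi, hiM⟩)
  · have h1 : t i ≤ t N - 1 := hM i (by omega)
    have h2 : t N ≤ t j := hjmax N (Finset.mem_Icc.2 ⟨le_refl N, le_max_right M N⟩)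
    linarith

lemma contract_main (hd : Continuous d) (hpos : ∀ x, 0 < d x)
    (hder : ∀ x, HasDerivAt f (d x) x)
    {c δ : ℝ} (hc : 0 < c) (hδ : 0 < δ)
    (huc : ∀ u v : ℝ, |u - v| ≤ δ → |Real.log (d u) - Real.log (d v)| ≤ c / 16)
    (y : ℝ) (hy : ∀ k : ℕ, birk f d k y ≤ -((k : ℝ) * (c / 4))) :
    ∀ k : ℕ, (∀ w ∈ Set.Icc (y - δ) (y + δ), birk f d k w ≤ -((k : ℝ) * (c / 8)))
      ∧ (∀ w ∈ Set.Icc (y - δ) (y + δ),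
          |f^[k] w - f^[k] y| ≤ δ * Real.exp (-((k : ℝ) * (c / 8)))) := by
  intro k
  induction k using Nat.strong_induction_on with
  | _ k IH =>
  have part1 : ∀ w ∈ Set.Icc (y - δ) (y + δ), birk f d k w ≤ -((k : ℝ) * (c / 8)) := by
    intro w hw
    have hterm : ∀ i ∈ range k,
        Real.log (d (f^[i] w)) ≤ Real.log (d (f^[i] y)) + c / 16 := by
      intro i hi
      have hi' : i < k := Finset.mem_range.1 hi
      have h2 := (IH i hi').2 w hw
      have hexp1 : Real.exp (-((i : ℝ) * (c / 8))) ≤ 1 := by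
        rw [Real.exp_le_one_iff]
        have : (0:ℝ) ≤ (i : ℝ) * (c / 8) := by positivity
        linarith
      have hd' : |f^[i] w - f^[i] y| ≤ δ :=
        le_trans h2 (by nlinarith)
      have := abs_le.1 (huc _ _ hd')
      linarith [this.1, this.2]
    have hsum : birk f d k w ≤ birk f d k y + (k : ℝ) * (c / 16) := by
      unfold birk
      calc ∑ i ∈ range k, Real.log (d (f^[i] w))
          ≤ ∑ i ∈ range k, (Real.log (d (f^[i] y)) + c / 16) := Finset.sum_le_sum hterm
        _ = (∑ i ∈ range k, Real.log (d (f^[i] y))) + (k : ℝ) * (c / 16) := by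
            rw [Finset.sum_add_distrib, Finset.sum_const, Finset.card_range,
              nsmul_eq_mul]
    have hkc : (0:ℝ) ≤ (k : ℝ) * c := by positivity
    have := hy k
    linarith
  refine ⟨part1, ?_⟩
  intro w hw
  have hssub : Set.Ioo (min w y) (max w y) ⊆ Set.Icc (y - δ) (y + δ) := by
    intro ξ hξ
    rcases hw with ⟨hw1, hw2⟩
    constructor
    · rcases le_total w y with h | h
      · have : min w y = w := min_eq_left h
        rw [this] at hξ; linarith [hξ.1]
      · have : min w y = y := min_eq_right h
        rw [this] at hξ; linarith [hξ.1]
    · rcases le_total w y with h | h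
      · have : max w y = y := max_eq_right h
        rw [this] at hξ; linarith [hξ.2]
      · have : max w y = w := max_eq_left h
        rw [this] at hξ; linarith [hξ.2]
  have hcont : Continuous (f^[k]) := (cont_of_hasDerivAt hder).iterate k
  have hderiv : ∀ ξ ∈ Set.Ioo (min w y) (max w y),
      HasDerivAt (f^[k]) (Real.exp (birk f d k ξ)) ξ := by
    intro ξ _
    have := hasDerivAt_iter hder k ξ
    rwa [prod_eq_exp_birk hpos] at this
  rcases lt_trichotomy w y with h | h | h
  · obtain ⟨ξ, hξmem, hξ⟩ := exists_hasDerivAt_eq_slope (f^[k])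
      (fun x => Real.exp (birk f d k x)) h
      hcont.continuousOn
      (fun ξ hξ => hderiv ξ (by
        rwa [min_eq_left h.le, max_eq_right h.le]))
    have hξW : ξ ∈ Set.Icc (y - δ) (y + δ) := hssub (by
      rwa [min_eq_left h.le, max_eq_right h.le])
    have hb := part1 ξ hξW
    have hwy : |w - y| ≤ δ := by
      rw [abs_le]; constructor <;> [linarith [hw.1]; linarith [hw.2]]
    have heq : f^[k] y - f^[k] w = Real.exp (birk f d k ξ) * (y - w) := by
      rw [eq_div_iff (sub_ne_zero.2 h.ne' : y - w ≠ 0)] at hξ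
      linarith [hξ]
    have habs : |f^[k] w - f^[k] y| = Real.exp (birk f d k ξ) * (y - w) := by
      rw [abs_sub_comm, heq, abs_of_nonneg]
      exact mul_nonneg (Real.exp_nonneg _) (by linarith)
    rw [habs]
    have h1 : Real.exp (birk f d k ξ) ≤ Real.exp (-((k : ℝ) * (c / 8))) :=
      Real.exp_le_exp.2 hb
    have h2 : y - w ≤ δ := by linarith [hw.1]
    have h3 : (0:ℝ) ≤ y - w := by linarith
    calc Real.exp (birk f d k ξ) * (y - w)
        ≤ Real.exp (-((k : ℝ) * (c / 8))) * δ := by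
          exact mul_le_mul h1 h2 h3 (Real.exp_nonneg _)
      _ = δ * Real.exp (-((k : ℝ) * (c / 8))) := mul_comm _ _
  · rw [h]
    simp only [sub_self, abs_zero]
    positivity
  · obtain ⟨ξ, hξmem, hξ⟩ := exists_hasDerivAt_eq_slope (f^[k])
      (fun x => Real.exp (birk f d k x)) h
      hcont.continuousOn
      (fun ξ hξ => hderiv ξ (by
        rwa [min_eq_right h.le, max_eq_left h.le]))
    have hξW : ξ ∈ Set.Icc (y - δ) (y + δ) := hssub (by
      rwa [min_eq_right h.le, max_eq_left h.le])
    have hb := part1 ξ hξW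
    have heq : f^[k] w - f^[k] y = Real.exp (birk f d k ξ) * (w - y) := by
      rw [eq_div_iff (sub_ne_zero.2 h.ne' : w - y ≠ 0)] at hξ
      linarith [hξ]
    have habs : |f^[k] w - f^[k] y| = Real.exp (birk f d k ξ) * (w - y) := by
      rw [heq, abs_of_nonneg]
      exact mul_nonneg (Real.exp_nonneg _) (by linarith)
    rw [habs]
    have h1 : Real.exp (birk f d k ξ) ≤ Real.exp (-((k : ℝ) * (c / 8))) :=
      Real.exp_le_exp.2 hb
    have h2 : w - y ≤ δ := by linarith [hw.2]
    have h3 : (0:ℝ) ≤ w - y := by linarith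
    calc Real.exp (birk f d k ξ) * (w - y)
        ≤ Real.exp (-((k : ℝ) * (c / 8))) * δ := mul_le_mul h1 h2 h3 (Real.exp_nonneg _)
      _ = δ * Real.exp (-((k : ℝ) * (c / 8))) := mul_comm _ _

/-- If the Birkhoff sums of `log d` are frequently very negative somewhere,
then there is a periodic point with derivative `< 1`. -/
lemma key_contraction (hd : Continuous d) (hpos : ∀ x, 0 < d x)
    (hder : ∀ x, HasDerivAt f (d x) x)
    (hlift : ∀ x : ℝ, f (x + 1) = f x + 1)
    {c : ℝ} (hc : 0 < c)
    (hfreq : ∀ N : ℕ, ∃ m, N ≤ m ∧ ∃ x : ℝ, birk f d m x ≤ -((m : ℝ) * c)) :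
    ∃ (x : ℝ) (q : ℕ) (p : ℤ), 1 ≤ q ∧ f^[q] x = x + p ∧ deriv (f^[q]) x < 1 := by
  obtain ⟨A, hA, hAb⟩ := exists_phi_bound hd hder (fun x => (hpos x).ne') hlift
  -- extract sequences
  have hfreq' : ∀ N : ℕ, ∃ m, N ≤ m ∧ ∃ x : ℝ, birk f d m x ≤ -((m : ℝ) * c) := hfreq
  choose mseq hm xseq hx using hfreq'
  -- apply the in-block record lemma
  have hrec : ∀ N : ℕ, ∃ j ≤ mseq N,
      (mseq N : ℝ) * c / (2 * A) ≤ ((mseq N : ℝ) - j) ∧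
      ∀ k, j + k ≤ mseq N →
        ∑ i ∈ range k, Real.log (d (f^[j + i] (xseq N))) ≤ -((k : ℝ) * (c / 2)) := by
    intro N
    exact record_block (fun i => Real.log (d (f^[i] (xseq N)))) c A hA hc
      (fun i => hAb _) (mseq N) (hx N)
  choose jseq hj hdens hwin using hrec
  -- the good starting points, normalized to [0,1]
  set yseq : ℕ → ℝ := fun N => Int.fract (f^[jseq N] (xseq N)) with hyseq
  have hymem : ∀ N, yseq N ∈ Set.Icc (0:ℝ) 1 := fun N =>
    ⟨Int.fract_nonneg _, (Int.fract_lt_one _).le⟩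
  have hybirk : ∀ N k, jseq N + k ≤ mseq N → birk f d k (yseq N) ≤ -((k : ℝ) * (c / 2)) := by
    intro N k hk
    have h1 : birk f d k (f^[jseq N] (xseq N)) ≤ -((k : ℝ) * (c / 2)) := by
      have := hwin N k hk
      unfold birk
      calc ∑ i ∈ range k, Real.log (d (f^[i] (f^[jseq N] (xseq N))))
          = ∑ i ∈ range k, Real.log (d (f^[jseq N + i] (xseq N))) := by
            refine Finset.sum_congr rfl fun i _ => ?_
            rw [add_comm (jseq N) i, Function.iterate_add_apply]
        _ ≤ -((k : ℝ) * (c / 2)) := this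
    have h2 : birk f d k (yseq N) = birk f d k (f^[jseq N] (xseq N)) := by
      have : yseq N = f^[jseq N] (xseq N) + (-⌊f^[jseq N] (xseq N)⌋ : ℤ) := by
        simp only [hyseq]
        push_cast
        rw [Int.fract]
        ring
      rw [this, birk_per hder hlift]
    rw [h2]; exact h1
  -- Bolzano–Weierstrass
  obtain ⟨z, hzmem, ψ, hψ, hψtend⟩ := isCompact_Icc.tendsto_subseq hymem
  -- the limit point has all Birkhoff sums very negative
  have hzbirk : ∀ k : ℕ, birk f d k z ≤ -((k : ℝ) * (c / 2)) := by
    intro k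
    have hev : ∀ᶠ n in atTop, birk f d k (yseq (ψ n)) ≤ -((k : ℝ) * (c / 2)) := by
      obtain ⟨n₀, hn₀⟩ := exists_nat_ge ((k : ℝ) * (2 * A) / c)
      rw [eventually_atTop]
      refine ⟨n₀, fun n hn => ?_⟩
      refine hybirk _ k ?_
      have hd1 : (mseq (ψ n) : ℝ) * c / (2 * A) ≤ (mseq (ψ n) : ℝ) - jseq (ψ n) :=
        hdens _
      have hge : (n₀ : ℝ) ≤ mseq (ψ n) := by
        have h1 : n₀ ≤ ψ n := le_trans hn (hψ.le_apply)
        have h2 : ψ n ≤ mseq (ψ n) := hm _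
        exact_mod_cast le_trans h1 h2
      have hk : (k : ℝ) ≤ (mseq (ψ n) : ℝ) * c / (2 * A) := by
        rw [le_div_iff₀ (by positivity : (0:ℝ) < 2 * A)]
        have h3 : (k : ℝ) * (2 * A) / c ≤ (mseq (ψ n) : ℝ) := le_trans hn₀ hge
        rw [div_le_iff₀ hc] at h3
        linarith
      have : (jseq (ψ n) : ℝ) + k ≤ mseq (ψ n) := by linarith
      exact_mod_cast this
    have htend : Tendsto (fun n => birk f d k (yseq (ψ n))) atTop (𝓝 (birk f d k z)) :=
      ((birk_continuous hd hder hpos k).continuousAt.tendsto).comp hψtend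
    exact le_of_tendsto htend hev
  -- uniform continuity scale
  obtain ⟨δ, hδpos, hδ1, hδuc⟩ := phi_ucont hd hder hpos hlift
    (show (0:ℝ) < c / 16 by positivity)
  -- records along the orbit of z
  set t' : ℕ → ℝ := fun j => birk f d j z + (j : ℝ) * (c / 4) with ht'
  have ht'bound : ∀ j, t' j ≤ -((j : ℝ) * (c / 4)) := by
    intro j
    have := hzbirk j
    simp only [ht']
    linarith
  have ht'tend : Tendsto t' atTop atBot := by
    apply tendsto_atBot_mono ht'bound
    have h1 : Tendsto (fun j : ℕ => (j : ℝ) * (c / 4)) atTop atTop :=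
      tendsto_natCast_atTop_atTop.atTop_mul_const (by positivity)
    exact tendsto_neg_atTop_atBot.comp h1
  -- records give uniformly contracted orbit points
  have hrecord : ∀ N : ℕ, ∃ j, N ≤ j ∧ ∀ k : ℕ, birk f d k (f^[j] z) ≤ -((k : ℝ) * (c / 4)) := by
    intro N
    obtain ⟨j, hjN, hjrec⟩ := future_max t' ht'tend N
    refine ⟨j, hjN, fun k => ?_⟩
    have h1 : t' (j + k) ≤ t' j := hjrec (j + k) (Nat.le_add_right _ _)
    have h2 : birk f d (j + k) z = birk f d j z + birk f d k (f^[j] z) :=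
      birk_cocycle j k z
    simp only [ht'] at h1
    push_cast at h1
    linarith
  -- strictly monotone sequence of records
  choose F hF1 hF2 using hrecord
  set e : ℕ → ℕ := fun n => Nat.rec (F 0) (fun _ prev => F (prev + 1)) n with he
  have he0 : e 0 = F 0 := rfl
  have hesucc : ∀ n, e (n + 1) = F (e n + 1) := fun n => rfl
  have hemono : StrictMono e := strictMono_nat_of_lt_succ (fun n => by
    rw [hesucc]
    exact lt_of_lt_of_le (Nat.lt_succ_self _) (hF1 _))
  have herec : ∀ n k, birk f d k (f^[e n] z) ≤ -((k : ℝ) * (c / 4)) := by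
    intro n k
    cases n with
    | zero => rw [he0]; exact hF2 0 k
    | succ n => rw [hesucc]; exact hF2 _ k
  set v : ℕ → ℝ := fun n => Int.fract (f^[e n] z) with hv
  have hvmem : ∀ n, v n ∈ Set.Icc (0:ℝ) 1 := fun n =>
    ⟨Int.fract_nonneg _, (Int.fract_lt_one _).le⟩
  obtain ⟨L, _, ψ₂, hψ₂, hvtend⟩ := isCompact_Icc.tendsto_subseq hvmem
  -- choose the gap K
  obtain ⟨K₀, hK₀⟩ := exists_nat_ge ((8 / c) * Real.log 2)
  set K := K₀ + 1 with hK
  have hK1 : 1 ≤ K := Nat.le_add_left _ _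
  have hKexp : ∀ m : ℕ, K ≤ m → Real.exp (-((m : ℝ) * (c / 8))) ≤ 1 / 2 := by
    intro m hm
    have hKm : ((8:ℝ) / c) * Real.log 2 ≤ (m : ℝ) := by
      have h1 : (K₀ : ℝ) ≤ (m : ℝ) := by
        have : K₀ ≤ m := by omega
        exact_mod_cast this
      linarith
    have h2 : ((8:ℝ) / c) * Real.log 2 * (c / 8) ≤ (m : ℝ) * (c / 8) :=
      mul_le_mul_of_nonneg_right hKm (by positivity)
    have h3 : ((8:ℝ) / c) * Real.log 2 * (c / 8) = Real.log 2 := by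
      field_simp
    have h4 : Real.log 2 ≤ (m : ℝ) * (c / 8) := by linarith
    calc Real.exp (-((m : ℝ) * (c / 8))) ≤ Real.exp (-Real.log 2) :=
          Real.exp_le_exp.2 (by linarith)
      _ = 1 / 2 := by
          rw [Real.exp_neg, Real.exp_log (by norm_num : (0:ℝ) < 2)]
          norm_num
  -- convergence index
  obtain ⟨n₀, hn₀⟩ := Metric.tendsto_atTop.1 hvtend (δ / 8) (by positivity)
  set a := e (ψ₂ n₀) with ha
  set b := e (ψ₂ (n₀ + K)) with hb
  have hstep : ∀ k, e (ψ₂ n₀) + k ≤ e (ψ₂ (n₀ + k)) := by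
    intro k
    induction k with
    | zero => simp
    | succ k ih =>
        have h1 : e (ψ₂ (n₀ + k)) < e (ψ₂ (n₀ + k + 1)) :=
          hemono (hψ₂ (by omega))
        have : n₀ + (k+1) = n₀ + k + 1 := by omega
        rw [this]
        omega
  have hab : a + K ≤ b := hstep K
  set m := b - a with hmdef
  have hmK : K ≤ m := by omega
  have hm1 : 1 ≤ m := le_trans hK1 hmK
  set y := f^[a] z with hydef
  have hyrec : ∀ k, birk f d k y ≤ -((k : ℝ) * (c / 4)) := herec (ψ₂ n₀)
  set p : ℤ := ⌊f^[b] z⌋ - ⌊f^[a] z⌋ with hp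
  have hclose : |f^[b] z - (y + (p : ℝ))| ≤ δ / 4 := by
    have h1 : |v (ψ₂ n₀) - L| ≤ δ / 8 := by
      have := hn₀ n₀ le_rfl
      rw [Real.dist_eq] at this
      exact this.le
    have h2 : |v (ψ₂ (n₀ + K)) - L| ≤ δ / 8 := by
      have := hn₀ (n₀ + K) (Nat.le_add_right _ _)
      rw [Real.dist_eq] at this
      exact this.le
    have hva : v (ψ₂ n₀) = f^[a] z - (⌊f^[a] z⌋ : ℝ) := rfl
    have hvb : v (ψ₂ (n₀ + K)) = f^[b] z - (⌊f^[b] z⌋ : ℝ) := rfl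
    have hkey : f^[b] z - (y + (p : ℝ)) = v (ψ₂ (n₀ + K)) - v (ψ₂ n₀) := by
      rw [hva, hvb, hydef, hp]
      push_cast
      ring
    rw [hkey]
    calc |v (ψ₂ (n₀ + K)) - v (ψ₂ n₀)|
        ≤ |v (ψ₂ (n₀ + K)) - L| + |L - v (ψ₂ n₀)| := abs_sub_le _ _ _
      _ ≤ δ / 8 + δ / 8 := by
          rw [abs_sub_comm L]
          exact add_le_add h2 h1
      _ = δ / 4 := by ring
  have hfm : f^[m] y = f^[b] z := by
    rw [hydef, ← Function.iterate_add_apply]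
    congr 1
    omega
  obtain ⟨hcm1, hcm2⟩ := contract_main hd hpos hder hc hδpos hδuc y hyrec m
  have hhalf : Real.exp (-((m : ℝ) * (c / 8))) ≤ 1 / 2 := hKexp m hmK
  set g : ℝ → ℝ := fun w => f^[m] w - w - (p : ℝ) with hg
  have hgcont : Continuous g :=
    (((cont_of_hasDerivAt hder).iterate m).sub continuous_id).sub continuous_const
  have hdexp : δ * Real.exp (-((m : ℝ) * (c / 8))) ≤ δ * (1 / 2) :=
    mul_le_mul_of_nonneg_left hhalf hδpos.le
  have hclose' := abs_le.1 hclose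
  have hg1 : 0 ≤ g (y - δ) := by
    have h5 := abs_le.1 (hcm2 (y - δ) ⟨by linarith, by linarith⟩)
    simp only [hg]
    have hfm' : f^[m] y = f^[b] z := hfm
    linarith [h5.1, h5.2, hclose'.1, hclose'.2]
  have hg2 : g (y + δ) ≤ 0 := by
    have h5 := abs_le.1 (hcm2 (y + δ) ⟨by linarith, by linarith⟩)
    simp only [hg]
    linarith [h5.1, h5.2, hclose'.1, hclose'.2]
  have h0mem : (0:ℝ) ∈ Set.Icc (g (y + δ)) (g (y - δ)) := ⟨hg2, hg1⟩
  obtain ⟨x₀, hx₀mem, hx₀⟩ := intermediate_value_Icc'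
    (by linarith : y - δ ≤ y + δ) hgcont.continuousOn h0mem
  refine ⟨x₀, m, p, hm1, ?_, ?_⟩
  · have : f^[m] x₀ - x₀ - (p : ℝ) = 0 := hx₀
    linarith
  · rw [deriv_iter hder hpos]
    have hb1 := hcm1 x₀ hx₀mem
    have hm0 : (0:ℝ) < (m : ℝ) := by exact_mod_cast hm1
    have : birk f d m x₀ < 0 := by nlinarith
    exact Real.exp_lt_one_iff.2 this

lemma exists_inverse (hd : Continuous d) (hpos : ∀ x, 0 < d x)
    (hder : ∀ x, HasDerivAt f (d x) x) (hlift : ∀ x : ℝ, f (x + 1) = f x + 1) :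
    ∃ g : ℝ → ℝ, (∀ y, f (g y) = y) ∧ (∀ x, g (f x) = x) ∧
      (∀ y, g (y + 1) = g y + 1) ∧
      (∀ y, HasDerivAt g ((d (g y))⁻¹) y) ∧
      Continuous (fun y => (d (g y))⁻¹) ∧ (∀ y, 0 < (d (g y))⁻¹) := by
  have hmono : StrictMono f := strictMono_of_deriv_pos (fun x => by
    rw [(hder x).deriv]; exact hpos x)
  have hcont : Continuous f := cont_of_hasDerivAt hder
  have hsurj : Function.Surjective f := by
    intro yv
    obtain ⟨n, hn⟩ := exists_nat_ge (|yv - f 0|)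
    have habs := abs_le.1 hn
    have h1 : f ((0:ℝ) + ((-(n:ℤ)) : ℤ)) = f 0 + ((-(n:ℤ)) : ℤ) := lift_int hlift 0 _
    have h2 : f ((0:ℝ) + ((n:ℤ) : ℤ)) = f 0 + ((n:ℤ) : ℤ) := lift_int hlift 0 _
    push_cast at h1 h2
    have hle : (0:ℝ) + (-(n:ℝ)) ≤ (0:ℝ) + (n:ℝ) := by
      have : (0:ℝ) ≤ (n:ℝ) := Nat.cast_nonneg n
      linarith
    have hmem : yv ∈ Set.Icc (f ((0:ℝ) + (-(n:ℝ)))) (f ((0:ℝ) + (n:ℝ))) := by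
      constructor
      · rw [h1]; linarith
      · rw [h2]; linarith
    obtain ⟨x, _, hx⟩ := intermediate_value_Icc hle hcont.continuousOn hmem
    exact ⟨x, hx⟩
  set G := StrictMono.orderIsoOfSurjective f hmono hsurj with hG
  set g : ℝ → ℝ := fun y => G.symm y with hgdef
  have hfg : ∀ y, f (g y) = y := fun y =>
    StrictMono.orderIsoOfSurjective_self_symm_apply f hmono hsurj y
  have hgf : ∀ x, g (f x) = x := fun x =>
    StrictMono.orderIsoOfSurjective_symm_apply_self f hmono hsurj x
  have hgcont : Continuous g := G.symm.continuous
  have hglift : ∀ y, g (y + 1) = g y + 1 := fun y => hmono.injective (by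
    rw [hfg, hlift, hfg])
  have hgder : ∀ y, HasDerivAt g ((d (g y))⁻¹) y := fun y =>
    HasDerivAt.of_local_left_inverse hgcont.continuousAt (hder (g y)) (hpos _).ne'
      (Filter.Eventually.of_forall hfg)
  have hdgcont : Continuous fun y => (d (g y))⁻¹ :=
    (hd.comp hgcont).inv₀ fun y => (hpos _).ne'
  exact ⟨g, hfg, hgf, hglift, hgder, hdgcont, fun y => inv_pos.2 (hpos _)⟩

end C1Circle

open C1Circle

/-- Theorem 1 (circle case): a C¹ circle diffeomorphism is C¹-undistorted iff it has a
hyperbolic periodic point. -/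
theorem c1_circle_undistorted_iff_hyperbolic_periodic_point
    (f : ℝ → ℝ) (hf : ContDiff ℝ 1 f)
    (hlift : ∀ x : ℝ, f (x + 1) = f x + 1)
    (hpos : ∀ x : ℝ, 0 < deriv f x) :
    (0 < Filter.liminf
        (fun n : ℕ => (1 / (n : ℝ)) * ⨆ x : Set.Icc (0:ℝ) 1, |Real.log (deriv (f^[n]) x)|)
        Filter.atTop) ↔
      ∃ (x : ℝ) (q : ℕ) (p : ℤ), 1 ≤ q ∧ f^[q] x = x + p ∧ deriv (f^[q]) x ≠ 1 := by
  set d : ℝ → ℝ := deriv f with hd_def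
  have hder : ∀ x, HasDerivAt f (d x) x := fun x =>
    ((hf.differentiable one_ne_zero) x).hasDerivAt
  have hd : Continuous d := hf.continuous_deriv le_rfl
  obtain ⟨A, hA, hAb⟩ := exists_phi_bound hd hder (fun x => (hpos x).ne') hlift
  set S : ℕ → ℝ := fun n => ⨆ x : Set.Icc (0:ℝ) 1, |Real.log (deriv (f^[n]) x)| with hS
  set u : ℕ → ℝ := fun n => (1 / (n : ℝ)) * S n with hu
  have hlog : ∀ (n : ℕ) (x : ℝ), Real.log (deriv (f^[n]) x) = birk f d n x :=
    fun n x => log_deriv_iter hder hpos n x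
  have hbirkA : ∀ (n : ℕ) (x : ℝ), |birk f d n x| ≤ (n : ℝ) * A := by
    intro n x
    calc |birk f d n x| ≤ ∑ i ∈ Finset.range n, |Real.log (d (f^[i] x))| :=
          Finset.abs_sum_le_sum_abs _ _
      _ ≤ ∑ _i ∈ Finset.range n, A := Finset.sum_le_sum fun i _ => hAb _
      _ = (n : ℝ) * A := by rw [Finset.sum_const, Finset.card_range, nsmul_eq_mul]
  have hbdd : ∀ n : ℕ, BddAbove (Set.range fun x : Set.Icc (0:ℝ) 1 =>
      |Real.log (deriv (f^[n]) ↑x)|) := by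
    intro n
    refine ⟨(n : ℝ) * A, fun r hr => ?_⟩
    obtain ⟨x, rfl⟩ := hr
    show |Real.log (deriv (f^[n]) ↑x)| ≤ (n:ℝ) * A
    rw [hlog]
    exact hbirkA n x
  have hSge : ∀ (n : ℕ) (x : ℝ), |birk f d n x| ≤ S n := by
    intro n x
    have h1 : birk f d n x = birk f d n (Int.fract x) := by
      conv_lhs => rw [← Int.fract_add_floor x]
      rw [birk_per hder hlift]
    have h2 : |Real.log (deriv (f^[n]) (Int.fract x))| ≤ S n := by
      have := le_ciSup (hbdd n) (⟨Int.fract x,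
        ⟨Int.fract_nonneg x, (Int.fract_lt_one x).le⟩⟩ : Set.Icc (0:ℝ) 1)
      exact this
    rw [h1, ← hlog]
    exact h2
  have hSle : ∀ n : ℕ, S n ≤ (n : ℝ) * A := by
    intro n
    refine ciSup_le fun x => ?_
    rw [hlog]
    exact hbirkA n x
  have huA : ∀ n, u n ≤ A := by
    intro n
    rcases Nat.eq_zero_or_pos n with h | h
    · show 1 / ((n:ℕ):ℝ) * S n ≤ A
      rw [h]
      simp
      exact hA.le
    · have hn0 : (0:ℝ) < n := by exact_mod_cast h
      have := hSle n
      show 1 / ((n:ℕ):ℝ) * S n ≤ A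
      rw [div_mul_eq_mul_div, one_mul, div_le_iff₀ hn0]
      linarith [this]
  have hu0 : ∀ n, 0 ≤ u n := by
    intro n
    have h1 : (0:ℝ) ≤ S n := le_trans (abs_nonneg _) (hSge n 0)
    have h2 : (0:ℝ) ≤ 1 / (n:ℝ) := by positivity
    exact mul_nonneg h2 h1
  have hubdd : Filter.IsBoundedUnder (· ≤ ·) Filter.atTop u :=
    Filter.isBoundedUnder_of ⟨A, huA⟩
  constructor
  · -- hard direction
    intro hliminf
    set c : ℝ := Filter.liminf u Filter.atTop / 2 with hcdef
    have hc : 0 < c := half_pos hliminf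
    have hlt : c < Filter.liminf u Filter.atTop := half_lt_self hliminf
    have hblow : Filter.IsBoundedUnder (· ≥ ·) Filter.atTop u :=
      Filter.isBoundedUnder_of ⟨0, hu0⟩
    have hev : ∀ᶠ n in Filter.atTop, c < u n :=
      Filter.eventually_lt_of_lt_liminf hlt hblow
    obtain ⟨n₁, hn₁⟩ := Filter.eventually_atTop.1 hev
    -- points attaining the sup
    have hattain : ∀ n : ℕ, ∃ z : ℝ, S n ≤ |birk f d n z| := by
      intro n
      obtain ⟨zm, hzmem, hmax⟩ := isCompact_Icc.exists_isMaxOn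
        (Set.nonempty_Icc.2 (zero_le_one' ℝ))
        ((birk_continuous hd hder hpos n).abs.continuousOn)
      refine ⟨zm, ciSup_le fun yy => ?_⟩
      show |Real.log (deriv (f^[n]) ↑yy)| ≤ |birk f d n zm|
      rw [hlog]
      exact (isMaxOn_iff.1 hmax) ↑yy yy.2
    choose xm hxm using hattain
    have hbig : ∀ n, n₁ ≤ n → 1 ≤ n → (n:ℝ) * c < |birk f d n (xm n)| := by
      intro n h1 h2
      have h3 := hn₁ n h1
      have hn0 : (0:ℝ) < n := by exact_mod_cast h2
      have h4 : (n:ℝ) * c < S n := by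
        have h5 : c < 1 / (n:ℝ) * S n := h3
        rw [div_mul_eq_mul_div, one_mul, lt_div_iff₀ hn0] at h5
        linarith
      exact lt_of_lt_of_le h4 (hxm n)
    by_cases hcase : ∀ N : ℕ, ∃ m, N ≤ m ∧ ∃ x : ℝ, birk f d m x ≤ -((m:ℝ) * c)
    · obtain ⟨x₀, q, p, hq, hper, hlt1⟩ := key_contraction hd hpos hder hlift hc hcase
      exact ⟨x₀, q, p, hq, hper, ne_of_lt hlt1⟩
    · push_neg at hcase
      obtain ⟨N₂, hN₂⟩ := hcase
      obtain ⟨g, hfg, hgf, hglift, hgder, hdgc, hdgpos⟩ :=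
        exists_inverse hd hpos hder hlift
      set dg : ℝ → ℝ := fun y => (d (g y))⁻¹ with hdgdef
      have hgfreq : ∀ N : ℕ, ∃ m, N ≤ m ∧ ∃ y : ℝ, birk g dg m y ≤ -((m:ℝ) * c) := by
        intro N
        set n := max N (max N₂ (max n₁ 1)) with hn
        have hN' : N ≤ n := le_max_left _ _
        have hN₂' : N₂ ≤ n := le_trans (le_max_left _ _) (le_max_right _ _)
        have hn₁' : n₁ ≤ n := le_trans (le_trans (le_max_left _ _) (le_max_right _ _))
          (le_max_right _ _)
        have h1' : 1 ≤ n := le_trans (le_trans (le_max_right _ _) (le_max_right _ _))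
          (le_max_right _ _)
        have hgt := hbig n hn₁' h1'
        have hnot := hN₂ n hN₂' (xm n)
        have hup : (n:ℝ) * c < birk f d n (xm n) := by
          rcases abs_cases (birk f d n (xm n)) with ⟨he, _⟩ | ⟨he, _⟩
          · rwa [he] at hgt
          · rw [he] at hgt
            have hnc : (0:ℝ) ≤ (n:ℝ) * c := by positivity
            linarith
        refine ⟨n, hN', f^[n] (xm n), ?_⟩
        have hterm : ∀ i ∈ range n, Real.log (dg (g^[i] (f^[n] (xm n))))
            = -Real.log (d (f^[n - 1 - i] (xm n))) := by
          intro i hi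
          have hi' : i < n := Finset.mem_range.1 hi
          have hgi : g^[i] (f^[n] (xm n)) = f^[n - i] (xm n) := by
            have h1 : f^[n] (xm n) = f^[i] (f^[n - i] (xm n)) := by
              rw [← Function.iterate_add_apply]
              congr 1
              omega
            rw [h1]
            exact (Function.LeftInverse.iterate hgf i) (f^[n - i] (xm n))
          have hgi2 : g (f^[n - i] (xm n)) = f^[n - i - 1] (xm n) := by
            have h2 : f^[n - i] (xm n) = f (f^[n - i - 1] (xm n)) := by
              obtain ⟨k, hk⟩ : ∃ k, n - i = k + 1 := ⟨n - i - 1, by omega⟩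
              have hk2 : n - i - 1 = k := by omega
              rw [hk2, hk, Function.iterate_succ_apply']
            rw [h2, hgf]
          show Real.log ((d (g (g^[i] (f^[n] (xm n)))))⁻¹)
              = -Real.log (d (f^[n - 1 - i] (xm n)))
          rw [hgi, hgi2, Real.log_inv]
          have h3 : n - i - 1 = n - 1 - i := by omega
          rw [h3]
        have hswap : birk g dg n (f^[n] (xm n)) = -birk f d n (xm n) := by
          unfold birk
          calc ∑ i ∈ range n, Real.log (dg (g^[i] (f^[n] (xm n))))
              = ∑ i ∈ range n, -Real.log (d (f^[n - 1 - i] (xm n))) :=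
                Finset.sum_congr rfl hterm
            _ = -∑ i ∈ range n, Real.log (d (f^[n - 1 - i] (xm n))) := by
                rw [Finset.sum_neg_distrib]
            _ = -∑ i ∈ range n, Real.log (d (f^[i] (xm n))) := by
                congr 1
                exact Finset.sum_range_reflect (fun j => Real.log (d (f^[j] (xm n)))) n
        rw [hswap]
        linarith
      obtain ⟨x₀, q, p, hq, hper, hlt1⟩ :=
        key_contraction hdgc hdgpos hgder hglift hc hgfreq
      have hx₁ : f^[q] (x₀ + (p:ℝ)) = x₀ := by
        rw [← hper]
        exact (Function.LeftInverse.iterate hfg q) x₀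
      -- derivative conversion
      have hDg := hasDerivAt_iter hgder q x₀
      have hDf := hasDerivAt_iter hder q (x₀ + (p:ℝ))
      have hDf' : HasDerivAt (f^[q]) (∏ i ∈ range q, d (f^[i] (x₀ + (p:ℝ)))) (g^[q] x₀) := by
        rw [hper]
        exact hDf
      have hcomp := HasDerivAt.comp x₀ hDf' hDg
      have hid : f^[q] ∘ g^[q] = id := funext fun y => (Function.LeftInverse.iterate hfg q) y
      rw [hid] at hcomp
      have hone : (∏ i ∈ range q, d (f^[i] (x₀ + (p:ℝ))))
          * (∏ i ∈ range q, dg (g^[i] x₀)) = 1 := hcomp.unique (hasDerivAt_id x₀)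
      have hDgval : deriv (g^[q]) x₀ = ∏ i ∈ range q, dg (g^[i] x₀) := hDg.deriv
      have hDfval : deriv (f^[q]) (x₀ + (p:ℝ)) = ∏ i ∈ range q, d (f^[i] (x₀ + (p:ℝ))) :=
        hDf.deriv
      have hDglt : ∏ i ∈ range q, dg (g^[i] x₀) < 1 := by
        rw [← hDgval]
        exact hlt1
      have hDgpos : 0 < ∏ i ∈ range q, dg (g^[i] x₀) :=
        Finset.prod_pos fun i _ => hdgpos _
      have hDfgt : 1 < deriv (f^[q]) (x₀ + (p:ℝ)) := by
        rw [hDfval]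
        nlinarith [hone, hDglt, hDgpos]
      refine ⟨x₀ + (p:ℝ), q, -p, hq, ?_, ne_of_gt hDfgt⟩
      rw [hx₁]
      push_cast
      ring
  · -- easy direction
    rintro ⟨x, q, p, hq, hper, hd1⟩
    have hq0 : (0:ℝ) < q := by exact_mod_cast hq
    set lam : ℝ := birk f d q x with hlam
    have hlam0 : lam ≠ 0 := by
      intro h0
      apply hd1
      rw [deriv_iter hder hpos, ← hlam, h0, Real.exp_zero]
    have habs : 0 < |lam| := abs_pos.2 hlam0
    -- periodic orbit data
    have hiter : ∀ n : ℕ, f^[n * q] x = x + ((n : ℤ) * p : ℤ) := by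
      intro n
      induction n with
      | zero => simp
      | succ n ih =>
          have h1 : (n + 1) * q = q + n * q := by ring
          rw [h1, Function.iterate_add_apply, ih, iter_lift_int hlift, hper]
          push_cast
          ring
    have hbn : ∀ n : ℕ, birk f d (n * q) x = n * lam := by
      intro n
      induction n with
      | zero => simp [birk]
      | succ n ih =>
          have h1 : (n + 1) * q = n * q + q := by ring
          rw [h1, birk_cocycle, ih, hiter, birk_per hder hlift, ← hlam]
          push_cast
          ring
    -- lower bound for S at every index
    have hSlow : ∀ M : ℕ, ((M / q : ℕ) : ℝ) * |lam| - (q : ℝ) * A ≤ S M := by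
      intro M
      have hMeq : M / q * q + M % q = M := by
        rw [mul_comm]; exact Nat.div_add_mod M q
      have hsplit : birk f d M x = ((M / q : ℕ) : ℝ) * lam + birk f d (M % q) x := by
        conv_lhs => rw [← hMeq]
        rw [birk_cocycle, hbn, hiter, birk_per hder hlift]
      have h1 : |birk f d M x| ≤ S M := hSge M x
      have h2 : |birk f d (M % q) x| ≤ (q:ℝ) * A := by
        refine le_trans (hbirkA _ x) ?_
        have : (M % q : ℕ) ≤ q := (Nat.mod_lt M (by omega)).le
        have h3 : ((M % q : ℕ) : ℝ) ≤ (q : ℝ) := by exact_mod_cast this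
        nlinarith
      have h4 : ((M / q : ℕ) : ℝ) * |lam| ≤ |birk f d M x| + (q:ℝ) * A := by
        have h6 : ((M / q : ℕ) : ℝ) * lam = birk f d M x - birk f d (M % q) x := by
          rw [hsplit]; ring
        have h7 := abs_add_le (birk f d M x) (-(birk f d (M % q) x))
        rw [abs_neg] at h7
        calc ((M / q : ℕ) : ℝ) * |lam| = |((M / q : ℕ) : ℝ) * lam| := by
              rw [abs_mul, Nat.abs_cast]
          _ = |birk f d M x - birk f d (M % q) x| := by rw [h6]
          _ ≤ |birk f d M x| + |birk f d (M % q) x| := by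
              rw [sub_eq_add_neg]; exact h7
          _ ≤ |birk f d M x| + (q:ℝ) * A := by linarith [h2]
      linarith
    -- from the linear lower bound, conclude positivity of the liminf
    have hc0 : (0:ℝ) < |lam| / (2 * q) := by positivity
    refine lt_of_lt_of_le hc0 (Filter.le_liminf_of_le hubdd.isCoboundedUnder_ge ?_)
    obtain ⟨N₀, hN₀⟩ := exists_nat_ge (2 * q * (|lam| + q * A) / |lam|)
    rw [Filter.eventually_atTop]
    refine ⟨max N₀ 1, fun M hM => ?_⟩
    have hM1 : 1 ≤ M := le_trans (le_max_right _ _) hM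
    have hM0 : (0:ℝ) < M := by exact_mod_cast hM1
    have hMN : (N₀ : ℝ) ≤ M := by
      have : N₀ ≤ M := le_trans (le_max_left _ _) hM
      exact_mod_cast this
    have hdiv : (M:ℝ) / q - 1 ≤ ((M / q : ℕ) : ℝ) := by
      have h1 : M < q * (M / q) + q := by
        conv_lhs => rw [← Nat.div_add_mod M q]
        have := Nat.mod_lt M (show 0 < q by exact_mod_cast hq)
        omega
      have h2 : (M:ℝ) < q * ((M / q : ℕ) : ℝ) + q := by exact_mod_cast h1
      rw [sub_le_iff_le_add, div_le_iff₀ hq0]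
      nlinarith
    have hSM := hSlow M
    -- S M ≥ (M/q − 1)|lam| − qA ≥ (|lam|/(2q)) M
    have hMbig : 2 * q * (|lam| + q * A) / |lam| ≤ (M:ℝ) := le_trans hN₀ hMN
    rw [div_le_iff₀ habs] at hMbig
    have hgoal : |lam| / (2 * q) * M ≤ S M := by
      have h3 : ((M:ℝ) / q - 1) * |lam| - q * A ≤ S M := by
        have := mul_le_mul_of_nonneg_right hdiv habs.le
        linarith
      rw [div_mul_eq_mul_div, div_le_iff₀ (by positivity : (0:ℝ) < 2 * q)]
      have h5 : ((M:ℝ) / q) * |lam| = (M:ℝ) * |lam| / q := by ring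
      have h6 : (0:ℝ) < (q:ℝ) := hq0
      -- multiply h3 through by 2q
      have h7 := mul_le_mul_of_nonneg_right h3 (by positivity : (0:ℝ) ≤ 2 * q)
      have h8 : (((M:ℝ) / q - 1) * |lam| - q * A) * (2 * q)
          = 2 * (M:ℝ) * |lam| - 2 * q * (|lam| + q * A) := by
        field_simp
        ring
      rw [h8] at h7
      nlinarith
    show |lam| / (2 * q) ≤ 1 / (M:ℝ) * S M
    rw [div_mul_eq_mul_div, one_mul, le_div_iff₀ hM0]
    calc |lam| / (2 * q) * M ≤ S M := hgoal
      _ = S M := rfl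
end

section
/- Let f : ℝ → ℝ be a C^1 interval diffeomorphism lift. Then liminf_{n→∞} (1/n) · sup_{x ∈ [0,1]} |log(deriv (f^[n]) x) − log(deriv (f^[n]) 0)| > 0 if and only if f has a hyperbolic fixed point in [0,1], i.e. there exists x ∈ [0,1] with f x = x and deriv f x ≠ 1. -/
open Filter

set_option linter.unusedSectionVars false

open Filter Set

section Aux

variable (f : ℝ → ℝ)

/-- chain rule for iterates -/
lemma aux_deriv_iterate (hf : Differentiable ℝ f) (n : ℕ) (x : ℝ) :
    deriv (f^[n]) x = ∏ k ∈ Finset.range n, deriv f (f^[k] x) := by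
  induction n with
  | zero => simp
  | succ n ih =>
    rw [Function.iterate_succ', Finset.prod_range_succ]
    have : deriv (f ∘ f^[n]) x = deriv f (f^[n] x) * deriv (f^[n]) x :=
      deriv_comp x (hf.differentiableAt) ((hf.iterate n).differentiableAt)
    rw [this, ih, mul_comm]

variable (hf : ContDiff ℝ 1 f) (h0 : f 0 = 0) (h1 : f 1 = 1)
    (hpos : ∀ x ∈ Set.Icc (0:ℝ) 1, 0 < deriv f x)

include hf hpos h0 h1

lemma aux_mono : StrictMonoOn f (Set.Icc (0:ℝ) 1) := by
  apply strictMonoOn_of_deriv_pos (convex_Icc 0 1) (hf.continuous.continuousOn)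
  intro x hx
  exact hpos x (interior_subset hx)

lemma aux_mapsTo : Set.MapsTo f (Set.Icc (0:ℝ) 1) (Set.Icc (0:ℝ) 1) := by
  intro x hx
  have hm := (aux_mono f hf h0 h1 hpos).monotoneOn
  constructor
  · have := hm (Set.left_mem_Icc.2 one_pos.le) hx hx.1
    rwa [h0] at this
  · have := hm hx (Set.right_mem_Icc.2 one_pos.le) hx.2
    rwa [h1] at this

lemma aux_iter_mem (n : ℕ) {x : ℝ} (hx : x ∈ Set.Icc (0:ℝ) 1) :
    f^[n] x ∈ Set.Icc (0:ℝ) 1 :=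
  (aux_mapsTo f hf h0 h1 hpos).iterate n hx

/-- log of derivative of iterate as Birkhoff sum -/
lemma aux_log_deriv_iterate (n : ℕ) {x : ℝ} (hx : x ∈ Set.Icc (0:ℝ) 1) :
    Real.log (deriv (f^[n]) x) =
      ∑ k ∈ Finset.range n, Real.log (deriv f (f^[k] x)) := by
  rw [aux_deriv_iterate f (hf.differentiable one_ne_zero)]
  apply Real.log_prod
  intro k _
  exact (hpos _ (aux_iter_mem f hf h0 h1 hpos k hx)).ne'

/-- orbits are monotone: increments have constant sign -/
lemma aux_orbit_mono {x : ℝ} (hx : x ∈ Set.Icc (0:ℝ) 1) (hfx : x ≤ f x) :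
    ∀ n, f^[n] x ≤ f^[n+1] x := by
  intro n
  induction n with
  | zero => simpa using hfx
  | succ n ih =>
    have hmem := aux_iter_mem f hf h0 h1 hpos n hx
    have hmem' := aux_iter_mem f hf h0 h1 hpos (n+1) hx
    have h := (aux_mono f hf h0 h1 hpos).monotoneOn hmem hmem' ih
    rw [← Function.iterate_succ_apply' f n, ← Function.iterate_succ_apply' f (n+1)] at h
    exact h

lemma aux_orbit_anti {x : ℝ} (hx : x ∈ Set.Icc (0:ℝ) 1) (hfx : f x ≤ x) :
    ∀ n, f^[n+1] x ≤ f^[n] x := by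
  intro n
  induction n with
  | zero => simpa using hfx
  | succ n ih =>
    have hmem := aux_iter_mem f hf h0 h1 hpos n hx
    have hmem' := aux_iter_mem f hf h0 h1 hpos (n+1) hx
    have h := (aux_mono f hf h0 h1 hpos).monotoneOn hmem' hmem ih
    rw [← Function.iterate_succ_apply' f n, ← Function.iterate_succ_apply' f (n+1)] at h
    exact h

/-- counting lemma: orbits spend little time where the map moves by at least δ -/
lemma aux_count (P : ℝ → Prop) [DecidablePred P] {δ : ℝ}
    (hP : ∀ y ∈ Set.Icc (0:ℝ) 1, P y → δ ≤ |f y - y|)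
    {x : ℝ} (hx : x ∈ Set.Icc (0:ℝ) 1) (n : ℕ) :
    δ * ((Finset.range n).filter (fun k => P (f^[k] x))).card ≤ 1 := by
  have hmem : ∀ k, f^[k] x ∈ Set.Icc (0:ℝ) 1 := fun k => aux_iter_mem f hf h0 h1 hpos k hx
  rcases le_total x (f x) with hc | hc
  · have hmono : ∀ k, f^[k] x ≤ f^[k+1] x := aux_orbit_mono f hf h0 h1 hpos hx hc
    have h1' : ∀ k ∈ (Finset.range n).filter (fun k => P (f^[k] x)),
        δ ≤ f^[k+1] x - f^[k] x := by
      intro k hk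
      rw [Finset.mem_filter] at hk
      have h2 := hP _ (hmem k) hk.2
      have h3 := hmono k
      rw [Function.iterate_succ_apply'] at h3 ⊢
      rwa [abs_of_nonneg (by linarith)] at h2
    calc δ * ((Finset.range n).filter (fun k => P (f^[k] x))).card
        = ∑ _k ∈ (Finset.range n).filter (fun k => P (f^[k] x)), δ := by
          rw [Finset.sum_const, nsmul_eq_mul, mul_comm]
      _ ≤ ∑ k ∈ (Finset.range n).filter (fun k => P (f^[k] x)), (f^[k+1] x - f^[k] x) :=
          Finset.sum_le_sum h1'
      _ ≤ ∑ k ∈ Finset.range n, (f^[k+1] x - f^[k] x) :=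
          Finset.sum_le_sum_of_subset_of_nonneg (Finset.filter_subset _ _)
            (fun i _ _ => sub_nonneg.2 (hmono i))
      _ = f^[n] x - f^[0] x := Finset.sum_range_sub (fun k => f^[k] x) n
      _ ≤ 1 := by
          have := (hmem n).2
          have := hx.1
          simp only [Function.iterate_zero_apply]
          linarith
  · have hmono : ∀ k, f^[k+1] x ≤ f^[k] x := aux_orbit_anti f hf h0 h1 hpos hx hc
    have h1' : ∀ k ∈ (Finset.range n).filter (fun k => P (f^[k] x)),
        δ ≤ f^[k] x - f^[k+1] x := by
      intro k hk
      rw [Finset.mem_filter] at hk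
      have h2 := hP _ (hmem k) hk.2
      have h3 := hmono k
      rw [Function.iterate_succ_apply'] at h3 ⊢
      rwa [abs_of_nonpos (by linarith), neg_sub] at h2
    calc δ * ((Finset.range n).filter (fun k => P (f^[k] x))).card
        = ∑ _k ∈ (Finset.range n).filter (fun k => P (f^[k] x)), δ := by
          rw [Finset.sum_const, nsmul_eq_mul, mul_comm]
      _ ≤ ∑ k ∈ (Finset.range n).filter (fun k => P (f^[k] x)), (f^[k] x - f^[k+1] x) :=
          Finset.sum_le_sum h1'
      _ ≤ ∑ k ∈ Finset.range n, (f^[k] x - f^[k+1] x) :=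
          Finset.sum_le_sum_of_subset_of_nonneg (Finset.filter_subset _ _)
            (fun i _ _ => sub_nonneg.2 (hmono i))
      _ = f^[0] x - f^[n] x := Finset.sum_range_sub' (fun k => f^[k] x) n
      _ ≤ 1 := by
          have := hx.2
          have := (hmem n).1
          simp only [Function.iterate_zero_apply]
          linarith

/-- main estimate: if all fixed points are parabolic, Birkhoff sums of log deriv are sublinear -/
lemma aux_bound (hpar : ∀ x ∈ Set.Icc (0:ℝ) 1, f x = x → deriv f x = 1)
    {ε : ℝ} (hε : 0 < ε) :
    ∃ B : ℝ, 0 ≤ B ∧ ∀ n : ℕ, ∀ x ∈ Set.Icc (0:ℝ) 1,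
      |Real.log (deriv (f^[n]) x)| ≤ n * ε + B := by
  classical
  set g := fun y => Real.log (deriv f y) with hg
  have hgcont : ContinuousOn g (Set.Icc (0:ℝ) 1) :=
    ContinuousOn.log ((hf.continuous_deriv le_rfl).continuousOn)
      (fun y hy => (hpos y hy).ne')
  obtain ⟨C, hC⟩ := isCompact_Icc.exists_bound_of_continuousOn hgcont
  have hC' : ∀ y ∈ Set.Icc (0:ℝ) 1, |g y| ≤ C := by
    intro y hy; simpa [Real.norm_eq_abs] using hC y hy
  have hC0 : 0 ≤ C := le_trans (abs_nonneg _) (hC' 0 ⟨le_rfl, one_pos.le⟩)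
  -- bad set
  set K := {y ∈ Set.Icc (0:ℝ) 1 | ε ≤ |g y|} with hK
  have hKeq : K = Set.Icc (0:ℝ) 1 ∩ (fun y => |g y|) ⁻¹' Set.Ici ε := by
    ext y; simp [hK, Set.mem_sep_iff]
  have hKcl : IsClosed K := by
    rw [hKeq]
    exact (hgcont.abs).preimage_isClosed_of_isClosed isClosed_Icc isClosed_Ici
  have hKcp : IsCompact K :=
    isCompact_Icc.of_isClosed_subset hKcl (Set.sep_subset _ _)
  obtain ⟨δ, hδpos, hδ⟩ :
      ∃ δ > (0:ℝ), ∀ y ∈ Set.Icc (0:ℝ) 1, ε ≤ |g y| → δ ≤ |f y - y| := by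
    rcases K.eq_empty_or_nonempty with hKe | hKne
    · refine ⟨1, one_pos, fun y hy hgy => absurd ?_ (Set.notMem_empty y)⟩
      rw [← hKe]; exact ⟨hy, hgy⟩
    · obtain ⟨y₀, hy₀K, hymin⟩ := hKcp.exists_isMinOn hKne
        (((hf.continuous.sub continuous_id).abs).continuousOn)
      refine ⟨|f y₀ - y₀|, ?_, fun y hy hgy => hymin ⟨hy, hgy⟩⟩
      rcases (abs_nonneg (f y₀ - y₀)).lt_or_eq with h | h
      · exact h
      · exfalso
        have hfix : f y₀ = y₀ := by
          have := abs_eq_zero.mp h.symm; linarith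
        have hd1 : deriv f y₀ = 1 := hpar y₀ hy₀K.1 hfix
        have hg0 : g y₀ = 0 := by simp [hg, hd1]
        have hε' := hy₀K.2
        rw [hg0, abs_zero] at hε'
        linarith
  refine ⟨C / δ, by positivity, ?_⟩
  intro n x hx
  rw [aux_log_deriv_iterate f hf h0 h1 hpos n hx]
  have hmem : ∀ k, f^[k] x ∈ Set.Icc (0:ℝ) 1 := fun k => aux_iter_mem f hf h0 h1 hpos k hx
  set T := (Finset.range n).filter (fun k => ε ≤ |g (f^[k] x)|) with hT
  have hcard : (T.card : ℝ) ≤ 1 / δ := by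
    have h := aux_count f hf h0 h1 hpos (fun y => ε ≤ |g y|) hδ hx n
    rw [le_div_iff₀ hδpos, mul_comm]
    exact h
  calc |∑ k ∈ Finset.range n, Real.log (deriv f (f^[k] x))|
      ≤ ∑ k ∈ Finset.range n, |g (f^[k] x)| := Finset.abs_sum_le_sum_abs _ _
    _ = (∑ k ∈ T, |g (f^[k] x)|)
        + ∑ k ∈ (Finset.range n).filter (fun k => ¬ (ε ≤ |g (f^[k] x)|)), |g (f^[k] x)| :=
        (Finset.sum_filter_add_sum_filter_not _ _ _).symm
    _ ≤ (T.card : ℝ) * C + n * ε := by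
        gcongr ?_ + ?_
        · calc (∑ k ∈ T, |g (f^[k] x)|) ≤ T.card • C :=
              Finset.sum_le_card_nsmul _ _ _ (fun k _ => hC' _ (hmem k))
            _ = (T.card : ℝ) * C := by rw [nsmul_eq_mul]
        · calc (∑ k ∈ (Finset.range n).filter (fun k => ¬ (ε ≤ |g (f^[k] x)|)), |g (f^[k] x)|)
              ≤ ((Finset.range n).filter (fun k => ¬ (ε ≤ |g (f^[k] x)|))).card • ε :=
              Finset.sum_le_card_nsmul _ _ _ (fun k hk => by
                rw [Finset.mem_filter] at hk
                exact (not_le.mp hk.2).le)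
            _ ≤ (n : ℝ) * ε := by
                rw [nsmul_eq_mul]
                gcongr
                exact Nat.cast_le.mpr ((Finset.card_filter_le (Finset.range n) _).trans_eq (Finset.card_range n))
    _ ≤ (n : ℝ) * ε + C / δ := by
        have : (T.card : ℝ) * C ≤ (1/δ) * C := by gcongr
        rw [one_div, inv_mul_eq_div] at this
        linarith

end Aux


lemma aux_abs_sub (a b : ℝ) : |a - b| ≤ |a| + |b| := by
  simpa [sub_eq_add_neg, abs_neg] using abs_add_le a (-b)


/-- Theorem 1 (interval case): a C¹ diffeomorphism of the interval is C¹-undistorted iff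
it has a hyperbolic fixed point. -/
theorem c1_interval_undistorted_iff_hyperbolic_fixed_point
    (f : ℝ → ℝ) (hf : ContDiff ℝ 1 f)
    (h0 : f 0 = 0) (h1 : f 1 = 1)
    (hpos : ∀ x ∈ Set.Icc (0:ℝ) 1, 0 < deriv f x) :
    (0 < Filter.liminf
        (fun n : ℕ => (1 / (n : ℝ)) *
          ⨆ x : Set.Icc (0:ℝ) 1,
            |Real.log (deriv (f^[n]) x) - Real.log (deriv (f^[n]) 0)|)
        Filter.atTop) ↔
      ∃ x ∈ Set.Icc (0:ℝ) 1, f x = x ∧ deriv f x ≠ 1 := by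
  classical
  have hdiff : Differentiable ℝ f := hf.differentiable one_ne_zero
  have h0mem : (0:ℝ) ∈ Set.Icc (0:ℝ) 1 := ⟨le_rfl, one_pos.le⟩
  haveI : Nonempty (Set.Icc (0:ℝ) 1) := ⟨⟨0, h0mem⟩⟩
  have hgcont : ContinuousOn (fun y => Real.log (deriv f y)) (Set.Icc (0:ℝ) 1) :=
    ContinuousOn.log ((hf.continuous_deriv le_rfl).continuousOn)
      (fun y hy => (hpos y hy).ne')
  obtain ⟨C, hC⟩ := isCompact_Icc.exists_bound_of_continuousOn hgcont
  have hC' : ∀ y ∈ Set.Icc (0:ℝ) 1, |Real.log (deriv f y)| ≤ C := by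
    intro y hy; simpa [Real.norm_eq_abs] using hC y hy
  have hC0 : 0 ≤ C := le_trans (abs_nonneg _) (hC' 0 h0mem)
  -- pointwise crude bound
  have hcrude : ∀ (n : ℕ), ∀ x ∈ Set.Icc (0:ℝ) 1,
      |Real.log (deriv (f^[n]) x)| ≤ (n : ℝ) * C := by
    intro n x hx
    rw [aux_log_deriv_iterate f hf h0 h1 hpos n hx]
    calc |∑ k ∈ Finset.range n, Real.log (deriv f (f^[k] x))|
        ≤ ∑ k ∈ Finset.range n, |Real.log (deriv f (f^[k] x))| :=
        Finset.abs_sum_le_sum_abs _ _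
      _ ≤ (Finset.range n).card • C :=
        Finset.sum_le_card_nsmul _ _ _
          (fun k _ => hC' _ (aux_iter_mem f hf h0 h1 hpos k hx))
      _ = (n : ℝ) * C := by rw [nsmul_eq_mul, Finset.card_range]
  have hpt : ∀ (n : ℕ), ∀ x ∈ Set.Icc (0:ℝ) 1,
      |Real.log (deriv (f^[n]) x) - Real.log (deriv (f^[n]) 0)| ≤ 2 * ((n : ℝ) * C) := by
    intro n x hx
    have := aux_abs_sub (Real.log (deriv (f^[n]) x)) (Real.log (deriv (f^[n]) 0))
    have b1 := hcrude n x hx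
    have b0 := hcrude n 0 h0mem
    linarith
  have hbdd : ∀ n : ℕ, BddAbove (Set.range fun x : Set.Icc (0:ℝ) 1 =>
      |Real.log (deriv (f^[n]) x) - Real.log (deriv (f^[n]) 0)|) := by
    intro n
    refine ⟨2 * ((n : ℝ) * C), ?_⟩
    rintro y ⟨x, rfl⟩
    exact hpt n x x.2
  have hSle : ∀ n : ℕ, (⨆ x : Set.Icc (0:ℝ) 1,
      |Real.log (deriv (f^[n]) x) - Real.log (deriv (f^[n]) 0)|) ≤ 2 * ((n : ℝ) * C) :=
    fun n => ciSup_le (fun x => hpt n x x.2)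
  have hS0 : ∀ n : ℕ, 0 ≤ (⨆ x : Set.Icc (0:ℝ) 1,
      |Real.log (deriv (f^[n]) x) - Real.log (deriv (f^[n]) 0)|) :=
    fun n => Real.iSup_nonneg (fun x => abs_nonneg _)
  constructor
  · -- undistorted implies hyperbolic fixed point (contrapositive)
    intro hlim
    by_contra hno
    push_neg at hno
    have htend : Tendsto
        (fun n : ℕ => (1 / (n : ℝ)) *
          ⨆ x : Set.Icc (0:ℝ) 1,
            |Real.log (deriv (f^[n]) x) - Real.log (deriv (f^[n]) 0)|)
        atTop (nhds 0) := by
      rw [Metric.tendsto_atTop]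
      intro ε hε
      obtain ⟨B, hB0, hbd⟩ := aux_bound f hf h0 h1 hpos hno (show (0:ℝ) < ε/4 by linarith)
      refine ⟨Nat.ceil ((4*B)/ε) + 1, fun n hn => ?_⟩
      have hn1 : 1 ≤ n := le_trans (Nat.le_add_left 1 _) hn
      have hnR : (4*B)/ε < (n:ℝ) := by
        have h' : ((Nat.ceil ((4*B)/ε) : ℕ) : ℝ) < (n : ℝ) := by
          exact_mod_cast Nat.lt_of_lt_of_le (Nat.lt_succ_self _) hn
        exact lt_of_le_of_lt (Nat.le_ceil _) h'
      have hn0 : (0:ℝ) < (n : ℝ) := by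
        have : (1:ℝ) ≤ (n:ℝ) := by exact_mod_cast hn1
        linarith
      have hSn : (⨆ x : Set.Icc (0:ℝ) 1,
          |Real.log (deriv (f^[n]) x) - Real.log (deriv (f^[n]) 0)|)
          ≤ 2 * ((n : ℝ) * (ε/4) + B) := by
        apply ciSup_le
        intro x
        have b1 := hbd n x x.2
        have b0 := hbd n 0 h0mem
        have := aux_abs_sub (Real.log (deriv (f^[n]) x)) (Real.log (deriv (f^[n]) 0))
        linarith
      have hun : (1 / (n : ℝ)) * (⨆ x : Set.Icc (0:ℝ) 1,
          |Real.log (deriv (f^[n]) x) - Real.log (deriv (f^[n]) 0)|)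
          ≤ ε/2 + 2*B/(n:ℝ) := by
        calc (1 / (n : ℝ)) * (⨆ x : Set.Icc (0:ℝ) 1,
            |Real.log (deriv (f^[n]) x) - Real.log (deriv (f^[n]) 0)|)
            ≤ (1 / (n : ℝ)) * (2 * ((n : ℝ) * (ε/4) + B)) :=
            mul_le_mul_of_nonneg_left hSn (by positivity)
          _ = ε/2 + 2*B/(n:ℝ) := by field_simp; ring
      have h2B : 2*B/(n:ℝ) < ε/2 := by
        rw [div_lt_iff₀ hn0]
        have := (div_lt_iff₀ hε).mp hnR
        linarith
      have hupos : 0 ≤ (1 / (n : ℝ)) * (⨆ x : Set.Icc (0:ℝ) 1,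
          |Real.log (deriv (f^[n]) x) - Real.log (deriv (f^[n]) 0)|) :=
        mul_nonneg (by positivity) (hS0 n)
      rw [Real.dist_eq, sub_zero, abs_of_nonneg hupos]
      linarith
    rw [htend.liminf_eq] at hlim
    exact lt_irrefl 0 hlim
  · -- hyperbolic fixed point implies undistorted
    rintro ⟨x₀, hx₀, hfix, hne⟩
    have hderiv_pos_x0 := hpos x₀ hx₀
    have hlog_x0 : Real.log (deriv f x₀) ≠ 0 := by
      intro h
      rcases Real.log_eq_zero.mp h with h' | h' | h' <;> [linarith; exact hne h'; linarith]
    have hcpos : 0 < |Real.log (deriv f x₀)| / 2 :=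
      half_pos (abs_pos.mpr hlog_x0)
    have hx₀n : ∀ n : ℕ, Real.log (deriv (f^[n]) x₀) = (n : ℝ) * Real.log (deriv f x₀) := by
      intro n
      rw [aux_deriv_iterate f hdiff n x₀]
      rw [Finset.prod_congr rfl (fun k _ => by rw [Function.iterate_fixed hfix k] :
        ∀ k ∈ Finset.range n, deriv f (f^[k] x₀) = deriv f x₀)]
      rw [Finset.prod_const, Finset.card_range, Real.log_pow]
    have h0n : ∀ n : ℕ, Real.log (deriv (f^[n]) 0) = (n : ℝ) * Real.log (deriv f 0) := by
      intro n
      rw [aux_deriv_iterate f hdiff n 0]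
      rw [Finset.prod_congr rfl (fun k _ => by rw [Function.iterate_fixed h0 k] :
        ∀ k ∈ Finset.range n, deriv f (f^[k] (0:ℝ)) = deriv f 0)]
      rw [Finset.prod_const, Finset.card_range, Real.log_pow]
    have hMVT : ∀ n : ℕ, ∃ ξ ∈ Set.Icc (0:ℝ) 1, deriv (f^[n]) ξ = 1 := by
      intro n
      obtain ⟨ξ, hξ, hd⟩ := exists_deriv_eq_slope (f^[n]) one_pos
        ((hdiff.iterate n).continuous.continuousOn)
        ((hdiff.iterate n).differentiableOn)
      refine ⟨ξ, Set.mem_Icc_of_Ioo hξ, ?_⟩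
      rw [hd, Function.iterate_fixed h0 n, Function.iterate_fixed h1 n]
      norm_num
    have hSge : ∀ n : ℕ, (n : ℝ) * (|Real.log (deriv f x₀)| / 2) ≤
        ⨆ x : Set.Icc (0:ℝ) 1,
          |Real.log (deriv (f^[n]) x) - Real.log (deriv (f^[n]) 0)| := by
      intro n
      obtain ⟨ξ, hξ, hdξ⟩ := hMVT n
      have l1 := le_ciSup (hbdd n) (⟨x₀, hx₀⟩ : Set.Icc (0:ℝ) 1)
      have l2 := le_ciSup (hbdd n) (⟨ξ, hξ⟩ : Set.Icc (0:ℝ) 1)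
      simp only at l1 l2
      rw [hdξ, Real.log_one] at l2
      have t : |(n:ℝ) * Real.log (deriv f x₀)| ≤
          |(n:ℝ) * Real.log (deriv f x₀) - (n:ℝ) * Real.log (deriv f 0)|
          + |(0:ℝ) - (n:ℝ) * Real.log (deriv f 0)| := by
        have := aux_abs_sub ((n:ℝ) * Real.log (deriv f x₀) - (n:ℝ) * Real.log (deriv f 0))
          ((0:ℝ) - (n:ℝ) * Real.log (deriv f 0))
        have he : ((n:ℝ) * Real.log (deriv f x₀) - (n:ℝ) * Real.log (deriv f 0))
            - ((0:ℝ) - (n:ℝ) * Real.log (deriv f 0)) = (n:ℝ) * Real.log (deriv f x₀) := by ring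
        rwa [he] at this
      rw [abs_mul, Nat.abs_cast] at t
      rw [← hx₀n n, ← h0n n] at t
      linarith
    have hev : ∀ᶠ n : ℕ in atTop, |Real.log (deriv f x₀)| / 2 ≤
        (1 / (n : ℝ)) * ⨆ x : Set.Icc (0:ℝ) 1,
          |Real.log (deriv (f^[n]) x) - Real.log (deriv (f^[n]) 0)| := by
      filter_upwards [eventually_ge_atTop 1] with n hn
      have hn0 : (0:ℝ) < (n:ℝ) := by exact_mod_cast Nat.lt_of_lt_of_le Nat.zero_lt_one hn
      have h' := hSge n
      calc |Real.log (deriv f x₀)| / 2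
          = (1/(n:ℝ)) * ((n:ℝ) * (|Real.log (deriv f x₀)| / 2)) := by field_simp
        _ ≤ (1/(n:ℝ)) * ⨆ x : Set.Icc (0:ℝ) 1,
            |Real.log (deriv (f^[n]) x) - Real.log (deriv (f^[n]) 0)| :=
            mul_le_mul_of_nonneg_left h' (by positivity)
    have hcb : IsCoboundedUnder (· ≥ ·) atTop
        (fun n : ℕ => (1 / (n : ℝ)) * ⨆ x : Set.Icc (0:ℝ) 1,
          |Real.log (deriv (f^[n]) x) - Real.log (deriv (f^[n]) 0)|) := by
      apply Filter.IsBoundedUnder.isCoboundedUnder_ge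
      apply Filter.isBoundedUnder_of_eventually_le (a := 2*C)
      filter_upwards [eventually_ge_atTop 1] with n hn
      have hn0 : (0:ℝ) < (n:ℝ) := by exact_mod_cast Nat.lt_of_lt_of_le Nat.zero_lt_one hn
      calc (1 / (n : ℝ)) * (⨆ x : Set.Icc (0:ℝ) 1,
          |Real.log (deriv (f^[n]) x) - Real.log (deriv (f^[n]) 0)|)
          ≤ (1 / (n : ℝ)) * (2 * ((n:ℝ) * C)) :=
          mul_le_mul_of_nonneg_left (hSle n) (by positivity)
        _ = 2*C := by field_simp
    exact lt_of_lt_of_le hcpos (Filter.le_liminf_of_le hcb hev)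
end

section
/- Let f : ℝ → ℝ be a C^1 circle lift, and suppose x₀ ∈ ℝ, q ≥ 1 an integer, and p an integer satisfy f^[q] x₀ = x₀ + p. Then liminf_{n→∞} (1/n) · sup_{x ∈ [0,1]} |log(deriv (f^[n]) x)| ≥ (1/q) · |log(deriv (f^[q]) x₀)|. -/
open Filter

private lemma hasDerivAt_iter_aux (f : ℝ → ℝ) (hf : Differentiable ℝ f) (n : ℕ) (x : ℝ) :
    HasDerivAt (f^[n]) (∏ j ∈ Finset.range n, deriv f (f^[j] x)) x := by
  induction n with
  | zero => simpa using hasDerivAt_id x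
  | succ n ih =>
      rw [Function.iterate_succ']
      simpa [Finset.prod_range_succ, mul_comm] using ((hf (f^[n] x)).hasDerivAt.comp x ih)

private lemma deriv_iter_aux (f : ℝ → ℝ) (hf : Differentiable ℝ f) (n : ℕ) (x : ℝ) :
    deriv (f^[n]) x = ∏ j ∈ Finset.range n, deriv f (f^[j] x) :=
  (hasDerivAt_iter_aux f hf n x).deriv

private lemma deriv_iter_add_aux (f : ℝ → ℝ) (hf : Differentiable ℝ f) (m n : ℕ) (x : ℝ) :
    deriv (f^[m + n]) x = deriv (f^[m]) (f^[n] x) * deriv (f^[n]) x := by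
  have h1 := hasDerivAt_iter_aux f hf m (f^[n] x)
  have h2 := hasDerivAt_iter_aux f hf n x
  have h3 := (h1.comp x h2).deriv
  rw [Function.iterate_add, h3, h1.deriv, h2.deriv]

private lemma lift_int_aux (g : ℝ → ℝ) (h : ∀ x : ℝ, g (x + 1) = g x + 1) (x : ℝ) (m : ℤ) :
    g (x + m) = g x + m := by
  induction m using Int.induction_on with
  | zero => simp
  | succ k ih =>
      have : x + ((k : ℝ) + 1) = (x + k) + 1 := by ring
      push_cast
      push_cast at ih
      rw [this, h, ih]; ring
  | pred k ih =>
      have h2 : (x + (-(k : ℝ) - 1)) + 1 = x + (-(k:ℝ)) := by ring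
      have := h (x + (-(k : ℝ) - 1))
      rw [h2] at this
      push_cast
      push_cast at ih
      rw [show x + (-(k:ℝ) - 1) = x + (-(k:ℝ)) - 1 by ring] at this ⊢
      rw [ih] at this
      linarith

/-- Case I of the proof of Theorem 1: a periodic point forces
liminf d(fⁿ,e)/n ≥ (1/q)·|log (f^[q])'(x₀)|. -/
theorem c1_growth_lower_bound_of_periodic_point
    (f : ℝ → ℝ) (hf : ContDiff ℝ 1 f)
    (hlift : ∀ x : ℝ, f (x + 1) = f x + 1)
    (hpos : ∀ x : ℝ, 0 < deriv f x)
    (x₀ : ℝ) (q : ℕ) (p : ℤ) (hq : 1 ≤ q) (hper : f^[q] x₀ = x₀ + p) :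
    (1 / (q : ℝ)) * |Real.log (deriv (f^[q]) x₀)| ≤
      Filter.liminf
        (fun n : ℕ => (1 / (n : ℝ)) * ⨆ x : Set.Icc (0:ℝ) 1, |Real.log (deriv (f^[n]) x)|)
        Filter.atTop := by
  haveI : Nonempty (Set.Icc (0:ℝ) 1) := ⟨⟨0, by norm_num⟩⟩
  have hdiff : Differentiable ℝ f := hf.differentiable one_ne_zero
  have hq0 : 0 < (q : ℝ) := by exact_mod_cast hq
  have hDpos : ∀ (n : ℕ) (x : ℝ), 0 < deriv (f^[n]) x := by
    intro n x
    rw [deriv_iter_aux f hdiff]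
    exact Finset.prod_pos fun j _ => hpos _
  -- lift property for iterates
  have hlift' : ∀ (n : ℕ) (x : ℝ), f^[n] (x + 1) = f^[n] x + 1 := by
    intro n
    induction n with
    | zero => simp
    | succ n ih =>
        intro x
        rw [Function.iterate_succ', Function.comp_apply, Function.comp_apply, ih, hlift]
  have hliftZ : ∀ (n : ℕ) (x : ℝ) (m : ℤ), f^[n] (x + m) = f^[n] x + m :=
    fun n => lift_int_aux (f^[n]) (hlift' n)
  -- deriv of iterates is invariant under integer translations
  have hderPer : ∀ (n : ℕ) (x : ℝ) (m : ℤ), deriv (f^[n]) (x + m) = deriv (f^[n]) x := by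
    intro n x m
    have h1 : deriv (fun y : ℝ => f^[n] (y + (m : ℝ))) x = deriv (f^[n]) (x + m) :=
      deriv_comp_add_const (f^[n]) (m : ℝ) x
    rw [← h1]
    have h2 : (fun y : ℝ => f^[n] (y + (m : ℝ))) = fun y : ℝ => f^[n] y + (m : ℝ) := by
      funext y; exact hliftZ n y m
    rw [h2, deriv_add_const]
  -- continuity and boundedness of the sup integrand
  have hcont : ∀ n : ℕ, Continuous fun x : ℝ => |Real.log (deriv (f^[n]) x)| := by
    intro n
    have hd : Continuous (deriv (f^[n])) := by
      rw [funext (deriv_iter_aux f hdiff n)]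
      exact continuous_finset_prod _ fun j _ =>
        (hf.continuous_deriv le_rfl).comp (hf.continuous.iterate j)
    exact (hd.log fun x => (hDpos n x).ne').abs
  have hbdd : ∀ n : ℕ,
      BddAbove (Set.range fun x : Set.Icc (0:ℝ) 1 => |Real.log (deriv (f^[n]) x)|) :=
    fun n => (isCompact_range ((hcont n).comp continuous_subtype_val)).bddAbove
  -- the sup dominates the value at any real point (via periodicity)
  have hsup_ge : ∀ (n : ℕ) (y : ℝ),
      |Real.log (deriv (f^[n]) y)| ≤ ⨆ x : Set.Icc (0:ℝ) 1, |Real.log (deriv (f^[n]) x)| := by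
    intro n y
    have hy : deriv (f^[n]) y = deriv (f^[n]) (Int.fract y) := by
      have := hderPer n (Int.fract y) ⌊y⌋
      rw [Int.fract_add_floor] at this
      exact this
    rw [hy]
    exact le_ciSup (hbdd n) ⟨Int.fract y, ⟨Int.fract_nonneg y, (Int.fract_lt_one y).le⟩⟩
  -- notation
  set lam := deriv (f^[q]) x₀ with hlam
  set L := |Real.log lam| with hLdef
  have hL : 0 ≤ L := abs_nonneg _
  -- periodic orbit formulas
  have hA : ∀ k : ℕ, f^[q * k] x₀ = x₀ + ((k : ℤ) * p : ℤ) := by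
    intro k
    induction k with
    | zero => simp
    | succ k ih =>
        have hqk : q * (k + 1) = q + q * k := by ring
        rw [hqk, Function.iterate_add_apply, ih, hliftZ q x₀ ((k : ℤ) * p), hper]
        push_cast; ring
  have hB : ∀ k : ℕ, deriv (f^[q * k]) x₀ = lam ^ k := by
    intro k
    induction k with
    | zero => simp [deriv_iter_aux f hdiff 0]
    | succ k ih =>
        have hqk : q * (k + 1) = q + q * k := by ring
        rw [hqk, deriv_iter_add_aux f hdiff, hA k, hderPer q x₀ ((k : ℤ) * p), ih]
        ring
  -- constant C bounding the remainder terms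
  have hqne : (Finset.range q).Nonempty := ⟨0, Finset.mem_range.2 hq⟩
  set C := (Finset.range q).sup' hqne (fun r => |Real.log (deriv (f^[r]) x₀)|) with hCdef
  have hC0 : 0 ≤ C := by
    refine le_trans ?_ (Finset.le_sup' (fun r => |Real.log (deriv (f^[r]) x₀)|)
      (Finset.mem_range.2 hq))
    exact abs_nonneg _
  -- key lower bound at x₀
  have hkey : ∀ n : ℕ, (↑(n / q) : ℝ) * L - C ≤ |Real.log (deriv (f^[n]) x₀)| := by
    intro n
    have hsplit : deriv (f^[n]) x₀ = deriv (f^[n % q]) x₀ * lam ^ (n / q) := by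
      have hn : n % q + q * (n / q) = n := Nat.mod_add_div n q
      calc deriv (f^[n]) x₀ = deriv (f^[n % q + q * (n / q)]) x₀ := by rw [hn]
        _ = deriv (f^[n % q]) (f^[q * (n / q)] x₀) * deriv (f^[q * (n / q)]) x₀ :=
            deriv_iter_add_aux f hdiff _ _ _
        _ = deriv (f^[n % q]) x₀ * lam ^ (n / q) := by
            rw [hA, hderPer (n % q) x₀, hB]
    have hlog : Real.log (deriv (f^[n]) x₀)
        = Real.log (deriv (f^[n % q]) x₀) + (↑(n / q) : ℝ) * Real.log lam := by
      rw [hsplit, Real.log_mul (hDpos _ _).ne' (pow_ne_zero _ (hDpos q x₀).ne'),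
        Real.log_pow]
    have hCb : |Real.log (deriv (f^[n % q]) x₀)| ≤ C :=
      Finset.le_sup' (fun r => |Real.log (deriv (f^[r]) x₀)|)
        (Finset.mem_range.2 (Nat.mod_lt n hq))
    have habs : (↑(n / q) : ℝ) * L
        ≤ |Real.log (deriv (f^[n]) x₀)| + |Real.log (deriv (f^[n % q]) x₀)| := by
      have h1 : (↑(n / q) : ℝ) * L = |(↑(n / q) : ℝ) * Real.log lam| := by
        rw [abs_mul, Nat.abs_cast, hLdef]
      rw [h1]
      have := abs_add_le (Real.log (deriv (f^[n]) x₀)) (-Real.log (deriv (f^[n % q]) x₀))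
      rw [abs_neg] at this
      have h2 : Real.log (deriv (f^[n]) x₀) - Real.log (deriv (f^[n % q]) x₀)
          = (↑(n / q) : ℝ) * Real.log lam := by rw [hlog]; ring
      calc |(↑(n / q) : ℝ) * Real.log lam|
          = |Real.log (deriv (f^[n]) x₀) + -Real.log (deriv (f^[n % q]) x₀)| := by
            rw [← h2]; ring_nf
        _ ≤ _ := this
    linarith
  -- the comparison sequence
  set M := L + C with hMdef
  have hev : ∀ᶠ n : ℕ in Filter.atTop,
      L / (q : ℝ) - M / n ≤
        (1 / (n : ℝ)) * ⨆ x : Set.Icc (0:ℝ) 1, |Real.log (deriv (f^[n]) x)| := by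
    filter_upwards [Filter.eventually_ge_atTop 1] with n hn
    have hn0 : (0 : ℝ) < n := by exact_mod_cast hn
    set k := n / q with hkdef
    have hnlt : (n : ℝ) < (q : ℝ) * ((k : ℝ) + 1) := by
      have : n < q * (k + 1) := by
        have h1 : q * k + n % q = n := Nat.div_add_mod n q
        have h2 : n % q < q := Nat.mod_lt n hq
        have h3 : q * (k + 1) = q * k + q := by ring
        omega
      exact_mod_cast this
    have step1 : L / (q : ℝ) - M / n ≤ (1 / (n : ℝ)) * ((k : ℝ) * L - C) := by
      have h2 : L / (q : ℝ) ≤ ((k : ℝ) + 1) * L / n := by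
        rw [div_le_div_iff₀ hq0 hn0]
        nlinarith [mul_le_mul_of_nonneg_right hnlt.le hL]
      have h3 : L / (q : ℝ) - M / n ≤ ((k : ℝ) + 1) * L / n - M / n :=
        sub_le_sub_right h2 _
      have h4 : ((k : ℝ) + 1) * L / n - M / n = (1 / (n : ℝ)) * ((k : ℝ) * L - C) := by
        rw [hMdef]; field_simp; ring
      linarith
    have step2 : (1 / (n : ℝ)) * ((k : ℝ) * L - C)
        ≤ (1 / (n : ℝ)) * |Real.log (deriv (f^[n]) x₀)| := by
      apply mul_le_mul_of_nonneg_left (hkey n) (by positivity)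
    have step3 : (1 / (n : ℝ)) * |Real.log (deriv (f^[n]) x₀)|
        ≤ (1 / (n : ℝ)) * ⨆ x : Set.Icc (0:ℝ) 1, |Real.log (deriv (f^[n]) x)| := by
      apply mul_le_mul_of_nonneg_left (hsup_ge n x₀) (by positivity)
    linarith
  -- the comparison sequence tends to L/q
  have hbt : Filter.Tendsto (fun n : ℕ => L / (q : ℝ) - M / n) Filter.atTop
      (nhds (L / (q : ℝ))) := by
    have hc : Filter.Tendsto (fun _ : ℕ => L / (q : ℝ)) Filter.atTop (nhds (L / (q : ℝ))) :=
      tendsto_const_nhds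
    simpa using hc.sub (tendsto_const_div_atTop_nhds_zero_nat M)
  -- global upper bound K for coboundedness
  set K := ⨆ x : Set.Icc (0:ℝ) 1, |Real.log (deriv (f^[1]) x)| with hKdef
  have hK0 : 0 ≤ K := le_trans (abs_nonneg _) (hsup_ge 1 0)
  have haK : ∀ n : ℕ, (1 / (n : ℝ)) * (⨆ x : Set.Icc (0:ℝ) 1, |Real.log (deriv (f^[n]) x)|)
      ≤ K := by
    intro n
    rcases Nat.eq_zero_or_pos n with rfl | hn
    · simp [hK0]
    have hn0 : (0 : ℝ) < n := by exact_mod_cast hn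
    have hpt : ∀ y : ℝ, |Real.log (deriv (f^[n]) y)| ≤ (n : ℝ) * K := by
      intro y
      have hlogsum : Real.log (deriv (f^[n]) y)
          = ∑ j ∈ Finset.range n, Real.log (deriv f (f^[j] y)) := by
        rw [deriv_iter_aux f hdiff, Real.log_prod (fun j _ => (hpos _).ne')]
      rw [hlogsum]
      calc |∑ j ∈ Finset.range n, Real.log (deriv f (f^[j] y))|
          ≤ ∑ j ∈ Finset.range n, |Real.log (deriv f (f^[j] y))| :=
            Finset.abs_sum_le_sum_abs _ _
        _ ≤ ∑ _j ∈ Finset.range n, K := by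
            apply Finset.sum_le_sum
            intro j _
            have := hsup_ge 1 (f^[j] y)
            simpa [hKdef] using this
        _ = (n : ℝ) * K := by simp [mul_comm]
    have hs : (⨆ x : Set.Icc (0:ℝ) 1, |Real.log (deriv (f^[n]) x)|) ≤ (n : ℝ) * K :=
      ciSup_le fun x => hpt x
    calc (1 / (n : ℝ)) * (⨆ x : Set.Icc (0:ℝ) 1, |Real.log (deriv (f^[n]) x)|)
        ≤ (1 / (n : ℝ)) * ((n : ℝ) * K) := by
          apply mul_le_mul_of_nonneg_left hs (by positivity)
      _ = K := by field_simp
  -- conclude via liminf monotonicity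
  have hlim := Filter.liminf_le_liminf hev
    (hbt.isBoundedUnder_ge)
    ((Filter.isBoundedUnder_of ⟨K, fun n => haK n⟩).isCoboundedUnder_ge)
  rw [hbt.liminf_eq] at hlim
  calc (1 / (q : ℝ)) * L = L / (q : ℝ) := by ring
    _ ≤ _ := hlim
end

section
/- Let f : ℝ → ℝ be continuously differentiable with deriv f x > 0 for all x, and let a < b be real numbers with f a = a, f b = b, deriv f a = 1, deriv f b = 1, and f x ≠ x for all x ∈ (a,b). Then (1/n) · sup_{x ∈ [a,b]} |log(deriv (f^[n]) x)| tends to 0 as n → ∞. -/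
open Filter Topology

/-- Telescoping lower bound: if each step of `u` between `k1` and `k2` is at least `m`,
then `u k2 - u k1` is at least `(k2 - k1) * m`. -/
lemma sublinear_gap_aux (u : ℕ → ℝ) (m : ℝ) (k1 : ℕ) :
    ∀ k2, k1 ≤ k2 → (∀ j, k1 ≤ j → j < k2 → m ≤ u (j + 1) - u j) →
      ((k2 - k1 : ℕ) : ℝ) * m ≤ u k2 - u k1 := by
  intro k2 hk
  induction k2, hk using Nat.le_induction with
  | base => intro _; simp
  | succ n hn ih =>
    intro hstep
    have h1 : ((n - k1 : ℕ) : ℝ) * m ≤ u n - u k1 :=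
      ih (fun j hj hj' => hstep j hj (hj'.trans (Nat.lt_succ_self n)))
    have h2 : m ≤ u (n + 1) - u n := hstep n hn (Nat.lt_succ_self n)
    have hcast : ((n + 1 - k1 : ℕ) : ℝ) = ((n - k1 : ℕ) : ℝ) + 1 := by
      rw [Nat.sub_add_comm hn]; push_cast; ring
    rw [hcast]
    nlinarith

/-- Key claim of Case II of the proof of Theorem 1: on an interval whose endpoints are
parabolic fixed points and with no interior fixed point, log-derivatives of iterates
grow sublinearly. -/
theorem sublinear_growth_on_parabolic_interval
    (f : ℝ → ℝ) (hf : ContDiff ℝ 1 f)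
    (hpos : ∀ x : ℝ, 0 < deriv f x)
    (a b : ℝ) (hab : a < b)
    (hfa : f a = a) (hfb : f b = b)
    (hfa' : deriv f a = 1) (hfb' : deriv f b = 1)
    (hnofix : ∀ x ∈ Set.Ioo a b, f x ≠ x) :
    Filter.Tendsto
      (fun n : ℕ => (1 / (n : ℝ)) * ⨆ x : Set.Icc a b, |Real.log (deriv (f^[n]) x)|)
      Filter.atTop (𝓝 0) := by
  have hdiff : Differentiable ℝ f := hf.differentiable one_ne_zero
  have hmono : StrictMono f := strictMono_of_deriv_pos hpos
  -- the orbit of any point of [a,b] stays in [a,b]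
  have horb : ∀ x ∈ Set.Icc a b, ∀ k, f^[k] x ∈ Set.Icc a b := by
    intro x hx k
    induction k with
    | zero => simpa using hx
    | succ k ih =>
      rw [Function.iterate_succ_apply']
      exact ⟨hfa ▸ hmono.monotone ih.1, hfb ▸ hmono.monotone ih.2⟩
  -- derivative of iterates
  have hder : ∀ (x : ℝ) (n : ℕ),
      HasDerivAt (f^[n]) (∏ k ∈ Finset.range n, deriv f (f^[k] x)) x := by
    intro x n
    induction n with
    | zero => simpa using hasDerivAt_id x
    | succ n ih =>
      rw [Function.iterate_succ', Finset.prod_range_succ, mul_comm]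
      exact ((hdiff (f^[n] x)).hasDerivAt).comp x ih
  have hderiv_eq : ∀ (x : ℝ) (n : ℕ),
      deriv (f^[n]) x = ∏ k ∈ Finset.range n, deriv f (f^[k] x) :=
    fun x n => (hder x n).deriv
  -- orbits are monotone or antitone
  have horbmono : ∀ x : ℝ, Monotone (fun k => f^[k] x) ∨ Antitone (fun k => f^[k] x) := by
    intro x
    rcases le_total x (f x) with h | h
    · left
      refine monotone_nat_of_le_succ fun k => ?_
      rw [Function.iterate_succ_apply]
      exact (hmono.monotone.iterate k) h
    · right
      refine antitone_nat_of_succ_le fun k => ?_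
      rw [Function.iterate_succ_apply]
      exact (hmono.monotone.iterate k) h
  set g : ℝ → ℝ := fun y => Real.log (deriv f y) with hg
  have hg_cont : Continuous g := (hf.continuous_deriv le_rfl).log fun x => (hpos x).ne'
  have hga : g a = 0 := by simp [hg, hfa']
  have hgb : g b = 0 := by simp [hg, hfb']
  -- global bound on |g| on [a,b]
  obtain ⟨M, hM⟩ : ∃ M, ∀ y ∈ Set.Icc a b, |g y| ≤ M := by
    obtain ⟨C, hC⟩ := isCompact_Icc.exists_bound_of_continuousOn (s := Set.Icc a b)
      hg_cont.continuousOn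
    exact ⟨C, fun y hy => hC y hy⟩
  have hM0 : 0 ≤ M := le_trans (abs_nonneg _) (hM a ⟨le_rfl, hab.le⟩)
  haveI : Nonempty (Set.Icc a b) := ⟨⟨a, le_rfl, hab.le⟩⟩
  rw [Metric.tendsto_atTop]
  intro ε hε
  have hε2 : 0 < ε / 2 := half_pos hε
  -- δ near a
  have hA : ∀ᶠ y in 𝓝 a, |g y| < ε / 2 := by
    have := hg_cont.tendsto a
    rw [hga] at this
    have := this (Metric.ball_mem_nhds 0 hε2)
    filter_upwards [this] with y hy
    simpa [Real.dist_eq] using hy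
  have hB : ∀ᶠ y in 𝓝 b, |g y| < ε / 2 := by
    have := hg_cont.tendsto b
    rw [hgb] at this
    have := this (Metric.ball_mem_nhds 0 hε2)
    filter_upwards [this] with y hy
    simpa [Real.dist_eq] using hy
  obtain ⟨δ₁, hδ₁, hδ₁'⟩ := Metric.eventually_nhds_iff.1 hA
  obtain ⟨δ₂, hδ₂, hδ₂'⟩ := Metric.eventually_nhds_iff.1 hB
  set δ : ℝ := min (min (δ₁ / 2) (δ₂ / 2)) ((b - a) / 2) with hδdef
  have hδpos : 0 < δ := lt_min (lt_min (half_pos hδ₁) (half_pos hδ₂)) (half_pos (by linarith))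
  set c : ℝ := a + δ with hcdef
  set d : ℝ := b - δ with hddef
  have hcd : c ≤ d := by
    have : δ ≤ (b - a) / 2 := min_le_right _ _
    simp only [hcdef, hddef]; linarith
  have hac : a < c := by simp only [hcdef]; linarith
  have hdb : d < b := by simp only [hddef]; linarith
  have hsub : Set.Icc c d ⊆ Set.Ioo a b := fun y hy => ⟨lt_of_lt_of_le hac hy.1, lt_of_le_of_lt hy.2 hdb⟩
  -- near-boundary estimate
  have hnear : ∀ y ∈ Set.Icc a b, y ∉ Set.Icc c d → |g y| < ε / 2 := by
    intro y hy hyn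
    rw [Set.mem_Icc, not_and_or, not_le, not_le] at hyn
    rcases hyn with h | h
    · have hyc : y < c := h
      have : dist y a < δ₁ := by
        rw [Real.dist_eq, abs_of_nonneg (by linarith [hy.1])]
        have h1 : δ ≤ δ₁ / 2 := le_trans (min_le_left _ _) (min_le_left _ _)
        have : y - a < δ := by simp only [hcdef] at hyc; linarith
        linarith
      exact hδ₁' this
    · have hyd : d < y := h
      have : dist y b < δ₂ := by
        rw [Real.dist_eq, abs_of_nonpos (by linarith [hy.2])]
        have h1 : δ ≤ δ₂ / 2 := le_trans (min_le_left _ _) (min_le_right _ _)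
        have : b - y < δ := by simp only [hddef] at hyd; linarith
        linarith
      exact hδ₂' this
  -- minimal displacement on the middle interval
  obtain ⟨y₀, hy₀, hy₀min⟩ := isCompact_Icc.exists_isMinOn (Set.nonempty_Icc.2 hcd)
    (f := fun y => |f y - y|) ((hdiff.continuous.sub continuous_id).abs.continuousOn)
  set m : ℝ := |f y₀ - y₀| with hmdef
  have hm0 : 0 < m := abs_pos.2 (sub_ne_zero.2 (hnofix y₀ (hsub hy₀)))
  have hmmin : ∀ y ∈ Set.Icc c d, m ≤ |f y - y| := fun y hy => hy₀min hy
  set B : ℕ := ⌈(d - c) / m⌉₊ with hBdef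
  -- the number of visits to [c,d] is at most B + 1
  have hvisits : ∀ x ∈ Set.Icc a b, ∀ n : ℕ,
      ((Finset.range n).filter (fun k => f^[k] x ∈ Set.Icc c d)).card ≤ B + 1 := by
    intro x hx n
    set S := (Finset.range n).filter (fun k => f^[k] x ∈ Set.Icc c d) with hS
    rcases S.eq_empty_or_nonempty with h | h
    · simp [h]
    · set k0 := S.min' h with hk0
      have hk0S : k0 ∈ S := S.min'_mem h
      have hk0m : f^[k0] x ∈ Set.Icc c d := (Finset.mem_filter.1 hk0S).2
      have hsubset : S ⊆ Finset.Icc k0 (k0 + B) := by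
        intro k hk
        have hk1 : k0 ≤ k := S.min'_le k hk
        have hkm : f^[k] x ∈ Set.Icc c d := (Finset.mem_filter.1 hk).2
        have key : ((k - k0 : ℕ) : ℝ) * m ≤ d - c := by
          rcases horbmono x with hmo | hmo
          · have := sublinear_gap_aux (fun j => f^[j] x) m k0 k hk1 ?_
            · have h1 : f^[k] x ≤ d := hkm.2
              have h2 : c ≤ f^[k0] x := hk0m.1
              linarith
            · intro j hj hj'
              have hjm : f^[j] x ∈ Set.Icc c d :=
                ⟨le_trans hk0m.1 (hmo hj), le_trans (hmo hj'.le) hkm.2⟩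
              have hstep : f^[j] x ≤ f^[j+1] x := hmo (Nat.le_succ j)
              have hmm : m ≤ |f (f^[j] x) - f^[j] x| := hmmin _ hjm
              rw [Function.iterate_succ_apply'] at hstep
              rw [abs_of_nonneg (by linarith)] at hmm
              show m ≤ f^[j+1] x - f^[j] x
              rw [Function.iterate_succ_apply']
              linarith
          · have := sublinear_gap_aux (fun j => -(f^[j] x)) m k0 k hk1 ?_
            · have h1 : c ≤ f^[k] x := hkm.1
              have h2 : f^[k0] x ≤ d := hk0m.2
              linarith
            · intro j hj hj'
              have hjm : f^[j] x ∈ Set.Icc c d :=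
                ⟨le_trans hkm.1 (hmo hj'.le), le_trans (hmo hj) hk0m.2⟩
              have hstep : f^[j+1] x ≤ f^[j] x := hmo (Nat.le_succ j)
              have hmm : m ≤ |f (f^[j] x) - f^[j] x| := hmmin _ hjm
              rw [Function.iterate_succ_apply'] at hstep
              rw [abs_of_nonpos (by linarith)] at hmm
              show m ≤ -(f^[j+1] x) - -(f^[j] x)
              rw [Function.iterate_succ_apply']
              linarith
        have : ((k - k0 : ℕ) : ℝ) ≤ (d - c) / m := by
          rw [le_div_iff₀ hm0]; exact key
        have hle : ((k - k0 : ℕ) : ℝ) ≤ (B : ℝ) := this.trans (Nat.le_ceil _)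
        have : k - k0 ≤ B := Nat.cast_le.1 hle
        exact Finset.mem_Icc.2 ⟨hk1, by omega⟩
      calc S.card ≤ (Finset.Icc k0 (k0 + B)).card := Finset.card_le_card hsubset
        _ = B + 1 := by rw [Nat.card_Icc]; omega
  -- main pointwise bound
  have hmain : ∀ n : ℕ, ∀ x ∈ Set.Icc a b,
      |Real.log (deriv (f^[n]) x)| ≤ (n : ℝ) * (ε / 2) + M * (B + 1) := by
    intro n x hx
    rw [hderiv_eq, Real.log_prod (fun k _ => (hpos _).ne')]
    calc |∑ k ∈ Finset.range n, Real.log (deriv f (f^[k] x))|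
        ≤ ∑ k ∈ Finset.range n, |g (f^[k] x)| := Finset.abs_sum_le_sum_abs _ _
      _ = (∑ k ∈ (Finset.range n).filter (fun k => f^[k] x ∈ Set.Icc c d), |g (f^[k] x)|)
          + ∑ k ∈ (Finset.range n).filter (fun k => ¬ f^[k] x ∈ Set.Icc c d), |g (f^[k] x)| :=
          (Finset.sum_filter_add_sum_filter_not _ _ _).symm
      _ ≤ (n : ℝ) * (ε / 2) + M * (B + 1) := by
          have h1 : (∑ k ∈ (Finset.range n).filter (fun k => f^[k] x ∈ Set.Icc c d),
              |g (f^[k] x)|) ≤ M * (B + 1) := by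
            calc (∑ k ∈ (Finset.range n).filter (fun k => f^[k] x ∈ Set.Icc c d), |g (f^[k] x)|)
                ≤ ((Finset.range n).filter (fun k => f^[k] x ∈ Set.Icc c d)).card • M :=
                  Finset.sum_le_card_nsmul _ _ _ (fun k _ => hM _ (horb x hx k))
              _ ≤ (B + 1 : ℕ) • M := by
                  exact nsmul_le_nsmul_left hM0 (hvisits x hx n)
              _ = M * (B + 1) := by push_cast [nsmul_eq_mul]; ring
          have h2 : (∑ k ∈ (Finset.range n).filter (fun k => ¬ f^[k] x ∈ Set.Icc c d),
              |g (f^[k] x)|) ≤ (n : ℝ) * (ε / 2) := by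
            calc (∑ k ∈ (Finset.range n).filter (fun k => ¬ f^[k] x ∈ Set.Icc c d), |g (f^[k] x)|)
                ≤ ((Finset.range n).filter (fun k => ¬ f^[k] x ∈ Set.Icc c d)).card • (ε / 2) :=
                  Finset.sum_le_card_nsmul _ _ _
                    (fun k hk => (hnear _ (horb x hx k) (Finset.mem_filter.1 hk).2).le)
              _ ≤ n • (ε / 2) := nsmul_le_nsmul_left hε2.le
                  ((Finset.card_filter_le _ _).trans (by simp))
              _ = (n : ℝ) * (ε / 2) := by rw [nsmul_eq_mul]
          linarith
  -- choose N
  set C : ℝ := M * (B + 1) with hCdef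
  have hC0 : 0 ≤ C := by positivity
  obtain ⟨N, hN⟩ : ∃ N : ℕ, 1 ≤ N ∧ C / N < ε / 2 := by
    obtain ⟨N, hN⟩ := exists_nat_gt (C / (ε / 2))
    refine ⟨N + 1, Nat.le_add_left _ _, ?_⟩
    have hN1 : (0 : ℝ) < ((N + 1 : ℕ) : ℝ) := by positivity
    rw [div_lt_iff₀ hN1]
    have h3 : C < (N : ℝ) * (ε / 2) := by
      rw [div_lt_iff₀ hε2] at hN; linarith
    push_cast
    nlinarith [hε2.le, Nat.cast_nonneg (α := ℝ) N]
  refine ⟨N, fun n hn => ?_⟩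
  have hn1 : 1 ≤ n := hN.1.trans hn
  have hnpos : (0 : ℝ) < n := by exact_mod_cast hn1
  have hsup_le : (⨆ x : Set.Icc a b, |Real.log (deriv (f^[n]) x)|)
      ≤ (n : ℝ) * (ε / 2) + C := ciSup_le fun x => hmain n x x.2
  have hsup_nn : 0 ≤ ⨆ x : Set.Icc a b, |Real.log (deriv (f^[n]) x)| :=
    Real.iSup_nonneg fun x => abs_nonneg _
  have hval_nn : 0 ≤ (1 / (n : ℝ)) * ⨆ x : Set.Icc a b, |Real.log (deriv (f^[n]) x)| := by
    positivity
  rw [Real.dist_eq, sub_zero, abs_of_nonneg hval_nn]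
  have : (1 / (n : ℝ)) * (⨆ x : Set.Icc a b, |Real.log (deriv (f^[n]) x)|)
      ≤ (1 / (n : ℝ)) * ((n : ℝ) * (ε / 2) + C) :=
    mul_le_mul_of_nonneg_left hsup_le (by positivity)
  have heq : (1 / (n : ℝ)) * ((n : ℝ) * (ε / 2) + C) = ε / 2 + C / n := by
    field_simp
  have hCn : C / n < ε / 2 := by
    have hNpos : (0 : ℝ) < N := by exact_mod_cast hN.1
    have h4 : C / (n : ℝ) ≤ C / (N : ℝ) :=
      div_le_div_of_nonneg_left hC0 hNpos (by exact_mod_cast hn)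
    exact lt_of_le_of_lt h4 hN.2
  calc (1 / (n : ℝ)) * (⨆ x : Set.Icc a b, |Real.log (deriv (f^[n]) x)|)
      ≤ ε / 2 + C / n := heq ▸ this
    _ < ε := by linarith
end

section
/- Let f : ℝ → ℝ be a C^1 circle lift. Suppose f has a fixed point (there exists x with f x = x) and f has no hyperbolic fixed point (for every x, f x = x implies deriv f x = 1). Then (1/n) · sup_{x ∈ [0,1]} |log(deriv (f^[n]) x)| tends to 0 as n → ∞. -/
open Filter Topology

private lemma count_bound {u : ℕ → ℝ} {n : ℕ} {c : ℝ} (hc : 0 < c)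
    (hmono : ∀ i, u i ≤ u (i + 1)) (hbd : u n - u 0 ≤ 1)
    {B : Finset ℕ} (hB : B ⊆ Finset.range n)
    (hstep : ∀ i ∈ B, c ≤ u (i + 1) - u i) : (B.card : ℝ) ≤ 1 / c := by
  have h1 : (B.card : ℝ) * c ≤ ∑ i ∈ B, (u (i + 1) - u i) := by
    calc (B.card : ℝ) * c = ∑ _i ∈ B, c := by rw [Finset.sum_const, nsmul_eq_mul]
    _ ≤ _ := Finset.sum_le_sum hstep
  have h2 : ∑ i ∈ B, (u (i + 1) - u i) ≤ ∑ i ∈ Finset.range n, (u (i + 1) - u i) :=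
    Finset.sum_le_sum_of_subset_of_nonneg hB (fun i _ _ => sub_nonneg.2 (hmono i))
  rw [Finset.sum_range_sub] at h2
  rw [le_div_iff₀ hc]
  linarith

/-- Case II of Theorem 1: a circle diffeomorphism with rotation number 0 and no
hyperbolic fixed point is C¹-distorted. -/
theorem c1_distorted_of_no_hyperbolic_fixed_point
    (f : ℝ → ℝ) (hf : ContDiff ℝ 1 f)
    (hlift : ∀ x : ℝ, f (x + 1) = f x + 1)
    (hpos : ∀ x : ℝ, 0 < deriv f x)
    (hfix : ∃ x : ℝ, f x = x)
    (hnohyp : ∀ x : ℝ, f x = x → deriv f x = 1) :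
    Filter.Tendsto
      (fun n : ℕ => (1 / (n : ℝ)) * ⨆ x : Set.Icc (0:ℝ) 1, |Real.log (deriv (f^[n]) x)|)
      Filter.atTop (𝓝 0) := by
  classical
  have hd : Differentiable ℝ f := hf.differentiable one_ne_zero
  have hmono : StrictMono f := strictMono_of_deriv_pos hpos
  -- integer lift property
  have hlift_int : ∀ (k : ℤ) (x : ℝ), f (x + k) = f x + k := by
    intro k
    induction k using Int.induction_on with
    | zero => simp
    | succ k ih =>
      intro x
      have h1 := hlift (x + (k : ℝ))
      have h2 := ih x
      push_cast at h2 ⊢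
      ring_nf at h1 h2 ⊢
      linarith
    | pred k ih =>
      intro x
      have h1 := hlift (x + (-(k : ℝ) - 1))
      rw [show x + (-(k : ℝ) - 1) + 1 = x + -(k:ℝ) by ring] at h1
      have h2 := ih x
      push_cast at h2 ⊢
      ring_nf at h1 h2 ⊢
      linarith
  -- the derivative is 1-periodic
  have hderiv_per : ∀ x : ℝ, deriv f (x + 1) = deriv f x := by
    intro x
    have h : (fun y => f (y + 1)) = fun y => f y + 1 := funext hlift
    have h2 := deriv_comp_add_const f 1 x
    rw [h] at h2
    simpa using h2.symm
  have hderiv_int : ∀ (k : ℤ) (x : ℝ), deriv f (x + k) = deriv f x := by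
    intro k
    induction k using Int.induction_on with
    | zero => simp
    | succ k ih =>
      intro x
      have h1 := hderiv_per (x + (k : ℝ))
      have h2 := ih x
      push_cast at h2 ⊢
      ring_nf at h1 h2 ⊢
      linarith
    | pred k ih =>
      intro x
      have h1 := hderiv_per (x + (-(k : ℝ) - 1))
      rw [show x + (-(k : ℝ) - 1) + 1 = x + -(k:ℝ) by ring] at h1
      have h2 := ih x
      push_cast at h2 ⊢
      ring_nf at h1 h2 ⊢
      linarith
  -- the function g = log (deriv f)
  set g : ℝ → ℝ := fun y => Real.log (deriv f y) with hgdef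
  have hg_cont : Continuous g := (hf.continuous_deriv le_rfl).log (fun x => (hpos x).ne')
  have hg_int : ∀ (k : ℤ) (x : ℝ), g (x + k) = g x := fun k x => by
    simp only [hgdef, hderiv_int k x]
  -- uniform bound on |g|
  obtain ⟨M0, hM0⟩ := (isCompact_Icc (a := (0:ℝ)) (b := 1)).exists_bound_of_continuousOn
    hg_cont.continuousOn
  set M : ℝ := max M0 0 with hMdef
  have hMnn : 0 ≤ M := le_max_right _ _
  have hM : ∀ x : ℝ, |g x| ≤ M := by
    intro x
    have h1 : g (Int.fract x) = g x := by
      rw [← hg_int ⌊x⌋ (Int.fract x)]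
      congr 1
      rw [Int.fract]; ring
    rw [← h1]
    refine le_trans ?_ (le_max_left _ _)
    have := hM0 (Int.fract x) ⟨Int.fract_nonneg x, (Int.fract_lt_one x).le⟩
    simpa [Real.norm_eq_abs] using this
  -- derivative of iterates
  have hd_iter : ∀ n : ℕ, Differentiable ℝ (f^[n]) := fun n => hd.iterate n
  have hderiv_iter : ∀ (n : ℕ) (x : ℝ),
      deriv (f^[n]) x = ∏ i ∈ Finset.range n, deriv f (f^[i] x) := by
    intro n
    induction n with
    | zero => intro x; simp
    | succ n ih =>
      intro x
      rw [Function.iterate_succ']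
      rw [deriv_comp x (hd _) ((hd_iter n) x)]
      rw [Finset.prod_range_succ, ih x, mul_comm]
  have hlog_iter : ∀ (n : ℕ) (x : ℝ),
      Real.log (deriv (f^[n]) x) = ∑ i ∈ Finset.range n, g (f^[i] x) := by
    intro n x
    rw [hderiv_iter n x, Real.log_prod (fun i _ => (hpos _).ne')]
  obtain ⟨x0, hx0⟩ := hfix
  have hfix_shift : ∀ (p : ℝ), f p = p → ∀ k : ℤ, f (p + k) = p + k := by
    intro p hp k; rw [hlift_int k p, hp]
  -- the key estimate
  have key : ∀ ε : ℝ, 0 < ε → ∃ C : ℝ, 0 ≤ C ∧ ∀ (n : ℕ), ∀ x ∈ Set.Icc (0:ℝ) 1,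
      |Real.log (deriv (f^[n]) x)| ≤ C + ε * n := by
    intro ε hε
    -- Step A: near fixed points |g| is small
    obtain ⟨δ0, hδ0, hδ⟩ := Metric.uniformContinuousOn_iff.mp
      ((isCompact_Icc (a := (-1:ℝ)) (b := 2)).uniformContinuousOn_of_continuous
        hg_cont.continuousOn) ε hε
    set δ : ℝ := min δ0 1 with hδdef
    have hδpos : 0 < δ := lt_min hδ0 one_pos
    have hδ1 : δ ≤ 1 := min_le_right _ _
    have stepA : ∀ y p : ℝ, f p = p → |y - p| < δ → |g y| < ε := by
      intro y p hp hyp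
      set k : ℤ := -⌊p⌋ with hk
      have hfl := Int.floor_le p
      have hfl2 := Int.lt_floor_add_one p
      have hq0 : (0:ℝ) ≤ p + (k:ℝ) := by
        simp only [hk]; push_cast; linarith
      have hq1 : p + (k:ℝ) < 1 := by
        simp only [hk]; push_cast; linarith
      have hfixq : f (p + (k:ℝ)) = p + (k:ℝ) := hfix_shift p hp k
      have hgq : g (p + (k:ℝ)) = 0 := by
        simp only [hgdef, hnohyp _ hfixq, Real.log_one]
      have hmemq : p + (k:ℝ) ∈ Set.Icc (-1:ℝ) 2 := ⟨by linarith, by linarith⟩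
      have habs := abs_le.mp (le_trans hyp.le hδ1)
      have hmemy : y + (k:ℝ) ∈ Set.Icc (-1:ℝ) 2 := by
        constructor
        · have : y + (k:ℝ) = (p + (k:ℝ)) + (y - p) := by ring
          rw [this]; linarith [habs.1]
        · have : y + (k:ℝ) = (p + (k:ℝ)) + (y - p) := by ring
          rw [this]; linarith [habs.2]
      have hdist : dist (y + (k:ℝ)) (p + (k:ℝ)) < δ0 := by
        rw [Real.dist_eq, show y + (k:ℝ) - (p + (k:ℝ)) = y - p by ring]
        exact lt_of_lt_of_le hyp (min_le_left _ _)
      have hres := hδ (y + (k:ℝ)) hmemy (p + (k:ℝ)) hmemq hdist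
      rw [Real.dist_eq, hgq, sub_zero, hg_int k y] at hres
      exact hres
    -- Step B: away from fixed points, f moves points by at least c
    set K : Set ℝ := {y | y ∈ Set.Icc (-1:ℝ) 2 ∧ ∀ p : ℝ, f p = p → δ ≤ |y - p|} with hKdef
    have hKsub : K ⊆ Set.Icc (-1:ℝ) 2 := fun y hy => hy.1
    have hKclosed : IsClosed K := by
      have hKeq : K = Set.Icc (-1:ℝ) 2 ∩ ⋂ p ∈ {p : ℝ | f p = p}, {y : ℝ | δ ≤ |y - p|} := by
        ext y
        simp only [hKdef, Set.mem_inter_iff, Set.mem_setOf_eq, Set.mem_iInter]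
      rw [hKeq]
      refine isClosed_Icc.inter (isClosed_biInter fun p hp => ?_)
      exact isClosed_le continuous_const (continuous_id.sub continuous_const).abs
    have hKcpt : IsCompact K := isCompact_Icc.of_isClosed_subset hKclosed hKsub
    obtain ⟨c, hc, hcK⟩ : ∃ c : ℝ, 0 < c ∧ ∀ y ∈ K, c ≤ |f y - y| := by
      rcases Set.eq_empty_or_nonempty K with hKe | hKne
      · exact ⟨1, one_pos, fun y hy => absurd (hKe ▸ hy) (Set.notMem_empty y)⟩
      · obtain ⟨y0, hy0K, hy0min⟩ := hKcpt.exists_isMinOn hKne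
          ((hf.continuous.sub continuous_id).abs).continuousOn
        refine ⟨|f y0 - y0|, ?_, fun y hy => hy0min hy⟩
        rcases eq_or_lt_of_le (abs_nonneg (f y0 - y0)) with h | h
        · exfalso
          have hfy0 : f y0 = y0 := by
            have h' := h.symm
            rw [abs_eq_zero, sub_eq_zero] at h'
            exact h'
          have := hy0K.2 y0 hfy0
          simp only [sub_self, abs_zero] at this
          linarith
        · exact h
    refine ⟨M * (1 / c), by positivity, ?_⟩
    intro n x hx
    rw [hlog_iter n x]
    set u : ℕ → ℝ := fun i => f^[i] x with hudef
    set B : Finset ℕ := (Finset.range n).filter (fun i => ε ≤ |g (u i)|) with hBdef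
    have hBsub : B ⊆ Finset.range n := Finset.filter_subset _ _
    have hBfar : ∀ i ∈ B, ∀ p : ℝ, f p = p → δ ≤ |u i - p| := by
      intro i hi p hp
      by_contra h
      push_neg at h
      exact absurd (stepA (u i) p hp h) (not_lt.2 (Finset.mem_filter.mp hi).2)
    have husucc : ∀ i, u (i+1) = f (u i) := fun i => Function.iterate_succ_apply' f i x
    have hu0 : u 0 = x := rfl
    -- bound on the cardinality of B
    have hcard : (B.card : ℝ) ≤ 1/c := by
      rcases lt_trichotomy (f x) x with hlt | heq | hgt
      · -- decreasing orbit
        obtain ⟨p, hp, hpx, hxp⟩ : ∃ p : ℝ, f p = p ∧ p ≤ x ∧ x - 1 ≤ p := by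
          refine ⟨x0 + ((⌊x - x0⌋ : ℤ) : ℝ), hfix_shift x0 hx0 _, ?_, ?_⟩
          · have := Int.floor_le (x - x0); linarith
          · have := Int.lt_floor_add_one (x - x0); linarith
        have hdec : ∀ i, f (u i) < u i := by
          intro i
          induction i with
          | zero => exact hlt
          | succ i ih => rw [husucc]; exact hmono ih
        have humono : ∀ i, u (i+1) ≤ u i := fun i => by rw [husucc]; exact (hdec i).le
        have hanti : Antitone u := antitone_nat_of_succ_le humono
        have hlb : ∀ i, p ≤ u i := by
          intro i
          induction i with
          | zero => exact hpx
          | succ i ih =>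
            rw [husucc]
            calc p = f p := hp.symm
            _ ≤ f (u i) := hmono.monotone ih
        have hmem : ∀ i, u i ∈ Set.Icc (-1:ℝ) 2 := by
          intro i
          refine ⟨?_, ?_⟩
          · have := hlb i; linarith [hx.1]
          · have h1 : u i ≤ u 0 := hanti (Nat.zero_le i)
            rw [hu0] at h1; linarith [hx.2]
        refine count_bound hc (fun i => neg_le_neg (humono i)) ?_ hBsub ?_
        · have := hlb n
          simp only [hu0]
          linarith
        · intro i hi
          have hyK : u i ∈ K := ⟨hmem i, hBfar i hi⟩
          have hstep := hcK (u i) hyK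
          rw [abs_of_nonpos (by linarith [hdec i])] at hstep
          rw [husucc]
          linarith
      · -- fixed: B is empty
        have hfixx : f x = x := heq
        have hui : ∀ i, u i = x := fun i => Function.iterate_fixed hfixx i
        have hBe : B = ∅ := by
          rw [Finset.eq_empty_iff_forall_notMem]
          intro i hi
          have h1 := (Finset.mem_filter.mp hi).2
          rw [hui i] at h1
          exact absurd (stepA x x hfixx (by simpa using hδpos)) (not_lt.2 h1)
        rw [hBe]
        simp only [Finset.card_empty, Nat.cast_zero]
        positivity
      · -- increasing orbit
        obtain ⟨p, hp, hxp, hpx⟩ : ∃ p : ℝ, f p = p ∧ x ≤ p ∧ p ≤ x + 1 := by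
          refine ⟨x0 + ((⌈x - x0⌉ : ℤ) : ℝ), hfix_shift x0 hx0 _, ?_, ?_⟩
          · have := Int.le_ceil (x - x0); linarith
          · have := Int.ceil_lt_add_one (x - x0); linarith
        have hinc : ∀ i, u i < f (u i) := by
          intro i
          induction i with
          | zero => exact hgt
          | succ i ih => rw [husucc]; exact hmono ih
        have humono : ∀ i, u i ≤ u (i+1) := fun i => by rw [husucc]; exact (hinc i).le
        have hmon : Monotone u := monotone_nat_of_le_succ humono
        have hub : ∀ i, u i ≤ p := by
          intro i
          induction i with
          | zero => exact hxp
          | succ i ih =>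
            rw [husucc]
            calc f (u i) ≤ f p := hmono.monotone ih
            _ = p := hp
        have hmem : ∀ i, u i ∈ Set.Icc (-1:ℝ) 2 := by
          intro i
          refine ⟨?_, ?_⟩
          · have h1 : u 0 ≤ u i := hmon (Nat.zero_le i)
            rw [hu0] at h1; linarith [hx.1]
          · have := hub i; linarith [hx.2]
        refine count_bound hc humono ?_ hBsub ?_
        · have := hub n
          rw [hu0]
          linarith
        · intro i hi
          have hyK : u i ∈ K := ⟨hmem i, hBfar i hi⟩
          have hstep := hcK (u i) hyK
          rw [abs_of_nonneg (by linarith [hinc i])] at hstep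
          rw [husucc]
          linarith
    -- final sum estimate
    have h1 : ∑ i ∈ B, |g (u i)| ≤ (B.card : ℝ) * M := by
      have := Finset.sum_le_card_nsmul B (fun i => |g (u i)|) M (fun i _ => hM _)
      simpa [nsmul_eq_mul] using this
    set B' : Finset ℕ := (Finset.range n).filter (fun i => ¬ ε ≤ |g (u i)|) with hB'def
    have h2 : ∑ i ∈ B', |g (u i)| ≤ (B'.card : ℝ) * ε := by
      have := Finset.sum_le_card_nsmul B' (fun i => |g (u i)|) ε
        (fun i hi => (not_le.mp (Finset.mem_filter.mp hi).2).le)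
      simpa [nsmul_eq_mul] using this
    have h3 : (B'.card : ℝ) ≤ n := by
      have h4 : B'.card ≤ n :=
        le_trans (Finset.card_filter_le _ _) (le_of_eq (Finset.card_range n))
      exact_mod_cast h4
    have hsplit : ∑ i ∈ Finset.range n, |g (u i)|
        = (∑ i ∈ B, |g (u i)|) + ∑ i ∈ B', |g (u i)| :=
      (Finset.sum_filter_add_sum_filter_not _ _ _).symm
    calc |∑ i ∈ Finset.range n, g (u i)|
        ≤ ∑ i ∈ Finset.range n, |g (u i)| := Finset.abs_sum_le_sum_abs _ _
      _ = (∑ i ∈ B, |g (u i)|) + ∑ i ∈ B', |g (u i)| := hsplit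
      _ ≤ (B.card : ℝ) * M + (B'.card : ℝ) * ε := add_le_add h1 h2
      _ ≤ M * (1/c) + ε * n := by
          have hb1 : (B.card : ℝ) * M ≤ M * (1/c) := by
            rw [mul_comm]
            exact mul_le_mul_of_nonneg_left hcard hMnn
          have hb2 : (B'.card : ℝ) * ε ≤ ε * n := by
            rw [mul_comm]
            exact mul_le_mul_of_nonneg_left h3 hε.le
          linarith
  -- conclusion
  haveI : Nonempty (Set.Icc (0:ℝ) 1) := ⟨⟨0, by norm_num⟩⟩
  rw [Metric.tendsto_atTop]
  intro ε hε
  obtain ⟨C, hC0, hC⟩ := key (ε/2) (half_pos hε)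
  refine ⟨⌈C / (ε/2)⌉₊ + 1, fun n hn => ?_⟩
  have hn1 : 1 ≤ n := le_trans (Nat.le_add_left 1 _) hn
  have hnpos : (0:ℝ) < n := by exact_mod_cast hn1
  have hngt : C / (ε/2) < n := by
    have h1 : (⌈C / (ε/2)⌉₊ : ℝ) < n := by
      exact_mod_cast Nat.lt_of_lt_of_le (Nat.lt_succ_self _) hn
    exact lt_of_le_of_lt (Nat.le_ceil _) h1
  have hCn : C / n < ε / 2 := by
    rw [div_lt_iff₀ hnpos]
    have h2 := (div_lt_iff₀ (half_pos hε)).mp hngt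
    linarith
  set S := ⨆ x : Set.Icc (0:ℝ) 1, |Real.log (deriv (f^[n]) x)| with hS
  have hbdd : BddAbove (Set.range fun x : Set.Icc (0:ℝ) 1 => |Real.log (deriv (f^[n]) x)|) := by
    refine ⟨C + (ε/2) * n, ?_⟩
    rintro v ⟨x, rfl⟩
    exact hC n x x.2
  have hS_le : S ≤ C + (ε/2) * n := ciSup_le (fun x => hC n x x.2)
  have hS0 : 0 ≤ S := le_ciSup_of_le hbdd ⟨0, by norm_num⟩ (abs_nonneg _)
  rw [Real.dist_eq, sub_zero, abs_of_nonneg (mul_nonneg (by positivity) hS0)]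
  calc 1/(n:ℝ) * S ≤ 1/n * (C + ε/2 * n) :=
        mul_le_mul_of_nonneg_left hS_le (by positivity)
    _ = C/n + ε/2 := by field_simp
    _ < ε := by linarith
end

section
/- Let f : ℝ → ℝ be a C^1 circle lift, and suppose there exists an irrational real number α (α is not of the form p/q with p, q integers) such that (f^[n] 0)/n tends to α as n → ∞. Then sup_{x ∈ [0,1]} |(1/n) · log(deriv (f^[n]) x)| tends to 0 as n → ∞. -/
open Filter Topology
namespace C1DistAux



/-- periodic with integer shifts -/
lemma per_int {ψ : ℝ → ℝ} (h : Function.Periodic ψ 1) (x : ℝ) (m : ℤ) :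
    ψ (x + m) = ψ x := by
  have := (h.int_mul m) x
  simpa using this

lemma per_int' {ψ : ℝ → ℝ} (h : Function.Periodic ψ 1) (x : ℝ) (m : ℤ) :
    ψ (x - m) = ψ x := by
  have := per_int h (x - m) m
  simpa using this.symm

/-- a continuous periodic function is bounded -/
lemma per_bounded {ψ : ℝ → ℝ} (hc : Continuous ψ) (hp : Function.Periodic ψ 1) :
    ∃ C : ℝ, 0 ≤ C ∧ ∀ x, |ψ x| ≤ C := by
  obtain ⟨C, hC⟩ := (isCompact_Icc (a := (0:ℝ)) (b := 1)).exists_bound_of_continuousOn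
    hc.continuousOn
  refine ⟨max C 0, le_max_right _ _, fun x => ?_⟩
  have h1 : ψ x = ψ (x - ⌊x⌋) := (per_int' hp x ⌊x⌋).symm
  have h2 : x - ⌊x⌋ ∈ Set.Icc (0:ℝ) 1 := by
    constructor
    · linarith [Int.floor_le x]
    · linarith [Int.lt_floor_add_one x]
  rw [h1]
  exact le_trans (by simpa using hC _ h2) (le_max_left _ _)

/-- a continuous periodic function is "uniformly continuous", elementary form -/
lemma per_unifcont {ψ : ℝ → ℝ} (hc : Continuous ψ) (hp : Function.Periodic ψ 1) :
    ∀ ε > (0:ℝ), ∃ δ > (0:ℝ), ∀ a b : ℝ, |a - b| ≤ δ → |ψ a - ψ b| ≤ ε := by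
  intro ε hε
  have huc : UniformContinuousOn ψ (Set.Icc (-1 : ℝ) 2) :=
    (isCompact_Icc).uniformContinuousOn_of_continuous hc.continuousOn
  rw [Metric.uniformContinuousOn_iff] at huc
  obtain ⟨δ, hδ, hδ'⟩ := huc ε hε
  refine ⟨min (δ/2) 1, by positivity, fun a b hab => ?_⟩
  have hab' : |a - b| ≤ 1 := le_trans hab (min_le_right _ _)
  set a' := a - ⌊a⌋ with ha'
  set b' := b - ⌊a⌋ with hb'
  have h1 : ψ a = ψ a' := (per_int' hp a ⌊a⌋).symm
  have h2 : ψ b = ψ b' := (per_int' hp b ⌊a⌋).symm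
  have ha0 : (0:ℝ) ≤ a' := by simp only [ha']; linarith [Int.floor_le a]
  have ha1 : a' ≤ 1 := by simp only [ha']; linarith [Int.lt_floor_add_one a]
  have ha'm : a' ∈ Set.Icc (-1:ℝ) 2 := ⟨by linarith, by linarith⟩
  have hd : |a' - b'| ≤ 1 := by
    have : a' - b' = a - b := by ring
    rw [this]; exact hab'
  have hb'm : b' ∈ Set.Icc (-1:ℝ) 2 := by
    cases' abs_le.1 hd with l r
    constructor <;> linarith
  have hdist : dist a' b' < δ := by
    have : a' - b' = a - b := by ring
    rw [Real.dist_eq, this]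
    calc |a - b| ≤ δ/2 := le_trans hab (min_le_left _ _)
      _ < δ := by linarith
  rw [h1, h2]
  exact le_of_lt (by simpa [Real.dist_eq] using hδ' a' ha'm b' hb'm hdist)



lemma net_lemma {γ : ℝ} (hγ : 0 < γ) (s : ℝ) (h0 : 0 ≤ s) (h1 : s ≤ 1) :
    ∃ r : ℕ, r ≤ ⌈1/γ⌉₊ ∧ |r*γ - s| ≤ γ := by
  refine ⟨⌊s/γ⌋₊, ?_, ?_⟩
  · have h2 : s/γ ≤ 1/γ := by gcongr
    exact le_trans (Nat.floor_le_floor h2) (Nat.floor_le_ceil _)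
  · have hle : (⌊s/γ⌋₊ : ℝ) * γ ≤ s := by
      rw [← le_div_iff₀ hγ]
      exact Nat.floor_le (div_nonneg h0 hγ.le)
    have hlt : s < (⌊s/γ⌋₊ + 1 : ℝ) * γ := by
      rw [← div_lt_iff₀ hγ]
      exact Nat.lt_floor_add_one _
    rw [abs_le]
    constructor <;> nlinarith

lemma pigeonhole_aux {α : ℝ} (hia : ∀ q : ℕ, 1 ≤ q → ∀ j : ℤ, (q:ℝ)*α ≠ j)
    {δ : ℝ} (hδ : 0 < δ) {K : ℕ} (hKδ : 1/(K:ℝ) ≤ δ) (hKpos : 0 < K)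
    {i i' : ℕ} (hlt : i < i')
    (heq : ⌊Int.fract (i*α) * K⌋₊ = ⌊Int.fract (i'*α) * K⌋₊) :
    ∃ (q : ℕ) (p : ℤ), 1 ≤ q ∧ (q:ℝ)*α - p ≠ 0 ∧ |(q:ℝ)*α - p| ≤ δ := by
  have hK0 : (0:ℝ) < K := by exact_mod_cast hKpos
  set u := Int.fract ((i:ℝ)*α) with hu
  set v := Int.fract ((i':ℝ)*α) with hv
  have hu0 : 0 ≤ u := Int.fract_nonneg _
  have hv0 : 0 ≤ v := Int.fract_nonneg _
  have h1 : (⌊u*K⌋₊ : ℝ) ≤ u*K := Nat.floor_le (by positivity)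
  have h2 : u*K < ⌊u*K⌋₊ + 1 := Nat.lt_floor_add_one _
  have h3 : (⌊v*K⌋₊ : ℝ) ≤ v*K := Nat.floor_le (by positivity)
  have h4 : v*K < ⌊v*K⌋₊ + 1 := Nat.lt_floor_add_one _
  have hcast : (⌊u*K⌋₊ : ℝ) = (⌊v*K⌋₊ : ℝ) := congrArg (Nat.cast : ℕ → ℝ) heq
  have hsmall : |v - u| ≤ δ := by
    have hub : v - u ≤ 1/K := by rw [le_div_iff₀ hK0]; nlinarith
    have hlb : u - v ≤ 1/K := by rw [le_div_iff₀ hK0]; nlinarith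
    rw [abs_le]; constructor <;> linarith
  refine ⟨i' - i, ⌊(i':ℝ)*α⌋ - ⌊(i:ℝ)*α⌋, by omega, ?_, ?_⟩
  · intro h
    have : ((i' - i : ℕ):ℝ) * α = ((⌊(i':ℝ)*α⌋ - ⌊(i:ℝ)*α⌋ : ℤ) : ℝ) := by
      rw [sub_eq_zero] at h; exact h
    exact hia (i' - i) (by omega) _ this
  · have hcast2 : ((i' - i : ℕ):ℝ) = (i':ℝ) - i := by
      have : (i:ℕ) ≤ i' := hlt.le
      push_cast [Nat.cast_sub this]; ring
    have hexp : ((i' - i : ℕ):ℝ)*α - ((⌊(i':ℝ)*α⌋ - ⌊(i:ℝ)*α⌋ : ℤ) : ℝ) = v - u := by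
      rw [hcast2, hv, hu]
      unfold Int.fract
      push_cast
      ring
    rw [hexp]; exact hsmall

lemma pigeonhole_beta {α : ℝ} (hia : ∀ q : ℕ, 1 ≤ q → ∀ j : ℤ, (q:ℝ)*α ≠ j)
    {δ : ℝ} (hδ : 0 < δ) :
    ∃ (q : ℕ) (p : ℤ), 1 ≤ q ∧ (q:ℝ)*α - p ≠ 0 ∧ |(q:ℝ)*α - p| ≤ δ := by
  set K : ℕ := ⌈1/δ⌉₊ + 1 with hK
  have hKpos : 0 < K := Nat.succ_pos _
  have hKδ : 1/(K:ℝ) ≤ δ := by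
    rw [div_le_iff₀ (by positivity)]
    have h1 : 1/δ ≤ (K:ℝ) := le_trans (Nat.le_ceil _) (by exact_mod_cast Nat.le_succ _)
    calc (1:ℝ) = δ * (1/δ) := by field_simp
      _ ≤ δ * K := by nlinarith
  have hmaps : ∀ i ∈ Finset.range (K+1), (⌊Int.fract ((i:ℝ)*α) * K⌋₊) ∈ Finset.range K := by
    intro i _
    rw [Finset.mem_range, Nat.floor_lt (mul_nonneg (Int.fract_nonneg _) (Nat.cast_nonneg _))]
    have := Int.fract_lt_one ((i:ℝ)*α)
    have hK0 : (0:ℝ) < K := by exact_mod_cast hKpos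
    nlinarith [Int.fract_nonneg ((i:ℝ)*α)]
  obtain ⟨i, hi, i', hi', hne, heq⟩ := Finset.exists_ne_map_eq_of_card_lt_of_maps_to
    (by simp) hmaps
  rcases hne.lt_or_gt with hlt | hlt
  · exact pigeonhole_aux hia hδ hKδ hKpos hlt heq
  · exact pigeonhole_aux hia hδ hKδ hKpos hlt heq.symm

/-- density of the forward orbit of the rotation by α, uniform finite version -/
lemma density {α : ℝ} (hia : ∀ q : ℕ, 1 ≤ q → ∀ j : ℤ, (q:ℝ)*α ≠ j) :
    ∀ δ > (0:ℝ), ∃ M : ℕ, ∀ t : ℝ, ∃ m : ℕ, m ≤ M ∧ ∃ j : ℤ, |↑m*α + ↑j - t| ≤ δ := by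
  intro δ hδ
  obtain ⟨q, p, hq1, hβ0, hβδ⟩ := pigeonhole_beta hia hδ
  set β : ℝ := (q:ℝ)*α - p with hβ
  set γ : ℝ := |β| with hγ
  have hγ0 : 0 < γ := abs_pos.2 hβ0
  refine ⟨⌈1/γ⌉₊ * q, fun t => ?_⟩
  set t' : ℝ := t - ⌊t⌋ with ht'
  have ht0 : 0 ≤ t' := by simp only [ht', sub_nonneg]; exact Int.floor_le t
  have ht1 : t' < 1 := by simp only [ht']; linarith [Int.lt_floor_add_one t]
  rcases abs_cases β with ⟨hγβ, _⟩ | ⟨hγβ, _⟩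
  · -- β ≥ 0, in fact β > 0
    obtain ⟨r, hrR, hr⟩ := net_lemma hγ0 t' ht0 ht1.le
    refine ⟨r * q, Nat.mul_le_mul_right q hrR, ⌊t⌋ - r * p, ?_⟩
    have : (↑(r*q):ℝ)*α + ↑(⌊t⌋ - r*p) - t = r * γ - t' := by
      rw [hγ, hγβ, hβ, ht']; push_cast; ring
    rw [this]; exact le_trans hr (by rw [hγ, hγβ] at *; linarith [abs_le.1 hβδ])
  · -- β < 0 : γ = -β
    obtain ⟨r, hrR, hr⟩ := net_lemma hγ0 (1 - t') (by linarith) (by linarith)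
    refine ⟨r * q, Nat.mul_le_mul_right q hrR, ⌊t⌋ + 1 - r * p, ?_⟩
    have : (↑(r*q):ℝ)*α + ↑(⌊t⌋ + 1 - r*p) - t = -(r * γ - (1 - t')) := by
      rw [hγ, hγβ, hβ, ht']; push_cast; ring
    rw [this, abs_neg]
    exact le_trans hr (by rw [hγ, hγβ] at *; linarith [abs_le.1 hβδ])


lemma abs_sum_le_card_mul {s : Finset ℕ} {g : ℕ → ℝ} {C : ℝ}
    (hg : ∀ k, |g k| ≤ C) : |∑ k ∈ s, g k| ≤ s.card * C := by
  calc |∑ k ∈ s, g k| ≤ ∑ k ∈ s, |g k| := Finset.abs_sum_le_sum_abs _ _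
    _ ≤ ∑ _k ∈ s, C := Finset.sum_le_sum (fun k _ => hg k)
    _ = s.card * C := by rw [Finset.sum_const, nsmul_eq_mul]

lemma sum_shift_int {ψ : ℝ → ℝ} (hp : Function.Periodic ψ 1) (α θ : ℝ) (j : ℤ) (n : ℕ) :
    ∑ k ∈ Finset.range n, ψ (θ + j + k*α) = ∑ k ∈ Finset.range n, ψ (θ + k*α) := by
  refine Finset.sum_congr rfl (fun k _ => ?_)
  have : θ + j + k*α = (θ + k*α) + j := by ring
  rw [this, per_int hp]

lemma sum_shift_mul {ψ : ℝ → ℝ} {C : ℝ} (hC : ∀ x, |ψ x| ≤ C) (hC0 : 0 ≤ C)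
    (α θ : ℝ) (m n : ℕ) :
    |(∑ k ∈ Finset.range n, ψ (θ + m*α + k*α)) - ∑ k ∈ Finset.range n, ψ (θ + k*α)|
      ≤ 2*m*C := by
  set g : ℕ → ℝ := fun k => ψ (θ + k*α) with hg
  have h1 : ∀ k : ℕ, ψ (θ + (m:ℝ)*α + (k:ℝ)*α) = g (m + k) := by
    intro k; rw [hg]; push_cast; ring_nf
  simp only [h1]
  have h2 : ∑ k ∈ Finset.range n, g (m + k) = ∑ k ∈ Finset.Ico m (m+n), g k := by
    rw [Finset.sum_Ico_eq_sum_range, Nat.add_sub_cancel_left]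
  rw [h2]
  have hgb : ∀ k, |g k| ≤ C := fun k => hC _
  rcases le_or_gt m n with hmn | hmn
  · have e1 : ∑ k ∈ Finset.Ico m (m+n), g k
        = (∑ k ∈ Finset.Ico m n, g k) + ∑ k ∈ Finset.Ico n (m+n), g k :=
      (Finset.sum_Ico_consecutive _ hmn (by omega)).symm
    have e2 : ∑ k ∈ Finset.range n, g k
        = (∑ k ∈ Finset.Ico 0 m, g k) + ∑ k ∈ Finset.Ico m n, g k := by
      rw [Finset.range_eq_Ico, ← Finset.sum_Ico_consecutive _ (Nat.zero_le m) hmn]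
    rw [e1, e2]
    have b1 := abs_sum_le_card_mul (s := Finset.Ico n (m+n)) hgb
    have b2 := abs_sum_le_card_mul (s := Finset.Ico 0 m) hgb
    rw [Nat.card_Ico] at b1 b2
    have hc1 : ((m + n - n : ℕ) : ℝ) = m := by rw [Nat.add_sub_cancel]
    have hc2 : ((m - 0 : ℕ) : ℝ) = m := by rw [Nat.sub_zero]
    rw [hc1] at b1; rw [hc2] at b2
    calc |(∑ k ∈ Finset.Ico m n, g k) + (∑ k ∈ Finset.Ico n (m+n), g k)
          - ((∑ k ∈ Finset.Ico 0 m, g k) + ∑ k ∈ Finset.Ico m n, g k)|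
        = |(∑ k ∈ Finset.Ico n (m+n), g k) - ∑ k ∈ Finset.Ico 0 m, g k| := by
          congr 1; ring
      _ ≤ |∑ k ∈ Finset.Ico n (m+n), g k| + |∑ k ∈ Finset.Ico 0 m, g k| := abs_sub _ _
      _ ≤ m*C + m*C := add_le_add b1 b2
      _ = 2*m*C := by ring
  · have b1 := abs_sum_le_card_mul (s := Finset.Ico m (m+n)) hgb
    have b2 := abs_sum_le_card_mul (s := Finset.range n) hgb
    rw [Nat.card_Ico] at b1
    rw [Finset.card_range] at b2
    have hc1 : ((m + n - m : ℕ) : ℝ) = n := by rw [Nat.add_sub_cancel_left]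
    rw [hc1] at b1
    have hnm : (n:ℝ) ≤ m := by exact_mod_cast hmn.le
    calc |(∑ k ∈ Finset.Ico m (m+n), g k) - ∑ k ∈ Finset.range n, g k|
        ≤ |∑ k ∈ Finset.Ico m (m+n), g k| + |∑ k ∈ Finset.range n, g k| := abs_sub _ _
      _ ≤ n*C + n*C := add_le_add b1 b2
      _ ≤ m*C + m*C := by nlinarith
      _ = 2*m*C := by ring


lemma uniform_weyl {α : ℝ}
    (hd : ∀ δ > (0:ℝ), ∃ M : ℕ, ∀ t : ℝ, ∃ m : ℕ, m ≤ M ∧ ∃ j : ℤ, |↑m*α + ↑j - t| ≤ δ)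
    {ψ : ℝ → ℝ} (hc : Continuous ψ) (hp : Function.Periodic ψ 1) :
    ∀ ε > (0:ℝ), ∃ N : ℕ, ∀ n ≥ N, ∀ θ : ℝ,
      |(∑ k ∈ Finset.range n, ψ (θ + k*α)) - n * ∫ x in (0:ℝ)..1, ψ x| ≤ ε * n := by
  intro ε hε
  obtain ⟨C, hC0, hC⟩ := per_bounded hc hp
  obtain ⟨δ, hδ, hmod⟩ := per_unifcont hc hp (ε/4) (by positivity)
  obtain ⟨M, hM⟩ := hd δ hδ
  set I : ℝ := ∫ x in (0:ℝ)..1, ψ x with hI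
  have hpair : ∀ (n : ℕ) (θ θ' : ℝ),
      |(∑ k ∈ Finset.range n, ψ (θ' + k*α)) - ∑ k ∈ Finset.range n, ψ (θ + k*α)|
        ≤ ε/4*n + 2*M*C := by
    intro n θ θ'
    obtain ⟨m, hm, j, hj⟩ := hM (θ' - θ)
    have h1 : ∑ k ∈ Finset.range n, ψ ((θ + m*α) + j + k*α)
        = ∑ k ∈ Finset.range n, ψ ((θ + m*α) + k*α) := sum_shift_int hp α _ j n
    have h2 : |(∑ k ∈ Finset.range n, ψ (θ + m*α + k*α))
        - ∑ k ∈ Finset.range n, ψ (θ + k*α)| ≤ 2*M*C := by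
      refine le_trans (sum_shift_mul hC hC0 α θ m n) ?_
      have : (m:ℝ) ≤ M := by exact_mod_cast hm
      nlinarith
    have h3 : |(∑ k ∈ Finset.range n, ψ (θ' + k*α))
        - ∑ k ∈ Finset.range n, ψ ((θ + m*α) + j + k*α)| ≤ ε/4*n := by
      rw [← Finset.sum_sub_distrib]
      have := abs_sum_le_card_mul (s := Finset.range n)
        (g := fun k => ψ (θ' + k*α) - ψ ((θ + m*α) + j + k*α)) (C := ε/4) ?_
      · simpa [Finset.card_range, mul_comm] using this
      · intro k
        apply hmod
        have : θ' + k*α - ((θ + m*α) + j + k*α) = -(↑m*α + ↑j - (θ' - θ)) := by ring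
        rw [this, abs_neg]
        exact hj
    calc |(∑ k ∈ Finset.range n, ψ (θ' + k*α)) - ∑ k ∈ Finset.range n, ψ (θ + k*α)|
        ≤ |(∑ k ∈ Finset.range n, ψ (θ' + k*α))
            - ∑ k ∈ Finset.range n, ψ ((θ + m*α) + j + k*α)|
          + |(∑ k ∈ Finset.range n, ψ ((θ + m*α) + j + k*α))
            - ∑ k ∈ Finset.range n, ψ (θ + k*α)| := abs_sub_le _ _ _
      _ ≤ ε/4*n + 2*M*C := add_le_add h3 (by rw [h1]; exact h2)
  have hint : ∀ k : ℕ, ∫ x in (0:ℝ)..1, ψ (x + k*α) = I := by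
    intro k
    rw [intervalIntegral.integral_comp_add_right]
    have h := hp.intervalIntegral_add_eq ((k:ℝ)*α) 0
    rw [hI]
    rw [zero_add] at h
    have e : (0:ℝ) + k*α = k*α := zero_add _
    have e2 : (1:ℝ) + k*α = k*α + 1 := by ring
    rw [e, e2, h]
  have hsumint : ∀ n : ℕ,
      (∫ θ' in (0:ℝ)..1, ∑ k ∈ Finset.range n, ψ (θ' + k*α)) = n * I := by
    intro n
    rw [intervalIntegral.integral_finset_sum]
    · simp only [hint, Finset.sum_const, Finset.card_range, nsmul_eq_mul]
    · intro k _
      exact (hc.comp (continuous_id.add continuous_const)).intervalIntegrable _ _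
  have hcont : ∀ n : ℕ, Continuous (fun θ' : ℝ => ∑ k ∈ Finset.range n, ψ (θ' + k*α)) := by
    intro n
    exact continuous_finset_sum _ (fun k _ => hc.comp (continuous_id.add continuous_const))
  have hmain : ∀ (n : ℕ) (θ : ℝ),
      |(∑ k ∈ Finset.range n, ψ (θ + k*α)) - n * I| ≤ ε/4*n + 2*M*C := by
    intro n θ
    set Sθ : ℝ := ∑ k ∈ Finset.range n, ψ (θ + k*α) with hSθ
    have heq : Sθ - n * I
        = ∫ θ' in (0:ℝ)..1, (Sθ - ∑ k ∈ Finset.range n, ψ (θ' + k*α)) := by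
      rw [intervalIntegral.integral_sub intervalIntegrable_const
          (((hcont n)).intervalIntegrable _ _), hsumint n,
        intervalIntegral.integral_const]
      norm_num
    rw [heq]
    have := intervalIntegral.norm_integral_le_of_norm_le_const
      (a := (0:ℝ)) (b := 1) (C := ε/4*n + 2*M*C)
      (f := fun θ' => Sθ - ∑ k ∈ Finset.range n, ψ (θ' + k*α)) ?_
    · simpa using this
    · intro x _
      rw [Real.norm_eq_abs, ← abs_neg]
      have e : -(Sθ - ∑ k ∈ Finset.range n, ψ (x + k*α))
          = (∑ k ∈ Finset.range n, ψ (x + k*α)) - Sθ := by ring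
      rw [e]
      exact hpair n θ x
  refine ⟨⌈8*M*C/ε⌉₊ + 1, fun n hn θ => ?_⟩
  have hn' : (8*M*C/ε : ℝ) ≤ n := by
    have h1 : (⌈8*M*C/ε⌉₊ : ℝ) ≥ 8*M*C/ε := Nat.le_ceil _
    have h2 : (n:ℝ) ≥ (⌈8*M*C/ε⌉₊ : ℝ) + 1 := by exact_mod_cast hn
    linarith
  have h2MC : 2*M*C ≤ ε/4*n := by
    have := (div_le_iff₀ hε).1 hn'
    nlinarith
  calc |(∑ k ∈ Finset.range n, ψ (θ + k*α)) - n * I| ≤ ε/4*n + 2*M*C := hmain n θ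
    _ ≤ ε/4*n + ε/4*n := by linarith
    _ ≤ ε * n := by nlinarith [Nat.cast_nonneg (α := ℝ) n]

/-! ### Periodic trapezoid bump functions -/

def pSet (p q : ℝ) : Set ℝ := ⋃ m : ℤ, Set.Icc (p + m) (q + m)

lemma mem_pSet_iff {p q x : ℝ} : x ∈ pSet p q ↔ ∃ m : ℤ, p + m ≤ x ∧ x ≤ q + m := by
  simp [pSet, Set.mem_iUnion, Set.mem_Icc]

lemma pSet_nonempty {p q : ℝ} (h : p ≤ q) : (pSet p q).Nonempty := by
  exact ⟨p, mem_pSet_iff.2 ⟨0, by norm_num, by norm_num; linarith⟩⟩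

lemma pSet_add_one {p q x : ℝ} (hx : x ∈ pSet p q) : x + 1 ∈ pSet p q := by
  obtain ⟨m, h1, h2⟩ := mem_pSet_iff.1 hx
  exact mem_pSet_iff.2 ⟨m + 1, by push_cast; constructor <;> linarith⟩

lemma pSet_sub_one {p q x : ℝ} (hx : x ∈ pSet p q) : x - 1 ∈ pSet p q := by
  obtain ⟨m, h1, h2⟩ := mem_pSet_iff.1 hx
  exact mem_pSet_iff.2 ⟨m - 1, by push_cast; constructor <;> linarith⟩

lemma infDist_pSet_aux {p q : ℝ} (h : p ≤ q) (v : ℝ) :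
    Metric.infDist (v + 1) (pSet p q) ≤ Metric.infDist v (pSet p q) := by
  refine le_of_forall_pos_le_add (fun ε hε => ?_)
  have h1 : Metric.infDist v (pSet p q) < Metric.infDist v (pSet p q) + ε := by linarith
  obtain ⟨y, hy, hdy⟩ := (Metric.infDist_lt_iff (pSet_nonempty h)).1 h1
  have h2 : dist (v + 1) (y + 1) = dist v y := by
    rw [Real.dist_eq, Real.dist_eq]; congr 1; ring
  calc Metric.infDist (v + 1) (pSet p q) ≤ dist (v + 1) (y + 1) :=
        Metric.infDist_le_dist_of_mem (pSet_add_one hy)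
    _ ≤ Metric.infDist v (pSet p q) + ε := by rw [h2]; exact hdy.le

lemma infDist_pSet_per {p q : ℝ} (h : p ≤ q) (v : ℝ) :
    Metric.infDist (v + 1) (pSet p q) = Metric.infDist v (pSet p q) := by
  refine le_antisymm (infDist_pSet_aux h v) ?_
  refine le_of_forall_pos_le_add (fun ε hε => ?_)
  have h1 : Metric.infDist (v+1) (pSet p q) < Metric.infDist (v+1) (pSet p q) + ε := by linarith
  obtain ⟨y, hy, hdy⟩ := (Metric.infDist_lt_iff (pSet_nonempty h)).1 h1
  have h2 : dist v (y - 1) = dist (v+1) y := by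
    rw [Real.dist_eq, Real.dist_eq]; congr 1; ring
  calc Metric.infDist v (pSet p q) ≤ dist v (y - 1) :=
        Metric.infDist_le_dist_of_mem (pSet_sub_one hy)
    _ ≤ Metric.infDist (v+1) (pSet p q) + ε := by rw [h2]; exact hdy.le

noncomputable def trap (p q η : ℝ) : ℝ → ℝ :=
  fun v => max 0 (1 - Metric.infDist v (pSet p q) / η)

lemma trap_continuous (p q η : ℝ) : Continuous (trap p q η) :=
  continuous_const.max (continuous_const.sub ((Metric.continuous_infDist_pt _).div_const η))

lemma trap_periodic {p q : ℝ} (h : p ≤ q) (η : ℝ) : Function.Periodic (trap p q η) 1 := by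
  intro v
  unfold trap
  rw [infDist_pSet_per h]

lemma trap_nonneg (p q η v : ℝ) : 0 ≤ trap p q η v := le_max_left _ _

lemma trap_le_one {p q η : ℝ} (hη : 0 < η) (v : ℝ) : trap p q η v ≤ 1 := by
  apply max_le (by norm_num)
  have h1 : 0 ≤ Metric.infDist v (pSet p q) := Metric.infDist_nonneg
  have : 0 ≤ Metric.infDist v (pSet p q) / η := by positivity
  linarith

lemma trap_eq_one_of_mem {p q η v : ℝ} (hη : 0 < η) (hv : v ∈ pSet p q) :
    trap p q η v = 1 := by
  unfold trap
  rw [Metric.infDist_zero_of_mem hv]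
  norm_num

lemma trap_eq_zero {p q η v : ℝ} (hpq : p ≤ q) (hη : 0 < η)
    (h1 : q + η ≤ v) (h2 : v ≤ p + 1 - η) : trap p q η v = 0 := by
  have hdist : η ≤ Metric.infDist v (pSet p q) := by
    by_contra hcon
    push_neg at hcon
    obtain ⟨y, hy, hdy⟩ := (Metric.infDist_lt_iff (pSet_nonempty hpq)).1 hcon
    obtain ⟨m, hm1, hm2⟩ := mem_pSet_iff.1 hy
    rw [Real.dist_eq, abs_lt] at hdy
    rcases le_or_gt (m:ℝ) 0 with hm | hm
    · have : y ≤ q := by linarith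
      linarith
    · have hm' : (1:ℝ) ≤ m := by exact_mod_cast hm
      have : p + 1 ≤ y := by linarith
      linarith
  unfold trap
  have : 1 - Metric.infDist v (pSet p q) / η ≤ 0 := by
    rw [sub_nonpos, le_div_iff₀ hη, one_mul]
    exact hdist
  exact max_eq_left this

lemma trap_integral_le_one {p q η : ℝ} (hη : 0 < η) :
    ∫ v in (0:ℝ)..1, trap p q η v ≤ 1 := by
  have h := intervalIntegral.integral_mono_on (μ := MeasureTheory.volume) (a := (0:ℝ)) (b := 1) (by norm_num)
    ((trap_continuous p q η).intervalIntegrable _ _)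
    (intervalIntegrable_const (c := (1:ℝ)))
    (fun x _ => trap_le_one hη x)
  simpa using h

lemma trap_integral_nonneg {p q η : ℝ} :
    0 ≤ ∫ v in (0:ℝ)..1, trap p q η v := by
  exact intervalIntegral.integral_nonneg (μ := MeasureTheory.volume) (by norm_num)
    (fun x _ => trap_nonneg _ _ _ _)

lemma trap_integral_le {p q η : ℝ} (hpq : p ≤ q) (hη : 0 < η)
    (hfit : q + η ≤ p + 1 - η) :
    ∫ v in (0:ℝ)..1, trap p q η v ≤ (q - p) + 2*η := by
  have hper := (trap_periodic hpq η).intervalIntegral_add_eq 0 (p - η)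
  rw [zero_add] at hper
  have hint : ∀ a b : ℝ, IntervalIntegrable (trap p q η) MeasureTheory.volume a b :=
    fun a b => (trap_continuous p q η).intervalIntegrable _ _
  have hsplit : (∫ v in (p-η)..(q+η), trap p q η v) + (∫ v in (q+η)..(p-η+1), trap p q η v)
      = ∫ v in (p-η)..(p-η+1), trap p q η v :=
    intervalIntegral.integral_add_adjacent_intervals (hint _ _) (hint _ _)
  have hzero : (∫ v in (q+η)..(p-η+1), trap p q η v) = 0 := by
    rw [intervalIntegral.integral_congr (g := fun _ => (0:ℝ)), intervalIntegral.integral_zero]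
    intro v hv
    rw [Set.uIcc_of_le (by linarith)] at hv
    exact trap_eq_zero hpq hη hv.1 (by linarith [hv.2])
  have hfirst : (∫ v in (p-η)..(q+η), trap p q η v) ≤ (q+η) - (p-η) := by
    have h := intervalIntegral.integral_mono_on (μ := MeasureTheory.volume) (a := p-η) (b := q+η) (by linarith)
      (hint _ _) (intervalIntegrable_const (c := (1:ℝ)))
      (fun x _ => trap_le_one hη x)
    simpa using h
  calc ∫ v in (0:ℝ)..1, trap p q η v = ∫ v in (p-η)..(p-η+1), trap p q η v := hper
    _ = (∫ v in (p-η)..(q+η), trap p q η v) + (∫ v in (q+η)..(p-η+1), trap p q η v) :=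
        hsplit.symm
    _ ≤ (q+η) - (p-η) + 0 := by rw [hzero]; exact add_le_add_left hfirst 0
    _ = (q - p) + 2*η := by ring

noncomputable def trapLow (p q η : ℝ) : ℝ → ℝ := fun v => 1 - trap q (p+1) η v

lemma trapLow_continuous (p q η : ℝ) : Continuous (trapLow p q η) :=
  continuous_const.sub (trap_continuous _ _ _)

lemma trapLow_periodic {p q : ℝ} (hq1 : q ≤ p + 1) (η : ℝ) :
    Function.Periodic (trapLow p q η) 1 := by
  intro v
  unfold trapLow
  rw [trap_periodic hq1 η v]

lemma trapLow_nonneg {p q η : ℝ} (hη : 0 < η) (v : ℝ) : 0 ≤ trapLow p q η v := by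
  unfold trapLow
  linarith [trap_le_one (p := q) (q := p+1) hη v]

lemma trapLow_le_one {p q η : ℝ} (v : ℝ) : trapLow p q η v ≤ 1 := by
  unfold trapLow
  linarith [trap_nonneg q (p+1) η v]

lemma trapLow_pos_imp {p q η v : ℝ} (hq1 : q ≤ p + 1) (hη : 0 < η)
    (hv : 0 < trapLow p q η v) : ∃ m : ℤ, p + m < v ∧ v < q + m := by
  have hnm : v ∉ pSet q (p+1) := by
    intro hmem
    rw [trapLow, trap_eq_one_of_mem hη hmem] at hv
    norm_num at hv
  refine ⟨⌈v - q⌉, ?_, ?_⟩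
  · by_contra hcon
    push_neg at hcon
    apply hnm
    refine mem_pSet_iff.2 ⟨⌈v - q⌉ - 1, ?_, ?_⟩
    · push_cast
      linarith [Int.ceil_lt_add_one (v - q)]
    · push_cast
      linarith
  · have hle : v ≤ q + ⌈v - q⌉ := by linarith [Int.le_ceil (v - q)]
    rcases hle.lt_or_eq with h | h
    · exact h
    · exfalso
      apply hnm
      exact mem_pSet_iff.2 ⟨⌈v - q⌉, by linarith, by linarith⟩

lemma trapLow_integral_ge {p q η : ℝ} (hpq : p ≤ q) (hq1 : q ≤ p + 1) (hη : 0 < η) :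
    (q - p) - 2*η ≤ ∫ v in (0:ℝ)..1, trapLow p q η v := by
  have heq : (∫ v in (0:ℝ)..1, trapLow p q η v)
      = 1 - ∫ v in (0:ℝ)..1, trap q (p+1) η v := by
    unfold trapLow
    rw [intervalIntegral.integral_sub intervalIntegrable_const
      ((trap_continuous _ _ _).intervalIntegrable _ _)]
    simp
  rw [heq]
  rcases le_or_gt (p + 2*η) q with hcase | hcase
  · have := trap_integral_le (p := q) (q := p+1) hq1 hη (by linarith)
    linarith
  · have := trap_integral_le_one (p := q) (q := p+1) hη
    have hnn := trap_integral_nonneg (p := q) (q := p+1) (η := η)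
    linarith

/-! ### The core uniform comparison lemma -/

set_option maxHeartbeats 3000000 in
lemma core_comparison {f φ F : ℝ → ℝ} {α : ℝ}
    (hφc : Continuous φ) (hφp : Function.Periodic φ 1)
    (hFmono : Monotone F)
    (hFint : ∀ (x : ℝ) (m : ℤ), F (x + m) = F x + m)
    (horb : ∀ (x : ℝ) (k : ℕ), F (f^[k] x) = F x + k * α)
    (hd : ∀ δ > (0:ℝ), ∃ M : ℕ, ∀ t : ℝ, ∃ m : ℕ, m ≤ M ∧ ∃ j : ℤ, |↑m*α + ↑j - t| ≤ δ)
    {ε : ℝ} (hε : 0 < ε) :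
    ∃ N : ℕ, ∀ n ≥ N, ∀ x y : ℝ,
      (∑ k ∈ Finset.range n, φ (f^[k] x)) - (∑ k ∈ Finset.range n, φ (f^[k] y))
        ≤ ε * n := by
  classical
  obtain ⟨δp, hδp, hmod⟩ := per_unifcont hφc hφp (ε/8) (by positivity)
  set N : ℕ := ⌈1/δp⌉₊ + 1 with hN
  have hN0 : 0 < N := Nat.succ_pos _
  have hNR : (0:ℝ) < N := by exact_mod_cast hN0
  have hNδ : 1/(N:ℝ) ≤ δp := by
    rw [div_le_iff₀ hNR]
    have h1 : 1/δp ≤ (N:ℝ) := le_trans (Nat.le_ceil _) (by exact_mod_cast Nat.le_succ _)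
    calc (1:ℝ) = δp * (1/δp) := by field_simp
      _ ≤ δp * N := by nlinarith
  have hstep : ∀ j : ℕ, (j:ℝ)/N ≤ ((j:ℝ)+1)/N :=
    fun j => (div_le_div_iff_of_pos_right hNR).2 (by linarith)
  -- max and min points on subintervals
  have hex : ∀ j : ℕ, ∃ x ∈ Set.Icc ((j:ℝ)/N) (((j:ℝ)+1)/N),
      ∀ z ∈ Set.Icc ((j:ℝ)/N) (((j:ℝ)+1)/N), φ z ≤ φ x := by
    intro j
    obtain ⟨x, hmem, hmax⟩ := (isCompact_Icc (a := ((j:ℝ)/N)) (b := (((j:ℝ)+1)/N))).exists_isMaxOn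
      (Set.nonempty_Icc.2 (hstep j)) hφc.continuousOn
    exact ⟨x, hmem, fun z hz => hmax hz⟩
  have hex' : ∀ j : ℕ, ∃ x ∈ Set.Icc ((j:ℝ)/N) (((j:ℝ)+1)/N),
      ∀ z ∈ Set.Icc ((j:ℝ)/N) (((j:ℝ)+1)/N), φ x ≤ φ z := by
    intro j
    obtain ⟨x, hmem, hmin⟩ := (isCompact_Icc (a := ((j:ℝ)/N)) (b := (((j:ℝ)+1)/N))).exists_isMinOn
      (Set.nonempty_Icc.2 (hstep j)) hφc.continuousOn
    exact ⟨x, hmem, fun z hz => hmin hz⟩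
  choose ξ hξmem hξmax using hex
  choose ζ hζmem hζmin using hex'
  set c : ℕ → ℝ := fun j => φ (ξ j) with hc
  set c' : ℕ → ℝ := fun j => φ (ζ j) with hc'
  -- global min and max
  obtain ⟨zB, hzBmem, hzBmin⟩ := (isCompact_Icc (a := (0:ℝ)) (b := 1)).exists_isMinOn
    (Set.nonempty_Icc.2 (by norm_num)) hφc.continuousOn
  obtain ⟨zC, hzCmem, hzCmax⟩ := (isCompact_Icc (a := (0:ℝ)) (b := 1)).exists_isMaxOn
    (Set.nonempty_Icc.2 (by norm_num)) hφc.continuousOn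
  set B : ℝ := φ zB with hB
  set Cm : ℝ := φ zC with hCm
  have hBall : ∀ t : ℝ, B ≤ φ t := by
    intro t
    have h1 : φ t = φ (t - ⌊t⌋) := (per_int' hφp t ⌊t⌋).symm
    rw [h1]
    exact hzBmin ⟨by linarith [Int.floor_le t], by linarith [Int.lt_floor_add_one t]⟩
  have hCall : ∀ t : ℝ, φ t ≤ Cm := by
    intro t
    have h1 : φ t = φ (t - ⌊t⌋) := (per_int' hφp t ⌊t⌋).symm
    rw [h1]
    exact hzCmax ⟨by linarith [Int.floor_le t], by linarith [Int.lt_floor_add_one t]⟩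
  set C0 : ℝ := Cm - B with hC0
  have hC00 : 0 ≤ C0 := by
    have := hBall zC; simp only [hC0]; linarith
  have hcB : ∀ j, B ≤ c' j := fun j => hBall _
  have hcc : ∀ j, c' j ≤ c j := fun j => hξmax j _ (hζmem j)
  have hcC : ∀ j, c j ≤ Cm := fun j => hCall _
  have hosc : ∀ j, c j - c' j ≤ ε/8 := by
    intro j
    have h1 : |ξ j - ζ j| ≤ δp := by
      obtain ⟨ha, hb⟩ := hξmem j
      obtain ⟨ha', hb'⟩ := hζmem j
      rw [abs_le]
      have he : ((j:ℝ)+1)/N - (j:ℝ)/N = 1/N := by field_simp; ring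
      constructor <;> nlinarith [hNδ]
    have h2 := abs_le.1 (hmod (ξ j) (ζ j) h1)
    simp only [hc, hc']
    linarith [h2.1, h2.2]
  -- width parameter
  set η : ℝ := ε / (1 + 32*(N:ℝ)*(C0+1)) with hη
  have hD : (0:ℝ) < 1 + 32*(N:ℝ)*(C0+1) := by positivity
  have hη0 : 0 < η := div_pos hε hD
  have hηD : η * (1 + 32*(N:ℝ)*(C0+1)) = ε := by
    rw [hη]; field_simp
  have hηkey : 4*η*(N:ℝ)*(C0+1) ≤ ε/8 := by nlinarith [hη0, hηD]
  set p : ℕ → ℝ := fun j => F ((j:ℝ)/N) with hp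
  set q : ℕ → ℝ := fun j => F (((j:ℝ)+1)/N) with hq
  have hpq : ∀ j, p j ≤ q j := fun j => hFmono (hstep j)
  have hq1 : ∀ j, q j ≤ p j + 1 := by
    intro j
    have h1 : (((j:ℝ))+1)/N ≤ (j:ℝ)/N + 1 := by
      rw [div_le_iff₀ hNR, add_mul, div_mul_cancel₀ _ (ne_of_gt hNR)]
      have : (1:ℝ) ≤ N := by exact_mod_cast hN0
      nlinarith
    have h3 : F ((j:ℝ)/N + (1:ℤ)) = F ((j:ℝ)/N) + (1:ℤ) := hFint ((j:ℝ)/N) 1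
    simp only [Int.cast_one] at h3
    have h2 := hFmono h1
    rw [h3] at h2
    exact h2
  set w : ℕ → ℝ := fun j => q j - p j with hw
  have hw0 : ∀ j, 0 ≤ w j := fun j => by simp only [hw]; linarith [hpq j]
  have hwsum : ∑ j ∈ Finset.range N, w j = 1 := by
    have h1 : ∑ j ∈ Finset.range N, w j = F (((N:ℕ):ℝ)/N) - F (((0:ℕ):ℝ)/N) := by
      simp only [hw, hq, hp]
      have h := Finset.sum_range_sub (f := fun j : ℕ => F ((j:ℝ)/N)) N
      rw [← h]
      refine Finset.sum_congr rfl (fun j _ => ?_)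
      have e : ((j+1:ℕ):ℝ) = (j:ℝ)+1 := by push_cast; ring
      rw [e]
    rw [h1]
    have e1 : (((N:ℕ)):ℝ)/N = 0 + (1:ℤ) := by
      rw [div_self (ne_of_gt hNR)]; norm_num
    have e2 : (((0:ℕ)):ℝ)/N = 0 := by norm_num
    rw [e1, e2, hFint 0 1]
    push_cast
    ring
  set Φ : ℝ → ℝ := fun v => B + ∑ j ∈ Finset.range N, (c j - B) * trap (p j) (q j) η v with hΦ
  set Φ' : ℝ → ℝ := fun v => B + ∑ j ∈ Finset.range N, (c' j - B) * trapLow (p j) (q j) η v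
    with hΦ'
  have hΦc : Continuous Φ :=
    continuous_const.add
      (continuous_finset_sum _ (fun j _ => continuous_const.mul (trap_continuous _ _ _)))
  have hΦ'c : Continuous Φ' :=
    continuous_const.add
      (continuous_finset_sum _ (fun j _ => continuous_const.mul (trapLow_continuous _ _ _)))
  have hΦp : Function.Periodic Φ 1 := by
    intro v
    simp only [hΦ]
    congr 1
    exact Finset.sum_congr rfl (fun j _ => by rw [trap_periodic (hpq j) η v])
  have hΦ'p : Function.Periodic Φ' 1 := by
    intro v
    simp only [hΦ']
    congr 1
    exact Finset.sum_congr rfl (fun j _ => by rw [trapLow_periodic (hq1 j) η v])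
  -- pointwise upper bound
  have hup : ∀ z : ℝ, φ z ≤ Φ (F z) := by
    intro z
    obtain ⟨z', hz'def, hz0, hz1⟩ : ∃ z' : ℝ, z = z' + (⌊z⌋:ℝ) ∧ 0 ≤ z' ∧ z' < 1 :=
      ⟨z - ⌊z⌋, by ring, by linarith [Int.floor_le z], by linarith [Int.lt_floor_add_one z]⟩
    set j : ℕ := ⌊z' * N⌋₊ with hj
    have hjN : j < N := by
      rw [hj, Nat.floor_lt (by positivity)]
      nlinarith
    have hjle : (j:ℝ) ≤ z' * N := Nat.floor_le (by positivity)
    have hjlt : z' * N < (j:ℝ) + 1 := Nat.lt_floor_add_one _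
    have hz'mem : z' ∈ Set.Icc ((j:ℝ)/N) (((j:ℝ)+1)/N) :=
      ⟨by rw [div_le_iff₀ hNR]; linarith, by rw [le_div_iff₀ hNR]; linarith⟩
    have h1 : φ z = φ z' := by rw [hz'def, per_int hφp]
    have h2 : φ z' ≤ c j := hξmax j z' hz'mem
    have h4 : Φ (F z) = Φ (F z') := by
      rw [hz'def, hFint z' ⌊z⌋, per_int hΦp]
    have h5 : trap (p j) (q j) η (F z') = 1 := by
      apply trap_eq_one_of_mem hη0
      refine mem_pSet_iff.2 ⟨0, ?_, ?_⟩
      · simpa using hFmono hz'mem.1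
      · simpa using hFmono hz'mem.2
    have hterm : c j - B ≤ ∑ i ∈ Finset.range N, (c i - B) * trap (p i) (q i) η (F z') := by
      have hs := Finset.single_le_sum
        (f := fun i => (c i - B) * trap (p i) (q i) η (F z'))
        (fun i _ => mul_nonneg (by linarith [hcB i, hcc i]) (trap_nonneg _ _ _ _))
        (Finset.mem_range.2 hjN)
      simp only [h5, mul_one] at hs
      exact hs
    rw [h1, h4]
    simp only [hΦ]
    linarith
  -- pointwise lower bound
  have hlow : ∀ z : ℝ, Φ' (F z) ≤ φ z := by
    intro z
    suffices h : ∑ i ∈ Finset.range N, (c' i - B) * trapLow (p i) (q i) η (F z) ≤ φ z - B by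
      simp only [hΦ']
      linarith
    have hkey : ∀ i : ℕ,
        (c' i - B) * trapLow (p i) (q i) η (F z) ≠ 0 →
        ∃ m : ℤ, (i:ℝ)/N < z - m ∧ z - m < ((i:ℝ)+1)/N := by
      intro i hne
      have htpos : 0 < trapLow (p i) (q i) η (F z) := by
        rcases (trapLow_nonneg hη0 (F z)).lt_or_eq with h | h
        · exact h
        · exact absurd (by rw [← h, mul_zero]) hne
      obtain ⟨m, hm1, hm2⟩ := trapLow_pos_imp (hq1 i) hη0 htpos
      have hFzm : F z = F (z - m) + m := by
        have h := hFint (z - m) m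
        rw [sub_add_cancel] at h
        exact h
      refine ⟨m, ?_, ?_⟩
      · by_contra hcon
        push_neg at hcon
        have h := hFmono hcon
        simp only [hp] at hm1
        rw [hFzm] at hm1
        linarith
      · by_contra hcon
        push_neg at hcon
        have h := hFmono hcon
        simp only [hq] at hm2
        rw [hFzm] at hm2
        linarith
    by_cases hall : ∀ i ∈ Finset.range N, (c' i - B) * trapLow (p i) (q i) η (F z) = 0
    · rw [Finset.sum_eq_zero hall]
      linarith [hBall z]
    · push_neg at hall
      obtain ⟨j₀, hj₀mem, hj₀ne⟩ := hall
      obtain ⟨m₀, hm₀1, hm₀2⟩ := hkey j₀ hj₀ne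
      have hj₀N : j₀ < N := Finset.mem_range.1 hj₀mem
      have hzm01 : 0 < z - m₀ ∧ z - m₀ < 1 := by
        constructor
        · have : (0:ℝ) ≤ (j₀:ℝ)/N := by positivity
          linarith
        · have h1 : ((j₀:ℝ)+1)/N ≤ 1 := by
            rw [div_le_one hNR]
            have : (j₀:ℝ) + 1 ≤ N := by exact_mod_cast hj₀N
            linarith
          linarith
      have hothers : ∀ i ∈ Finset.range N, i ≠ j₀ →
          (c' i - B) * trapLow (p i) (q i) η (F z) = 0 := by
        intro i himem hine
        by_contra hcon
        obtain ⟨m₁, hm₁1, hm₁2⟩ := hkey i hcon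
        have hiN : (0:ℝ) ≤ (i:ℝ)/N := by positivity
        have hi1 : ((i:ℝ)+1)/N ≤ 1 := by
          rw [div_le_one hNR]
          have : (i:ℝ) + 1 ≤ N := by exact_mod_cast (Finset.mem_range.1 himem)
          linarith
        have hzm11 : 0 < z - m₁ ∧ z - m₁ < 1 := ⟨by linarith, by linarith⟩
        have hmm : m₀ = m₁ := by
          have h1 : |(m₀:ℝ) - m₁| < 1 := by
            rw [abs_lt]
            constructor <;> linarith [hzm01.1, hzm01.2, hzm11.1, hzm11.2]
          have h2 : m₀ - m₁ = 0 := by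
            by_contra hc3
            have : (1:ℝ) ≤ |(m₀:ℝ) - m₁| := by
              have : ((m₀ - m₁ : ℤ):ℝ) = (m₀:ℝ) - m₁ := by push_cast; ring
              rw [← this]
              exact_mod_cast Int.one_le_abs (by omega)
            linarith
          omega
        rw [hmm] at hm₀1 hm₀2
        -- now z - m₁ lies in both open intervals, contradiction
        rcases hine.lt_or_gt with hlt | hlt
        · have : ((i:ℝ)+1)/N ≤ (j₀:ℝ)/N :=
            (div_le_div_iff_of_pos_right hNR).2 (by exact_mod_cast Nat.succ_le_of_lt hlt)
          linarith
        · have : ((j₀:ℝ)+1)/N ≤ (i:ℝ)/N :=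
            (div_le_div_iff_of_pos_right hNR).2 (by exact_mod_cast Nat.succ_le_of_lt hlt)
          linarith
      rw [Finset.sum_eq_single_of_mem j₀ hj₀mem hothers]
      have hφz : c' j₀ ≤ φ z := by
        have h1 : φ z = φ (z - m₀) := (per_int' hφp z m₀).symm
        rw [h1]
        exact hζmin j₀ _ ⟨hm₀1.le, hm₀2.le⟩
      calc (c' j₀ - B) * trapLow (p j₀) (q j₀) η (F z)
          ≤ (c' j₀ - B) * 1 :=
            mul_le_mul_of_nonneg_left (trapLow_le_one _) (by linarith [hcB j₀])
        _ ≤ φ z - B := by linarith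
  -- integral estimates
  have hinttrap : ∀ j : ℕ, ∫ v in (0:ℝ)..1, trap (p j) (q j) η v ≤ w j + 2*η := by
    intro j
    rcases le_or_gt (q j + η) (p j + 1 - η) with hfit | hfit
    · have := trap_integral_le (hpq j) hη0 hfit
      simp only [hw]
      linarith
    · have h1 := trap_integral_le_one (p := p j) (q := q j) hη0
      have h2 : (1:ℝ) < w j + 2*η := by
        simp only [hw]
        linarith
      linarith
  have hinttrapLow : ∀ j : ℕ, w j - 2*η ≤ ∫ v in (0:ℝ)..1, trapLow (p j) (q j) η v := by
    intro j
    have := trapLow_integral_ge (hpq j) (hq1 j) hη0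
    simp only [hw]
    linarith
  set IΦ : ℝ := ∫ v in (0:ℝ)..1, Φ v with hIΦ
  set IΦ' : ℝ := ∫ v in (0:ℝ)..1, Φ' v with hIΦ'
  have hIΦcalc : IΦ = B + ∑ j ∈ Finset.range N,
      (c j - B) * ∫ v in (0:ℝ)..1, trap (p j) (q j) η v := by
    rw [hIΦ]
    simp only [hΦ]
    rw [intervalIntegral.integral_add intervalIntegrable_const
      ((continuous_finset_sum _
        (fun j _ => continuous_const.mul (trap_continuous _ _ _)) :
          Continuous fun v => ∑ j ∈ Finset.range N, (c j - B) * trap (p j) (q j) η v).intervalIntegrable _ _),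
      intervalIntegral.integral_finset_sum (f := fun j v => (c j - B) * trap (p j) (q j) η v)
        (fun j _ => ((continuous_const.mul (trap_continuous _ _ _) :
          Continuous fun v => (c j - B) * trap (p j) (q j) η v)).intervalIntegrable _ _)]
    simp only [intervalIntegral.integral_const_mul, intervalIntegral.integral_const]
    norm_num
  have hIΦ'calc : IΦ' = B + ∑ j ∈ Finset.range N,
      (c' j - B) * ∫ v in (0:ℝ)..1, trapLow (p j) (q j) η v := by
    rw [hIΦ']
    simp only [hΦ']
    rw [intervalIntegral.integral_add intervalIntegrable_const
      ((continuous_finset_sum _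
        (fun j _ => continuous_const.mul (trapLow_continuous _ _ _)) :
          Continuous fun v => ∑ j ∈ Finset.range N, (c' j - B) * trapLow (p j) (q j) η v).intervalIntegrable _ _),
      intervalIntegral.integral_finset_sum (f := fun j v => (c' j - B) * trapLow (p j) (q j) η v)
        (fun j _ => ((continuous_const.mul (trapLow_continuous _ _ _) :
          Continuous fun v => (c' j - B) * trapLow (p j) (q j) η v)).intervalIntegrable _ _)]
    simp only [intervalIntegral.integral_const_mul, intervalIntegral.integral_const]
    norm_num
  have hIdiff : IΦ - IΦ' ≤ ε/4 := by
    rw [hIΦcalc, hIΦ'calc]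
    have hub : ∑ j ∈ Finset.range N, (c j - B) * ∫ v in (0:ℝ)..1, trap (p j) (q j) η v
        ≤ ∑ j ∈ Finset.range N, (c j - B) * (w j + 2*η) := by
      refine Finset.sum_le_sum (fun j _ => ?_)
      exact mul_le_mul_of_nonneg_left (hinttrap j) (by linarith [hcB j, hcc j])
    have hlb : ∑ j ∈ Finset.range N, (c' j - B) * (w j - 2*η)
        ≤ ∑ j ∈ Finset.range N, (c' j - B) * ∫ v in (0:ℝ)..1, trapLow (p j) (q j) η v := by
      refine Finset.sum_le_sum (fun j _ => ?_)
      exact mul_le_mul_of_nonneg_left (hinttrapLow j) (by linarith [hcB j])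
    have hcomb : ∑ j ∈ Finset.range N, (c j - B) * (w j + 2*η)
        - ∑ j ∈ Finset.range N, (c' j - B) * (w j - 2*η) ≤ ε/4 := by
      rw [← Finset.sum_sub_distrib]
      have heach : ∀ j ∈ Finset.range N,
          (c j - B) * (w j + 2*η) - (c' j - B) * (w j - 2*η)
            ≤ (ε/8) * w j + 4*η*(C0+1) := by
        intro j _
        have e : (c j - B) * (w j + 2*η) - (c' j - B) * (w j - 2*η)
            = (c j - c' j) * w j + 2*η*((c j - B) + (c' j - B)) := by ring
        rw [e]
        have h1 : (c j - c' j) * w j ≤ (ε/8) * w j :=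
          mul_le_mul_of_nonneg_right (hosc j) (hw0 j)
        have h2 : (c j - B) + (c' j - B) ≤ 2*(C0+1) := by
          have := hcC j
          have := hcc j
          simp only [hC0] at *
          linarith
        nlinarith [hη0.le]
      calc ∑ j ∈ Finset.range N, ((c j - B) * (w j + 2*η) - (c' j - B) * (w j - 2*η))
          ≤ ∑ j ∈ Finset.range N, ((ε/8) * w j + 4*η*(C0+1)) := Finset.sum_le_sum heach
        _ = (ε/8) * (∑ j ∈ Finset.range N, w j) + N * (4*η*(C0+1)) := by
            rw [Finset.sum_add_distrib, ← Finset.mul_sum, Finset.sum_const,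
              Finset.card_range, nsmul_eq_mul]
        _ = ε/8 + 4*η*N*(C0+1) := by rw [hwsum]; ring
        _ ≤ ε/8 + ε/8 := by linarith [hηkey]
        _ = ε/4 := by ring
    linarith
  -- uniform Weyl for Φ and Φ'
  obtain ⟨N₁, hN₁⟩ := uniform_weyl hd hΦc hΦp (ε/8) (by positivity)
  obtain ⟨N₂, hN₂⟩ := uniform_weyl hd hΦ'c hΦ'p (ε/8) (by positivity)
  refine ⟨max N₁ N₂, fun n hn x y => ?_⟩
  have hnn : (0:ℝ) ≤ n := Nat.cast_nonneg n
  have hx : (∑ k ∈ Finset.range n, φ (f^[k] x))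
      ≤ ∑ k ∈ Finset.range n, Φ (F x + k*α) := by
    refine Finset.sum_le_sum (fun k _ => ?_)
    have := hup (f^[k] x)
    rwa [horb x k] at this
  have hy : (∑ k ∈ Finset.range n, Φ' (F y + k*α))
      ≤ ∑ k ∈ Finset.range n, φ (f^[k] y) := by
    refine Finset.sum_le_sum (fun k _ => ?_)
    have := hlow (f^[k] y)
    rwa [horb y k] at this
  have hwx := hN₁ n (le_trans (le_max_left _ _) hn) (F x)
  have hwy := hN₂ n (le_trans (le_max_right _ _) hn) (F y)
  rw [abs_le] at hwx hwy
  calc (∑ k ∈ Finset.range n, φ (f^[k] x)) - (∑ k ∈ Finset.range n, φ (f^[k] y))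
      ≤ (∑ k ∈ Finset.range n, Φ (F x + k*α)) - ∑ k ∈ Finset.range n, Φ' (F y + k*α) := by
        linarith
    _ ≤ (n * IΦ + ε/8*n) - (n * IΦ' - ε/8*n) := by
        rw [hIΦ, hIΦ'] at *
        linarith [hwx.1, hwx.2, hwy.1, hwy.2]
    _ = n * (IΦ - IΦ') + ε/4*n := by ring
    _ ≤ n * (ε/4) + ε/4*n := by
        have := mul_le_mul_of_nonneg_left hIdiff hnn
        linarith
    _ ≤ ε * n := by nlinarith

end C1DistAux

open C1DistAux in
set_option maxHeartbeats 1000000 in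
/-- Case III of Theorem 1: every circle diffeomorphism with irrational rotation number
is C¹-distorted. -/
theorem c1_distorted_of_irrational_rotation_number
    (f : ℝ → ℝ) (hf : ContDiff ℝ 1 f)
    (hlift : ∀ x : ℝ, f (x + 1) = f x + 1)
    (hpos : ∀ x : ℝ, 0 < deriv f x)
    (α : ℝ) (hirr : ∀ p q : ℤ, α ≠ (p : ℝ) / (q : ℝ))
    (hrot : Filter.Tendsto (fun n : ℕ => f^[n] 0 / (n : ℝ)) Filter.atTop (𝓝 α)) :
    Filter.Tendsto
      (fun n : ℕ => ⨆ x : Set.Icc (0:ℝ) 1, |(1 / (n : ℝ)) * Real.log (deriv (f^[n]) x)|)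
      Filter.atTop (𝓝 0) := by
  classical
  have hdiff : Differentiable ℝ f := hf.differentiable one_ne_zero
  have hderiv_cont : Continuous (deriv f) := hf.continuous_deriv le_rfl
  -- derivative of iterates
  have iter_hasDeriv : ∀ (n : ℕ) (x : ℝ),
      HasDerivAt (f^[n]) (∏ k ∈ Finset.range n, deriv f (f^[k] x)) x := by
    intro n
    induction n with
    | zero =>
      intro x
      simp only [Function.iterate_zero, Finset.prod_range_zero]
      exact hasDerivAt_id x
    | succ n ih =>
      intro x
      have h1 := ih x
      have h2 : HasDerivAt f (deriv f (f^[n] x)) (f^[n] x) := (hdiff _).hasDerivAt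
      have h3 := h2.comp x h1
      rw [Function.iterate_succ', Finset.prod_range_succ]
      have e : (∏ k ∈ Finset.range n, deriv f (f^[k] x)) * deriv f (f^[n] x)
          = deriv f (f^[n] x) * ∏ k ∈ Finset.range n, deriv f (f^[k] x) := mul_comm _ _
      rw [e]
      exact h3
  have hdn : ∀ n : ℕ, Differentiable ℝ (f^[n]) :=
    fun n x => (iter_hasDeriv n x).differentiableAt
  have deriv_iter : ∀ (n : ℕ) (x : ℝ),
      deriv (f^[n]) x = ∏ k ∈ Finset.range n, deriv f (f^[k] x) :=
    fun n x => (iter_hasDeriv n x).deriv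
  set φ : ℝ → ℝ := fun x => Real.log (deriv f x) with hφ
  have hlog : ∀ (n : ℕ) (x : ℝ),
      Real.log (deriv (f^[n]) x) = ∑ k ∈ Finset.range n, φ (f^[k] x) := by
    intro n x
    rw [deriv_iter n x, Real.log_prod (fun k _ => (hpos _).ne')]
  -- periodicity of deriv f
  have hfper : ∀ x : ℝ, deriv f (x + 1) = deriv f x := by
    intro x
    have h1 : (fun y => f (y + 1)) = fun y => f y + 1 := funext hlift
    have h2 : deriv (fun y => f (y + 1)) x = deriv f (x + 1) := by
      rw [deriv_comp_add_const]
    have h3 : deriv (fun y => f y + 1) x = deriv f x := by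
      rw [deriv_add_const]
    rw [← h2, h1, h3]
  have hφc : Continuous φ := by
    rw [continuous_iff_continuousAt]
    intro x
    exact (Real.continuousAt_log (hpos x).ne').comp hderiv_cont.continuousAt
  have hφp : Function.Periodic φ 1 := by
    intro x
    simp only [hφ]
    rw [hfper]
  -- the CircleDeg1Lift structure
  have hmono : Monotone f := (strictMono_of_deriv_pos hpos).monotone
  set fl : CircleDeg1Lift := ⟨⟨f, hmono⟩, hlift⟩ with hfl
  have hflcoe : ⇑fl = f := rfl
  have hsurj : Function.Surjective f := by
    intro y
    obtain ⟨n, hn⟩ := exists_nat_ge (|y - f 0|)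
    have h1 : f ((-(n:ℤ) : ℤ) : ℝ) = f 0 + (-(n:ℤ) : ℤ) := fl.map_int_of_map_zero _
    have h2 : f (((n:ℤ) : ℤ) : ℝ) = f 0 + ((n:ℤ) : ℤ) := fl.map_int_of_map_zero _
    have hmem : y ∈ Set.Icc (f (-(n:ℝ))) (f (n:ℝ)) := by
      have e1 : ((-(n:ℤ) : ℤ) : ℝ) = -(n:ℝ) := by push_cast; ring
      have e2 : (((n:ℤ) : ℤ) : ℝ) = (n:ℝ) := by push_cast; ring
      rw [e1] at h1
      rw [e2] at h2
      rw [h1, h2]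
      have := abs_le.1 hn
      constructor
      · push_cast; linarith [this.1]
      · push_cast; linarith [this.2]
    have hsub := intermediate_value_Icc
      (by linarith [Nat.cast_nonneg (α := ℝ) n] : -(n:ℝ) ≤ (n:ℝ))
      (hdiff.continuous.continuousOn)
    obtain ⟨x, _, hx⟩ := hsub hmem
    exact ⟨x, hx⟩
  have hbij : Function.Bijective f := ⟨(strictMono_of_deriv_pos hpos).injective, hsurj⟩
  -- translation number
  have htau : CircleDeg1Lift.translationNumber fl = α := by
    have h := fl.tendsto_translation_number₀
    have he : (fun n : ℕ => (fl ^ n) 0 / (n:ℝ)) = fun n : ℕ => f^[n] 0 / (n:ℝ) := by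
      funext n
      rw [CircleDeg1Lift.coe_pow]
      rfl
    rw [he] at h
    exact tendsto_nhds_unique h hrot
  -- irrationality data
  have hia : ∀ q : ℕ, 1 ≤ q → ∀ j : ℤ, (q:ℝ)*α ≠ j := by
    intro q hq j hcon
    apply hirr j (q:ℤ)
    have hq1 : (1:ℝ) ≤ (q:ℝ) := by exact_mod_cast hq
    have hq0 : ((q:ℤ):ℝ) ≠ 0 := by push_cast; linarith
    push_cast at hcon ⊢
    field_simp
    linarith [hcon]
  have hd := density hia
  -- Poincaré semiconjugacy
  set T : CircleDeg1Liftˣ := CircleDeg1Lift.translate (Multiplicative.ofAdd α) with hT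
  have hTbij : Function.Bijective ⇑(T : CircleDeg1Lift) :=
    CircleDeg1Lift.isUnit_iff_bijective.1 (Units.isUnit T)
  obtain ⟨F, hsemi⟩ := CircleDeg1Lift.semiconj_of_bijective_of_translationNumber_eq
    hbij hTbij (by rw [htau, CircleDeg1Lift.translationNumber_translate])
  have hsemi' : ∀ x : ℝ, F (f x) = α + F x := by
    intro x
    have := hsemi x
    rwa [CircleDeg1Lift.translate_apply] at this
  have horb : ∀ (x : ℝ) (k : ℕ), F (f^[k] x) = F x + k * α := by
    intro x k
    induction k with
    | zero => simp
    | succ k ih =>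
      rw [Function.iterate_succ_apply', hsemi', ih]
      push_cast
      ring
  have hFint : ∀ (x : ℝ) (m : ℤ), F (x + m) = F x + m := fun x m => F.map_add_int x m
  have hFmono : Monotone F := F.monotone
  -- iterates are lifts
  have hiterlift : ∀ n : ℕ, f^[n] 1 = f^[n] 0 + 1 := by
    intro n
    have h := (fl ^ n).map_add_one 0
    rw [CircleDeg1Lift.coe_pow] at h
    simpa [hflcoe] using h
  -- the zero point of the Birkhoff sum
  have hzero : ∀ n : ℕ, 0 < n → ∃ ξ : ℝ, ξ ∈ Set.Icc (0:ℝ) 1 ∧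
      (∑ k ∈ Finset.range n, φ (f^[k] ξ)) = 0 := by
    intro n _
    obtain ⟨ξ, hξmem, hξeq⟩ := exists_hasDerivAt_eq_slope (f^[n]) (deriv (f^[n]))
      (by norm_num : (0:ℝ) < 1)
      (hdn n).continuous.continuousOn
      (fun x _ => ((hdn n) x).hasDerivAt)
    refine ⟨ξ, ⟨hξmem.1.le, hξmem.2.le⟩, ?_⟩
    rw [← hlog n ξ, hξeq, hiterlift n]
    norm_num
  -- main estimate
  rw [Metric.tendsto_atTop]
  intro ε hε
  obtain ⟨N₀, hcore⟩ := core_comparison hφc hφp hFmono hFint horb hd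
    (by positivity : (0:ℝ) < ε/2)
  refine ⟨max N₀ 1, fun n hn => ?_⟩
  have hn1 : 1 ≤ n := le_trans (le_max_right _ _) hn
  have hnN₀ : N₀ ≤ n := le_trans (le_max_left _ _) hn
  have hnR : (0:ℝ) < n := by exact_mod_cast hn1
  obtain ⟨ξ, hξmem, hξzero⟩ := hzero n hn1
  have hbound : ∀ x : Set.Icc (0:ℝ) 1,
      |(1 / (n : ℝ)) * Real.log (deriv (f^[n]) x)| ≤ ε/2 := by
    intro x
    have h1 : (∑ k ∈ Finset.range n, φ (f^[k] (x:ℝ)))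
        - (∑ k ∈ Finset.range n, φ (f^[k] ξ)) ≤ ε/2 * n := hcore n hnN₀ x ξ
    have h2 : (∑ k ∈ Finset.range n, φ (f^[k] ξ))
        - (∑ k ∈ Finset.range n, φ (f^[k] (x:ℝ))) ≤ ε/2 * n := hcore n hnN₀ ξ x
    rw [hξzero] at h1 h2
    have habs : |∑ k ∈ Finset.range n, φ (f^[k] (x:ℝ))| ≤ ε/2 * n := by
      rw [abs_le]; constructor <;> linarith
    rw [hlog n (x:ℝ), abs_mul]
    have : |1/(n:ℝ)| = 1/(n:ℝ) := abs_of_pos (by positivity)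
    rw [this]
    calc 1/(n:ℝ) * |∑ k ∈ Finset.range n, φ (f^[k] (x:ℝ))|
        ≤ 1/(n:ℝ) * (ε/2 * n) := by
          exact mul_le_mul_of_nonneg_left habs (by positivity)
      _ = ε/2 := by field_simp
  haveI : Nonempty (Set.Icc (0:ℝ) 1) := ⟨⟨0, by norm_num⟩⟩
  have hbdd : BddAbove (Set.range fun x : Set.Icc (0:ℝ) 1 =>
      |(1 / (n : ℝ)) * Real.log (deriv (f^[n]) x)|) := by
    refine ⟨ε/2, ?_⟩
    rintro _ ⟨x, rfl⟩
    exact hbound x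
  have hsup_le : (⨆ x : Set.Icc (0:ℝ) 1, |(1 / (n : ℝ)) * Real.log (deriv (f^[n]) x)|)
      ≤ ε/2 := ciSup_le hbound
  have hsup_ge : 0 ≤ ⨆ x : Set.Icc (0:ℝ) 1, |(1 / (n : ℝ)) * Real.log (deriv (f^[n]) x)| :=
    le_trans (abs_nonneg _) (le_ciSup hbdd ⟨0, by norm_num⟩)
  rw [Real.dist_eq, sub_zero, abs_of_nonneg hsup_ge]
  linarith
end
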